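/- arXiv:1203.2112 — 8 statements merged into one kernel-verified Lean document; each statement's English description precedes it below -/
import Mathlib

section
/- For every 1 ≤ j ≤ n, the principal generalized minor Δ_{w₀Λ_j, Λ_j}(Θ(c)), i.e. the minor of Θ(c) on rows {n+2−j, n+3−j, …, n+1} and columns {1, 2, …, j}, equals 1. -/
open Matrix

/-- The matrix unit `E_{k,l}` in 1-based indexing (zero matrix if out of range). -/
def Em (n k l : ℕ) : Matrix (Fin (n+1)) (Fin (n+1)) ℂ :=
  Matrix.of fun a b => if (a : ℕ) + 1 = k ∧ (b : ℕ) + 1 = l then 1 else 0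

/-- The lower unipotent one-parameter element `y_i(c) = I + c E_{i+1,i}` (1-based `i`). -/
noncomputable def ym (n i : ℕ) (c : ℂ) : Matrix (Fin (n+1)) (Fin (n+1)) ℂ :=
  1 + c • Em n (i+1) i

/-- The coweight torus element `α_i^∨(c)`: diagonal with `c` at position `i`,
`c⁻¹` at position `i+1` (1-based). -/
noncomputable def alco (n i : ℕ) (c : ℂ) : Matrix (Fin (n+1)) (Fin (n+1)) ℂ :=
  Matrix.diagonal fun a => if (a : ℕ) + 1 = i then c else if (a : ℕ) + 1 = i + 1 then c⁻¹ else 1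

/-- `𝐲_i(c) = y_i(c) · α_i^∨(c⁻¹)`. -/
noncomputable def Yb (n i : ℕ) (c : ℂ) : Matrix (Fin (n+1)) (Fin (n+1)) ℂ :=
  ym n i c * alco n i c⁻¹

/-- `Θ(c) = ∏_{k=1}^{n} ( 𝐲_1(c_{k,1}) 𝐲_2(c_{k,2}) ⋯ 𝐲_{n+1−k}(c_{k,n+1−k}) )`,
the product over `k` taken in increasing order. -/
noncomputable def Theta (n : ℕ) (c : ℕ → ℕ → ℂ) : Matrix (Fin (n+1)) (Fin (n+1)) ℂ :=
  ((List.range n).map fun k =>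
    ((List.range (n - k)).map fun l => Yb n (l+1) (c (k+1) (l+1))).prod).prod


lemma mulYb_apply {n : ℕ} (a : ℕ) (ha : a + 1 ≤ n) (c : ℂ) (hc0 : c ≠ 0)
    (M : Matrix (Fin (n+1)) (Fin (n+1)) ℂ) (p q : Fin (n+1)) :
    (M * Yb n (a+1) c) p q =
      if q = (⟨a+1, by omega⟩ : Fin (n+1)) then c * M p ⟨a+1, by omega⟩
      else if q = (⟨a, by omega⟩ : Fin (n+1)) then
        c⁻¹ * M p ⟨a, by omega⟩ + M p ⟨a+1, by omega⟩
      else M p q := by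
  have hEm : (M * Em n (a+1+1) (a+1)) p q
      = if q = (⟨a, by omega⟩ : Fin (n+1)) then M p ⟨a+1, by omega⟩ else 0 := by
    rw [Matrix.mul_apply, Finset.sum_eq_single (⟨a+1, by omega⟩ : Fin (n+1))]
    · simp only [Em, Matrix.of_apply, Fin.ext_iff]
      split_ifs with h1 h2 h3 <;> simp_all <;> omega
    · intro b _ hb
      have hb' : (b:ℕ) ≠ a + 1 := by simp [Fin.ext_iff] at hb; omega
      simp only [Em, Matrix.of_apply]
      rw [if_neg (by omega), mul_zero]
    · simp
  have hym : M * ym n (a+1) c = M + c • (M * Em n (a+1+1) (a+1)) := by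
    rw [ym, Matrix.mul_add, Matrix.mul_one, Matrix.mul_smul]
  rw [Yb, ← Matrix.mul_assoc, alco, Matrix.mul_diagonal, hym]
  simp only [Matrix.add_apply, Matrix.smul_apply, smul_eq_mul, hEm]
  obtain ⟨qv, hq⟩ := q
  simp only [Fin.mk.injEq, Fin.val_mk]
  by_cases h1 : qv = a + 1
  · subst h1
    split_ifs <;> first | (exfalso; omega) | (rw [inv_inv]; ring)
  · by_cases h2 : qv = a
    · subst h2
      split_ifs <;> first | (exfalso; omega) | (field_simp <;> ring)
    · split_ifs <;> first | (exfalso; omega) | ring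
section DLemmas
variable {n j : ℕ} (a : ℕ) (ha : a + 1 ≤ n) (c : ℂ)
  (M : Matrix (Fin (n+1)) (Fin (n+1)) ℂ) (R C : Fin j → Fin (n+1))

lemma detD1 (hc0 : c ≠ 0) (h0 : ∀ t, C t ≠ (⟨a, by omega⟩ : Fin (n+1)))
    (h1 : ∀ t, C t ≠ (⟨a+1, by omega⟩ : Fin (n+1))) :
    ((M * Yb n (a+1) c).submatrix R C).det = (M.submatrix R C).det := by
  congr 1
  ext s t
  rw [Matrix.submatrix_apply, Matrix.submatrix_apply, mulYb_apply a ha c hc0,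
    if_neg (h1 t), if_neg (h0 t)]

lemma detD2 (hc0 : c ≠ 0) (r : Fin j) (hr : C r = (⟨a+1, by omega⟩ : Fin (n+1)))
    (hinj : Function.Injective C)
    (h0 : ∀ t, C t ≠ (⟨a, by omega⟩ : Fin (n+1))) :
    ((M * Yb n (a+1) c).submatrix R C).det = c * (M.submatrix R C).det := by
  have key : (M * Yb n (a+1) c).submatrix R C
      = (M.submatrix R C).updateCol r (c • fun s => (M.submatrix R C) s r) := by
    ext s t
    rw [Matrix.submatrix_apply, mulYb_apply a ha c hc0, Matrix.updateCol_apply]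
    by_cases ht : t = r
    · subst ht
      rw [if_pos rfl, if_pos hr]
      simp [hr]
    · rw [if_neg ht, if_neg (fun h => ht (hinj (h.trans hr.symm))), if_neg (h0 t),
        Matrix.submatrix_apply]
  rw [key, Matrix.det_updateCol_smul, Matrix.updateCol_eq_self]

lemma detD3 (hc0 : c ≠ 0) (r : Fin j) (hr : C r = (⟨a, by omega⟩ : Fin (n+1)))
    (hinj : Function.Injective C)
    (h1 : ∀ t, C t ≠ (⟨a+1, by omega⟩ : Fin (n+1))) :
    ((M * Yb n (a+1) c).submatrix R C).det
      = c⁻¹ * (M.submatrix R C).det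
        + (M.submatrix R (Function.update C r (⟨a+1, by omega⟩ : Fin (n+1)))).det := by
  have key : (M * Yb n (a+1) c).submatrix R C
      = (M.submatrix R C).updateCol r
          ((c⁻¹ • fun s => (M.submatrix R C) s r) + fun s => M (R s) ⟨a+1, by omega⟩) := by
    ext s t
    rw [Matrix.submatrix_apply, mulYb_apply a ha c hc0, Matrix.updateCol_apply]
    by_cases ht : t = r
    · subst ht
      rw [if_neg (h1 t), if_pos hr]
      simp [hr]
    · rw [if_neg (h1 t), if_neg (fun h => ht (hinj (h.trans hr.symm))), if_neg ht,
        Matrix.submatrix_apply]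
  rw [key, Matrix.det_updateCol_add, Matrix.det_updateCol_smul,
    Matrix.updateCol_eq_self]
  congr 1
  congr 1
  ext s t
  by_cases ht : t = r
  · subst ht
    rw [Matrix.updateCol_self, Matrix.submatrix_apply, Function.update_self]
  · rw [Matrix.updateCol_ne ht, Matrix.submatrix_apply, Matrix.submatrix_apply,
      Function.update_of_ne ht]

lemma detD4 (hc0 : c ≠ 0) (r r' : Fin j) (hne : r ≠ r')
    (hr : C r = (⟨a, by omega⟩ : Fin (n+1)))
    (hr' : C r' = (⟨a+1, by omega⟩ : Fin (n+1)))
    (hinj : Function.Injective C) :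
    ((M * Yb n (a+1) c).submatrix R C).det = (M.submatrix R C).det := by
  set X := M.submatrix R C with hX
  set v : Fin j → ℂ := fun s => X s r' with hv
  set u : Fin j → ℂ := fun s => X s r with hu
  have hCrne : C r ≠ (⟨a+1, by omega⟩ : Fin (n+1)) := by
    rw [hr]; simp [Fin.ext_iff]
  have key : (M * Yb n (a+1) c).submatrix R C
      = (X.updateCol r' (c • v)).updateCol r (c⁻¹ • u + v) := by
    ext s t
    rw [Matrix.submatrix_apply, mulYb_apply a ha c hc0, Matrix.updateCol_apply]
    by_cases ht : t = r
    · subst ht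
      rw [if_pos rfl, if_neg hCrne, if_pos hr]
      simp [hu, hv, hX, hr', hr]
    · rw [if_neg ht, Matrix.updateCol_apply]
      by_cases ht' : t = r'
      · subst ht'
        rw [if_pos rfl, if_pos hr']
        simp [hv, hX, hr']
      · rw [if_neg ht', if_neg (fun h => ht' (hinj (h.trans hr'.symm))),
          if_neg (fun h => ht (hinj (h.trans hr.symm)))]
        rfl
  have e1 : (X.updateCol r' (c • v)).updateCol r u = X.updateCol r' (c • v) := by
    have hu2 : u = fun s => (X.updateCol r' (c • v)) s r := by
      funext s
      rw [Matrix.updateCol_ne hne]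
    rw [hu2, Matrix.updateCol_eq_self]
  have e2 : ((X.updateCol r' (c • v)).updateCol r v).det = 0 := by
    have comm : (X.updateCol r' (c • v)).updateCol r v
        = (X.updateCol r v).updateCol r' (c • v) := by
      ext s t
      by_cases ht : t = r
      · subst ht
        rw [Matrix.updateCol_self, Matrix.updateCol_ne hne, Matrix.updateCol_self]
      · by_cases ht' : t = r'
        · subst ht'
          rw [Matrix.updateCol_ne (Ne.symm hne), Matrix.updateCol_self,
            Matrix.updateCol_self]
        · rw [Matrix.updateCol_ne ht, Matrix.updateCol_ne ht',
            Matrix.updateCol_ne ht', Matrix.updateCol_ne ht]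
    rw [comm, Matrix.det_updateCol_smul]
    have : ((X.updateCol r v).updateCol r' v).det = 0 := by
      apply Matrix.det_zero_of_column_eq hne
      intro k
      rw [Matrix.updateCol_ne hne, Matrix.updateCol_self, Matrix.updateCol_self]
    rw [this, mul_zero]
  rw [key, Matrix.det_updateCol_add, Matrix.det_updateCol_smul, e1, e2, add_zero,
    Matrix.det_updateCol_smul, Matrix.updateCol_eq_self]
  field_simp

end DLemmas
section SLemmas
variable {n j : ℕ}

def PInv (R C0 : Fin j → Fin (n+1)) (M : Matrix (Fin (n+1)) (Fin (n+1)) ℂ) : Prop :=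
  (M.submatrix R C0).det = 1 ∧
  ∀ C : Fin j → Fin (n+1), StrictMono C → (∃ s, C s < C0 s) → (M.submatrix R C).det = 0

lemma upd_mono_up (a : ℕ) (ha : a + 1 ≤ n) {C : Fin j → Fin (n+1)} (hC : StrictMono C)
    {r : Fin j} (hr : C r = (⟨a, by omega⟩ : Fin (n+1)))
    (h1 : ∀ t, C t ≠ (⟨a+1, by omega⟩ : Fin (n+1))) :
    StrictMono (Function.update C r (⟨a+1, by omega⟩ : Fin (n+1))) := by
  intro s t hst
  rw [Function.update_apply, Function.update_apply]
  split_ifs with hs ht ht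
  · exact absurd (hs.trans ht.symm) (ne_of_lt hst)
  · rw [hs] at hst
    have h2 := hC hst
    rw [hr] at h2
    have h3 := h1 t
    simp [Fin.lt_def, Fin.ext_iff] at h2 h3 ⊢
    omega
  · rw [ht] at hst
    have h2 := hC hst
    rw [hr] at h2
    simp [Fin.lt_def] at h2 ⊢
    omega
  · exact hC hst

lemma upd_mono_down (a : ℕ) (ha : a + 1 ≤ n) {C : Fin j → Fin (n+1)} (hC : StrictMono C)
    {r : Fin j} (hr : C r = (⟨a+1, by omega⟩ : Fin (n+1)))
    (h0 : ∀ t, C t ≠ (⟨a, by omega⟩ : Fin (n+1))) :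
    StrictMono (Function.update C r (⟨a, by omega⟩ : Fin (n+1))) := by
  intro s t hst
  rw [Function.update_apply, Function.update_apply]
  split_ifs with hs ht ht
  · exact absurd (hs.trans ht.symm) (ne_of_lt hst)
  · rw [hs] at hst
    have h2 := hC hst
    rw [hr] at h2
    simp [Fin.lt_def] at h2 ⊢
    omega
  · rw [ht] at hst
    have h2 := hC hst
    rw [hr] at h2
    have h3 := h0 s
    simp [Fin.lt_def, Fin.ext_iff] at h2 h3 ⊢
    omega
  · exact hC hst

lemma stepS1 (a : ℕ) (ha : a + 1 ≤ n) (c : ℂ) (hc0 : c ≠ 0)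
    (M : Matrix (Fin (n+1)) (Fin (n+1)) ℂ) (R C0 : Fin j → Fin (n+1))
    (h0 : ∀ s, C0 s ≠ (⟨a, by omega⟩ : Fin (n+1)))
    (h1 : ∀ s, C0 s ≠ (⟨a+1, by omega⟩ : Fin (n+1)))
    (hI : PInv R C0 M) : PInv R C0 (M * Yb n (a+1) c) := by
  constructor
  · rw [detD1 a ha c M R C0 hc0 h0 h1]
    exact hI.1
  · intro C hC hbad
    by_cases e1 : ∃ r, C r = (⟨a+1, by omega⟩ : Fin (n+1))
    · obtain ⟨r1, hr1⟩ := e1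
      by_cases e0 : ∃ r, C r = (⟨a, by omega⟩ : Fin (n+1))
      · obtain ⟨r0, hr0⟩ := e0
        have hne : r0 ≠ r1 := by
          intro h
          rw [h, hr1] at hr0
          simp [Fin.ext_iff] at hr0
        rw [detD4 a ha c M R C hc0 r0 r1 hne hr0 hr1 hC.injective]
        exact hI.2 C hC hbad
      · push_neg at e0
        rw [detD2 a ha c M R C hc0 r1 hr1 hC.injective e0, hI.2 C hC hbad, mul_zero]
    · push_neg at e1
      by_cases e0 : ∃ r, C r = (⟨a, by omega⟩ : Fin (n+1))
      · obtain ⟨r0, hr0⟩ := e0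
        rw [detD3 a ha c M R C hc0 r0 hr0 hC.injective e1]
        have hbad' : ∃ s, Function.update C r0 (⟨a+1, by omega⟩ : Fin (n+1)) s < C0 s := by
          obtain ⟨s, hs⟩ := hbad
          by_cases hsr : s = r0
          · subst hsr
            refine ⟨s, ?_⟩
            rw [Function.update_self]
            rw [hr0] at hs
            have h3 := h1 s
            simp [Fin.lt_def, Fin.ext_iff] at hs h3 ⊢
            omega
          · exact ⟨s, by rw [Function.update_of_ne hsr]; exact hs⟩
        rw [hI.2 C hC hbad,
          hI.2 _ (upd_mono_up a ha hC hr0 e1) hbad', mul_zero, add_zero]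
      · push_neg at e0
        rw [detD1 a ha c M R C hc0 e0 e1]
        exact hI.2 C hC hbad

lemma stepS2 (a : ℕ) (ha : a + 1 ≤ n) (c : ℂ) (hc0 : c ≠ 0)
    (M : Matrix (Fin (n+1)) (Fin (n+1)) ℂ) (R C0 : Fin j → Fin (n+1))
    (hC0 : StrictMono C0) (r0 r0' : Fin j)
    (hr0 : C0 r0 = (⟨a, by omega⟩ : Fin (n+1)))
    (hr0' : C0 r0' = (⟨a+1, by omega⟩ : Fin (n+1)))
    (hI : PInv R C0 M) : PInv R C0 (M * Yb n (a+1) c) := by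
  have hne0 : r0 ≠ r0' := by
    intro h
    rw [h, hr0'] at hr0
    simp [Fin.ext_iff] at hr0
  constructor
  · rw [detD4 a ha c M R C0 hc0 r0 r0' hne0 hr0 hr0' hC0.injective]
    exact hI.1
  · intro C hC hbad
    by_cases e1 : ∃ r, C r = (⟨a+1, by omega⟩ : Fin (n+1))
    · obtain ⟨r1, hr1⟩ := e1
      by_cases e0 : ∃ r, C r = (⟨a, by omega⟩ : Fin (n+1))
      · obtain ⟨rr0, hrr0⟩ := e0
        have hne : rr0 ≠ r1 := by
          intro h
          rw [h, hr1] at hrr0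
          simp [Fin.ext_iff] at hrr0
        rw [detD4 a ha c M R C hc0 rr0 r1 hne hrr0 hr1 hC.injective]
        exact hI.2 C hC hbad
      · push_neg at e0
        rw [detD2 a ha c M R C hc0 r1 hr1 hC.injective e0, hI.2 C hC hbad, mul_zero]
    · push_neg at e1
      by_cases e0 : ∃ r, C r = (⟨a, by omega⟩ : Fin (n+1))
      · obtain ⟨r1, hr1⟩ := e0
        rw [detD3 a ha c M R C hc0 r1 hr1 hC.injective e1]
        have hbad' : ∃ s, Function.update C r1 (⟨a+1, by omega⟩ : Fin (n+1)) s < C0 s := by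
          obtain ⟨s, hs⟩ := hbad
          by_cases hsr : s = r1
          · subst hsr
            rw [hr1] at hs
            by_cases hC0s : C0 s = (⟨a+1, by omega⟩ : Fin (n+1))
            · have hlt : r0 < s :=
                hC0.lt_iff_lt.mp (by rw [hr0, hC0s]; simp [Fin.lt_def])
              have hner0 : r0 ≠ s := ne_of_lt hlt
              refine ⟨r0, ?_⟩
              rw [Function.update_of_ne hner0, hr0, ← hr1]
              exact hC hlt
            · refine ⟨s, ?_⟩
              rw [Function.update_self]
              simp [Fin.lt_def, Fin.ext_iff] at hs hC0s ⊢
              omega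
          · exact ⟨s, by rw [Function.update_of_ne hsr]; exact hs⟩
        rw [hI.2 C hC hbad,
          hI.2 _ (upd_mono_up a ha hC hr1 e1) hbad', mul_zero, add_zero]
      · push_neg at e0
        rw [detD1 a ha c M R C hc0 e0 e1]
        exact hI.2 C hC hbad


end SLemmas
section S3
variable {n j : ℕ}
set_option maxHeartbeats 1000000 in
lemma stepS3 (a : ℕ) (ha : a + 1 ≤ n) (c : ℂ) (hc0 : c ≠ 0)
    (M : Matrix (Fin (n+1)) (Fin (n+1)) ℂ) (R C0 : Fin j → Fin (n+1))
    (hC0 : StrictMono C0) (r : Fin j)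
    (hr : C0 r = (⟨a+1, by omega⟩ : Fin (n+1)))
    (h0 : ∀ s, C0 s ≠ (⟨a, by omega⟩ : Fin (n+1)))
    (hI : PInv R C0 M) (C0' : Fin j → Fin (n+1))
    (hC0'def : C0' = Function.update C0 r (⟨a, by omega⟩ : Fin (n+1))) :
    PInv R C0' (M * Yb n (a+1) c) := by
  have hC0'r : C0' r = (⟨a, by omega⟩ : Fin (n+1)) := by
    rw [hC0'def]; exact Function.update_self _ _ _
  have hC0'ne : ∀ s, s ≠ r → C0' s = C0 s := by
    intro s hs
    rw [hC0'def]; exact Function.update_of_ne hs _ _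
  have hmono' : StrictMono C0' := by
    rw [hC0'def]; exact upd_mono_down a ha hC0 hr h0
  have hle : ∀ s, C0' s ≤ C0 s := by
    intro s
    rcases eq_or_ne s r with rfl | hs
    · rw [hC0'r, hr]
      simp [Fin.le_def]
    · rw [hC0'ne s hs]
  have h1' : ∀ t, C0' t ≠ (⟨a+1, by omega⟩ : Fin (n+1)) := by
    intro t
    rcases eq_or_ne t r with rfl | ht
    · rw [hC0'r]
      simp [Fin.ext_iff]
    · rw [hC0'ne t ht]
      intro h
      exact ht (hC0.injective (h.trans hr.symm))
  have hbad0 : C0' r < C0 r := by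
    rw [hC0'r, hr]
    simp [Fin.lt_def]
  constructor
  · rw [detD3 a ha c M R C0' hc0 r hC0'r hmono'.injective h1']
    have hupd : Function.update C0' r (⟨a+1, by omega⟩ : Fin (n+1)) = C0 := by
      funext s
      rcases eq_or_ne s r with rfl | hs
      · rw [Function.update_self, hr]
      · rw [Function.update_of_ne hs, hC0'ne s hs]
    rw [hupd, hI.1, hI.2 C0' hmono' ⟨r, hbad0⟩, mul_zero, zero_add]
  · intro C hC hbad
    have hbadC0 : ∃ s, C s < C0 s := by
      obtain ⟨s, hs⟩ := hbad
      exact ⟨s, lt_of_lt_of_le hs (hle s)⟩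
    by_cases e1 : ∃ rr, C rr = (⟨a+1, by omega⟩ : Fin (n+1))
    · obtain ⟨r1, hr1⟩ := e1
      by_cases e0 : ∃ rr, C rr = (⟨a, by omega⟩ : Fin (n+1))
      · obtain ⟨rr0, hrr0⟩ := e0
        have hne : rr0 ≠ r1 := by
          intro h
          rw [h, hr1] at hrr0
          simp [Fin.ext_iff] at hrr0
        rw [detD4 a ha c M R C hc0 rr0 r1 hne hrr0 hr1 hC.injective]
        exact hI.2 C hC hbadC0
      · push_neg at e0
        rw [detD2 a ha c M R C hc0 r1 hr1 hC.injective e0, hI.2 C hC hbadC0, mul_zero]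
    · push_neg at e1
      by_cases e0 : ∃ rr, C rr = (⟨a, by omega⟩ : Fin (n+1))
      · obtain ⟨r1, hr1⟩ := e0
        rw [detD3 a ha c M R C hc0 r1 hr1 hC.injective e1]
        have hbad' : ∃ s, Function.update C r1 (⟨a+1, by omega⟩ : Fin (n+1)) s < C0 s := by
          obtain ⟨s, hs⟩ := hbad
          by_cases hsr : s = r1
          · subst hsr
            rw [hr1] at hs
            have hsnr : s ≠ r := by
              intro h
              have h2 : (⟨a, by omega⟩ : Fin (n+1)) < C0' r := by
                rw [← h]; exact hs
              rw [hC0'r] at h2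
              exact absurd h2 (lt_irrefl _)
            rw [hC0'ne s hsnr] at hs
            have hC0s : C0 s ≠ (⟨a+1, by omega⟩ : Fin (n+1)) := by
              intro h
              exact hsnr (hC0.injective (h.trans hr.symm))
            refine ⟨s, ?_⟩
            rw [Function.update_self]
            simp [Fin.lt_def, Fin.ext_iff] at hs hC0s ⊢
            omega
          · refine ⟨s, ?_⟩
            rw [Function.update_of_ne hsr]
            exact lt_of_lt_of_le hs (hle s)
        rw [hI.2 C hC hbadC0,
          hI.2 _ (upd_mono_up a ha hC hr1 e1) hbad', mul_zero, add_zero]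
      · push_neg at e0
        rw [detD1 a ha c M R C hc0 e0 e1]
        exact hI.2 C hC hbadC0

end S3
section Machinery
variable {n j : ℕ}

def Cst (n j m u : ℕ) (h : m + j ≤ n + 1) : Fin j → Fin (n+1) :=
  fun s => ⟨m + (s:ℕ) - (if (s:ℕ) < u then 1 else 0), by have := s.isLt; split <;> omega⟩

lemma Cst_congr {m1 m2 u1 u2 : ℕ} (h1 : m1 + j ≤ n + 1) (hm : m1 = m2) (hu : u1 = u2) :
    Cst n j m1 u1 h1 = Cst n j m2 u2 (hm ▸ h1) := by
  subst hm; subst hu; rfl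

lemma Cst_mono (m u : ℕ) (h : m + j ≤ n + 1) (hm : 1 ≤ m ∨ u = 0) :
    StrictMono (Cst n j m u h) := by
  intro s t hst
  have hst' : (s:ℕ) < (t:ℕ) := hst
  rcases hm with hm | hm
  · simp only [Cst, Fin.lt_def]
    split_ifs <;> omega
  · subst hm
    simp only [Cst, Fin.lt_def]
    split_ifs <;> omega

lemma PInv_one (R : Fin j → Fin (n+1)) (hR : StrictMono R) :
    PInv R R (1 : Matrix (Fin (n+1)) (Fin (n+1)) ℂ) := by
  constructor
  · have h1 : (1 : Matrix (Fin (n+1)) (Fin (n+1)) ℂ).submatrix R R = 1 := by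
      ext s t
      simp [Matrix.one_apply, hR.injective.eq_iff]
    rw [h1, Matrix.det_one]
  · intro C hC hbad
    rw [Matrix.det_apply]
    apply Finset.sum_eq_zero
    intro σ _
    by_cases hall : ∀ t, R (σ t) = C t
    · exfalso
      have hσmono : StrictMono (σ : Fin j → Fin j) := by
        intro s t hst
        have h2 := hC hst
        rw [← hall s, ← hall t] at h2
        exact hR.lt_iff_lt.mp h2
      obtain ⟨s, hs⟩ := hbad
      have h1 : s ≤ σ s := @StrictMono.le_apply (Fin j) _ (Finite.to_wellFoundedLT) _ hσmono s
      have h2 : R s ≤ R (σ s) := hR.monotone h1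
      rw [hall s] at h2
      exact absurd hs (not_lt.mpr h2)
    · push_neg at hall
      obtain ⟨t, ht⟩ := hall
      have hz : (1 : Matrix (Fin (n+1)) (Fin (n+1)) ℂ).submatrix R C (σ t) t = 0 := by
        simp [Matrix.one_apply, ht]
      have hp : ∏ i, (1 : Matrix (Fin (n+1)) (Fin (n+1)) ℂ).submatrix R C (σ i) i = 0 :=
        Finset.prod_eq_zero (Finset.mem_univ t) hz
      rw [hp, smul_zero]

noncomputable def IP (n : ℕ) (c : ℕ → ℕ → ℂ) (K t : ℕ) : Matrix (Fin (n+1)) (Fin (n+1)) ℂ :=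
  ((List.range t).map fun l => Yb n (l+1) (c K (l+1))).prod

noncomputable def OP (n : ℕ) (c : ℕ → ℕ → ℂ) (K : ℕ) : Matrix (Fin (n+1)) (Fin (n+1)) ℂ :=
  ((List.range K).map fun k => IP n c (k+1) (n-k)).prod

lemma IP_succ (c : ℕ → ℕ → ℂ) (K t : ℕ) :
    IP n c K (t+1) = IP n c K t * Yb n (t+1) (c K (t+1)) := by
  unfold IP
  rw [List.range_succ, List.map_append, List.prod_append]
  simp

lemma OP_succ (c : ℕ → ℕ → ℂ) (K : ℕ) :
    OP n c (K+1) = OP n c K * IP n c (K+1) (n-K) := by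
  unfold OP
  rw [List.range_succ, List.map_append, List.prod_append]
  simp

lemma Theta_eq (c : ℕ → ℕ → ℂ) : Theta n c = OP n c n := rfl

end Machinery
section Pass
variable {n j : ℕ}

lemma pass_pos (R : Fin j → Fin (n+1)) (m : ℕ) (hm : 1 ≤ m) (hmj : m + j ≤ n + 1)
    (K : ℕ) (c : ℕ → ℕ → ℂ) (hcK : ∀ l, 1 ≤ l → l ≤ m + j - 1 → c K l ≠ 0)
    (M : Matrix (Fin (n+1)) (Fin (n+1)) ℂ) (hI : PInv R (Cst n j m 0 hmj) M) :
    PInv R (Cst n j (m-1) 0 (by omega)) (M * IP n c K (m+j-1)) := by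
  have main : ∀ t, t ≤ m + j - 1 →
      PInv R (Cst n j m (t + 1 - m) hmj) (M * IP n c K t) := by
    intro t
    induction t with
    | zero =>
      intro _
      rw [Cst_congr hmj rfl (show 0 + 1 - m = 0 by omega)]
      simpa [IP] using hI
    | succ t ih =>
      intro ht1
      have ihh := ih (by omega)
      rw [IP_succ, ← Matrix.mul_assoc]
      have ha : t + 1 ≤ n := by omega
      have hc0 : c K (t+1) ≠ 0 := hcK (t+1) (by omega) (by omega)
      by_cases hcase : t + 1 ≤ m - 1
      · rw [Cst_congr hmj rfl (show t + 1 + 1 - m = 0 by omega)]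
        rw [Cst_congr hmj rfl (show t + 1 - m = 0 by omega)] at ihh
        apply stepS1 t ha (c K (t+1)) hc0 (M * IP n c K t) R (Cst n j m 0 hmj) ?h0 ?h1 ihh
        case h0 =>
          intro s
          simp only [Cst, Fin.ext_iff, ne_eq]
          split <;> omega
        case h1 =>
          intro s
          simp only [Cst, Fin.ext_iff, ne_eq]
          split <;> omega
      · have hu : t + 1 - m < j := by omega
        have hr : Cst n j m (t + 1 - m) hmj ⟨t + 1 - m, hu⟩ = (⟨t+1, by omega⟩ : Fin (n+1)) := by
          simp only [Cst, Fin.ext_iff]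
          split <;> omega
        have h0 : ∀ s, Cst n j m (t + 1 - m) hmj s ≠ (⟨t, by omega⟩ : Fin (n+1)) := by
          intro s
          simp only [Cst, Fin.ext_iff, ne_eq]
          have := s.isLt
          split <;> omega
        have hupd : Cst n j m (t + 1 + 1 - m) hmj
            = Function.update (Cst n j m (t + 1 - m) hmj) ⟨t + 1 - m, hu⟩
                (⟨t, by omega⟩ : Fin (n+1)) := by
          funext s
          rw [Function.update_apply]
          split_ifs with hs
          · have hs' : (s : ℕ) = t + 1 - m := by rw [hs]
            simp only [Cst, Fin.ext_iff]
            split <;> omega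
          · have hs' : (s : ℕ) ≠ t + 1 - m := fun h => hs (Fin.ext h)
            simp only [Cst, Fin.ext_iff]
            split_ifs <;> omega
        rw [hupd]
        exact stepS3 t ha (c K (t+1)) hc0 (M * IP n c K t) R (Cst n j m (t + 1 - m) hmj)
          (Cst_mono _ _ _ (Or.inl hm)) ⟨t + 1 - m, hu⟩ hr h0 ihh _ rfl
  have fin := main (m + j - 1) le_rfl
  rw [Cst_congr hmj rfl (show m + j - 1 + 1 - m = j by omega)] at fin
  have : Cst n j m j hmj = Cst n j (m-1) 0 (by omega) := by
    funext s
    have := s.isLt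
    simp only [Cst, Fin.ext_iff]
    split_ifs <;> omega
  rwa [this] at fin

lemma pass_zero (R : Fin j → Fin (n+1)) (hjn : j ≤ n) (hj0 : 0 + j ≤ n + 1)
    (K L : ℕ) (hL : L ≤ j - 1) (c : ℕ → ℕ → ℂ)
    (hcK : ∀ l, 1 ≤ l → l ≤ L → c K l ≠ 0)
    (M : Matrix (Fin (n+1)) (Fin (n+1)) ℂ) (hI : PInv R (Cst n j 0 0 hj0) M) :
    PInv R (Cst n j 0 0 hj0) (M * IP n c K L) := by
  induction L with
  | zero => simpa [IP] using hI
  | succ t ih =>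
    have ihh := ih (by omega) (fun l h1 h2 => hcK l h1 (by omega))
    rw [IP_succ, ← Matrix.mul_assoc]
    have ha : t + 1 ≤ n := by omega
    have hc0 : c K (t+1) ≠ 0 := hcK (t+1) (by omega) (by omega)
    have hjt : t < j := by omega
    have hjt1 : t + 1 < j := by omega
    refine stepS2 t ha (c K (t+1)) hc0 (M * IP n c K t) R (Cst n j 0 0 hj0)
      (Cst_mono _ _ _ (Or.inr rfl)) ⟨t, hjt⟩ ⟨t+1, hjt1⟩ ?_ ?_ ihh
    · simp only [Cst, Fin.ext_iff]
      split <;> omega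
    · simp only [Cst, Fin.ext_iff]
      split <;> omega

lemma outer_ind (hj1 : 1 ≤ j) (hjn : j ≤ n) (c : ℕ → ℕ → ℂ)
    (hc : ∀ k l, 1 ≤ k → 1 ≤ l → k + l ≤ n + 1 → c k l ≠ 0) :
    ∀ K, K ≤ n → PInv (Cst n j (n+1-j) 0 (by omega)) (Cst n j (n+1-j-K) 0 (by omega))
      (OP n c K) := by
  intro K
  induction K with
  | zero =>
    intro _
    rw [Cst_congr (by omega) (show n+1-j-0 = n+1-j by omega) rfl]
    have h1 : OP n c 0 = 1 := by simp [OP]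
    rw [h1]
    exact PInv_one _ (Cst_mono _ _ _ (Or.inl (by omega)))
  | succ K ih =>
    intro hK1
    have ihh := ih (by omega)
    rw [OP_succ]
    by_cases hm : 1 ≤ n + 1 - j - K
    · have hlen : n - K = (n + 1 - j - K) + j - 1 := by omega
      have hres := pass_pos (Cst n j (n+1-j) 0 (by omega)) (n+1-j-K) hm (by omega) (K+1) c
        (fun l h1 h2 => hc (K+1) l (by omega) h1 (by omega)) (OP n c K) ihh
      rw [Cst_congr (by omega) (show n+1-j-K-1 = n+1-j-(K+1) by omega) rfl] at hres
      rw [hlen]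
      exact hres
    · have hm0 : n + 1 - j - K = 0 := by omega
      rw [Cst_congr (by omega) (show n+1-j-(K+1) = 0 by omega) rfl]
      rw [Cst_congr (by omega) hm0 rfl] at ihh
      exact pass_zero _ hjn (by omega) (K+1) (n-K) (by omega) c
        (fun l h1 h2 => hc (K+1) l (by omega) h1 (by omega)) (OP n c K) ihh

end Pass


/-- For every `1 ≤ j ≤ n`, the principal generalized minor `Δ_{w₀Λ_j, Λ_j}(Θ(c))`, i.e. the
minor of `Θ(c)` on rows `{n+2−j, …, n+1}` and columns `{1, 2, …, j}`, equals `1`. -/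
theorem stmt2 (n j : ℕ) (hn : 1 ≤ n) (hj : 1 ≤ j) (hjn : j ≤ n)
    (c : ℕ → ℕ → ℂ) (hc : ∀ k l, 1 ≤ k → 1 ≤ l → k + l ≤ n + 1 → c k l ≠ 0) :
    ((Theta n c).submatrix
        (fun a : Fin j => (⟨n + 1 - j + (a : ℕ), by have := a.isLt; omega⟩ : Fin (n+1)))
        (fun a : Fin j => (⟨(a : ℕ), by have := a.isLt; omega⟩ : Fin (n+1)))).det
      = 1 := by
  have h := (outer_ind hj hjn c hc n le_rfl).1
  rw [Cst_congr (by omega) (show n+1-j-n = 0 by omega) rfl] at h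
  rw [← Theta_eq] at h
  have hrow : (fun a : Fin j => (⟨n + 1 - j + (a : ℕ), by have := a.isLt; omega⟩ : Fin (n+1)))
      = Cst n j (n+1-j) 0 (by omega) := by
    funext s
    simp only [Cst, Fin.ext_iff]
    split <;> omega
  have hcol : (fun a : Fin j => (⟨(a : ℕ), by have := a.isLt; omega⟩ : Fin (n+1)))
      = Cst n j 0 0 (by omega) := by
    funext s
    simp only [Cst, Fin.ext_iff]
    split <;> omega
  rw [hrow, hcol]
  exact h
end

section
/- Let 1 ≤ i ≤ n and let c_1, …, c_i be nonzero complex numbers. The matrix M := 𝐱_i(c_i)·𝐱_{i−1}(c_{i−1})⋯𝐱_1(c_1) ∈ SL_{n+1}(ℂ) acts on the standard basis e_1, …, e_{n+1} by: M e_1 = c_1^{−1} e_1; M e_k = (c_{k−1}/c_k) e_k + e_{k−1} for 2 ≤ k ≤ i; M e_{i+1} = c_i e_{i+1} + e_i; and M e_k = e_k for k > i+1. -/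
open Matrix

/-- The upper unipotent one-parameter element `x_i(c) = I + c E_{i,i+1}` (1-based `i`). -/
noncomputable def xm (n i : ℕ) (c : ℂ) : Matrix (Fin (n+1)) (Fin (n+1)) ℂ :=
  1 + c • Em n i (i+1)

/-- `𝐱_i(c) = α_i^∨(c⁻¹) · x_i(c)`. -/
noncomputable def Xb (n i : ℕ) (c : ℂ) : Matrix (Fin (n+1)) (Fin (n+1)) ℂ :=
  alco n i c⁻¹ * xm n i c

/-- The standard basis vector `e_k` of `ℂ^{n+1}` in 1-based indexing. -/
def stdv (n k : ℕ) : Fin (n+1) → ℂ := fun a => if (a : ℕ) + 1 = k then 1 else 0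


lemma stdv_out (n k : ℕ) (h : ¬(1 ≤ k ∧ k ≤ n+1)) : stdv n k = 0 := by
  funext a; simp only [stdv]; rw [if_neg]; · rfl
  · omega

lemma Em_mulVec (n j l k : ℕ) (hl1 : 1 ≤ l) (hl : l ≤ n+1) :
    (Em n j l).mulVec (stdv n k) = if k = l then stdv n j else 0 := by
  by_cases hk : 1 ≤ k ∧ k ≤ n+1
  · funext a
    simp only [Em, stdv, Matrix.mulVec, dotProduct, Matrix.of_apply]
    rw [Finset.sum_eq_single (⟨k-1, by omega⟩ : Fin (n+1))]
    · have hb : ((⟨k-1, by omega⟩ : Fin (n+1)) : ℕ) = k - 1 := rfl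
      simp only [hb]
      have hkk : k - 1 + 1 = k := by omega
      rw [hkk, if_pos rfl, mul_one]
      by_cases hkl : k = l
      · rw [if_pos hkl]
        split_ifs with h1 <;> simp_all [stdv]
      · rw [if_neg hkl, if_neg (by tauto), Pi.zero_apply]
    · intro b _ hb
      have : ¬((b:ℕ)+1 = k) := by
        intro h; apply hb; apply Fin.ext; simp; omega
      simp [this]
    · simp
  · rw [stdv_out n k hk, Matrix.mulVec_zero, if_neg (by omega)]

lemma alco_stdv (n j : ℕ) (d : ℂ) (k : ℕ) :
    (alco n j d).mulVec (stdv n k) =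
      (if k = j then d else if k = j + 1 then d⁻¹ else 1) • stdv n k := by
  funext a
  simp only [alco, Matrix.mulVec_diagonal, stdv, Pi.smul_apply, smul_eq_mul]
  split_ifs <;> simp_all

lemma Xb_mulVec (n j : ℕ) (hj1 : 1 ≤ j) (hjn : j ≤ n) (c : ℂ) (hc : c ≠ 0) (k : ℕ) :
    (Xb n j c).mulVec (stdv n k) =
      if k = j then c⁻¹ • stdv n j
      else if k = j + 1 then c • stdv n (j+1) + stdv n j
      else stdv n k := by
  rw [Xb, ← Matrix.mulVec_mulVec]
  rw [show (xm n j c).mulVec (stdv n k) = stdv n k + (c • (if k = j+1 then stdv n j else 0)) by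
    rw [xm, Matrix.add_mulVec, Matrix.one_mulVec, Matrix.smul_mulVec,
      Em_mulVec n j (j+1) k (by omega) (by omega)]]
  rw [Matrix.mulVec_add, Matrix.mulVec_smul, alco_stdv]
  by_cases h1 : k = j
  · subst h1
    rw [if_pos rfl, if_pos rfl, if_neg (show ¬ k = k + 1 by omega), Matrix.mulVec_zero,
      smul_zero, add_zero]
  · by_cases h2 : k = j + 1
    · subst h2
      rw [if_neg h1, if_pos rfl, if_pos rfl, if_neg h1, if_pos rfl, inv_inv, alco_stdv,
        if_pos rfl, smul_smul, mul_inv_cancel₀ hc, one_smul]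
    · rw [if_neg h1, if_neg h2, if_neg h2, if_neg h1, if_neg h2, Matrix.mulVec_zero,
        smul_zero, add_zero, one_smul]

lemma prod_succ (n : ℕ) (c : ℕ → ℂ) (i : ℕ) :
    ((List.range (i+1)).map fun k => Xb n (i+1-k) (c (i+1-k))).prod
    = Xb n (i+1) (c (i+1)) *
      ((List.range i).map fun k => Xb n (i-k) (c (i-k))).prod := by
  rw [List.range_succ_eq_map, List.map_cons, List.prod_cons, List.map_map]
  congr 1
  congr 1
  apply List.map_congr_left
  intro k _
  simp [Function.comp, Nat.succ_sub_succ]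

lemma aux (n : ℕ) (c : ℕ → ℂ) :
    ∀ i, 1 ≤ i → i ≤ n → (∀ k, 1 ≤ k → k ≤ i → c k ≠ 0) →
    ∀ M : Matrix (Fin (n+1)) (Fin (n+1)) ℂ,
      M = ((List.range i).map fun k => Xb n (i - k) (c (i - k))).prod →
      (M.mulVec (stdv n 1) = (c 1)⁻¹ • stdv n 1) ∧
      (∀ k, 2 ≤ k → k ≤ i →
        M.mulVec (stdv n k) = (c (k-1) / c k) • stdv n k + stdv n (k-1)) ∧
      (M.mulVec (stdv n (i+1)) = c i • stdv n (i+1) + stdv n i) ∧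
      (∀ k, i + 1 < k → M.mulVec (stdv n k) = stdv n k) := by
  intro i hi1
  induction i, hi1 using Nat.le_induction with
  | base =>
    intro h1n hc M hM
    have hc1 : c 1 ≠ 0 := hc 1 le_rfl le_rfl
    subst hM
    rw [show List.range 1 = [0] from rfl]
    simp only [List.map_cons, List.map_nil, List.prod_cons, List.prod_nil,
      mul_one, Nat.sub_zero]
    refine ⟨?_, ?_, ?_, ?_⟩
    · rw [Xb_mulVec n 1 le_rfl h1n (c 1) hc1 1, if_pos rfl]
    · intro k h2 h1; omega
    · rw [Xb_mulVec n 1 le_rfl h1n (c 1) hc1 2, if_neg (by omega), if_pos rfl]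
    · intro k hk
      rw [Xb_mulVec n 1 le_rfl h1n (c 1) hc1 k, if_neg (by omega), if_neg (by omega)]
  | succ i hi IH =>
    intro hin hc M hM
    have hin' : i ≤ n := by omega
    have hc' : ∀ k, 1 ≤ k → k ≤ i → c k ≠ 0 := fun k h1 h2 => hc k h1 (by omega)
    obtain ⟨IH1, IH2, IH3, IH4⟩ :=
      IH hin' hc' (((List.range i).map fun k => Xb n (i - k) (c (i - k))).prod) rfl
    rw [prod_succ] at hM
    have hci1 : c (i+1) ≠ 0 := hc (i+1) (by omega) le_rfl
    have Xv := Xb_mulVec n (i+1) (by omega) hin (c (i+1)) hci1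
    have key : ∀ v, M.mulVec v = (Xb n (i+1) (c (i+1))).mulVec
        ((((List.range i).map fun k => Xb n (i - k) (c (i - k))).prod).mulVec v) := by
      intro v; rw [hM, ← Matrix.mulVec_mulVec]
    refine ⟨?_, ?_, ?_, ?_⟩
    · rw [key, IH1, Matrix.mulVec_smul, Xv 1, if_neg (by omega), if_neg (by omega)]
    · intro k h2 hki
      rcases Nat.lt_or_ge k (i+1) with hk | hk
      · rw [key, IH2 k h2 (by omega), Matrix.mulVec_add, Matrix.mulVec_smul,
          Xv k, Xv (k-1), if_neg (by omega), if_neg (by omega), if_neg (by omega),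
          if_neg (by omega)]
      · have hk1 : k = i + 1 := by omega
        subst hk1
        rw [key, IH3, Matrix.mulVec_add, Matrix.mulVec_smul, Xv (i+1), Xv i,
          if_pos rfl, if_neg (by omega), if_neg (by omega),
          show i + 1 - 1 = i from rfl, smul_smul, div_eq_mul_inv]
    · rw [key, IH4 (i+2) (by omega), Xv (i+2), if_neg (by omega), if_pos rfl]
    · intro k hk
      rw [key, IH4 k (by omega), Xv k, if_neg (by omega), if_neg (by omega)]

/-- Let `1 ≤ i ≤ n` and `c_1, …, c_i` nonzero. The matrix
`M = 𝐱_i(c_i)·𝐱_{i−1}(c_{i−1})⋯𝐱_1(c_1)` acts on the standard basis by: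
`M e_1 = c_1⁻¹ e_1`; `M e_k = (c_{k−1}/c_k) e_k + e_{k−1}` for `2 ≤ k ≤ i`;
`M e_{i+1} = c_i e_{i+1} + e_i`; and `M e_k = e_k` for `k > i+1`. -/
theorem stmt3 (n i : ℕ) (hn : 1 ≤ n) (hi : 1 ≤ i) (hin : i ≤ n)
    (c : ℕ → ℂ) (hc : ∀ k, 1 ≤ k → k ≤ i → c k ≠ 0) :
    ∀ M : Matrix (Fin (n+1)) (Fin (n+1)) ℂ,
      M = ((List.range i).map fun k => Xb n (i - k) (c (i - k))).prod →
      (M.mulVec (stdv n 1) = (c 1)⁻¹ • stdv n 1) ∧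
      (∀ k, 2 ≤ k → k ≤ i →
        M.mulVec (stdv n k) = (c (k-1) / c k) • stdv n k + stdv n (k-1)) ∧
      (M.mulVec (stdv n (i+1)) = c i • stdv n (i+1) + stdv n i) ∧
      (∀ k, i + 1 < k → k ≤ n + 1 → M.mulVec (stdv n k) = stdv n k) := by
  intro M hM
  obtain ⟨h1, h2, h3, h4⟩ := aux n c i hi hin hc M hM
  exact ⟨h1, h2, h3, fun k hk _ => h4 k hk⟩
end

section
/- Fix 1 ≤ j ≤ n and let M_j := X^{(j+1)} X^{(j+2)} ⋯ X^{(n)}, where X^{(k)} := 𝐱_k(c_{n+1−k,k})·𝐱_{k−1}(c_{n+1−k,k−1})⋯𝐱_1(c_{n+1−k,1}) (so M_j is the identity when j = n). Then for every j-element subset S ⊆ {1, 2, …, j+1}, the minor of M_j on rows S and columns {n+2−j, …, n+1} equals 1 if S = {2, 3, …, j+1}, and equals 0 for every other such S. Equivalently, the j-th exterior power of M_j maps e_{n+2−j} ∧ ⋯ ∧ e_{n+1} to e_2 ∧ ⋯ ∧ e_{j+1} plus a combination of wedges e_{i_1} ∧ ⋯ ∧ e_{i_j} with i_j > j+1. 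-/
open Matrix

/-- `X^{(k)} = 𝐱_k(c_{n+1−k,k})·𝐱_{k−1}(c_{n+1−k,k−1})⋯𝐱_1(c_{n+1−k,1})`. -/
noncomputable def Xfac (n k : ℕ) (c : ℕ → ℕ → ℂ) : Matrix (Fin (n+1)) (Fin (n+1)) ℂ :=
  ((List.range k).map fun l => Xb n (k - l) (c (n + 1 - k) (k - l))).prod

/-- `M_j = X^{(j+1)} X^{(j+2)} ⋯ X^{(n)}` (the identity when `j = n`). -/
noncomputable def Mjmat (n j : ℕ) (c : ℕ → ℕ → ℂ) : Matrix (Fin (n+1)) (Fin (n+1)) ℂ :=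
  ((List.range (n - j)).map fun l => Xfac n (j + 1 + l) c).prod

lemma Xb_apply (n i : ℕ) (cc : ℂ) (a b : Fin (n+1)) :
    Xb n i cc a b =
    (if (a:ℕ)+1 = i then cc⁻¹ else if (a:ℕ) = i then cc else 1) *
      ((if a = b then (1:ℂ) else 0) + cc * (if (a:ℕ)+1 = i ∧ (b:ℕ)+1 = i+1 then 1 else 0)) := by
  simp only [Xb, alco, xm, Em, Matrix.diagonal_mul, Matrix.add_apply, Matrix.one_apply,
    Matrix.smul_apply, Matrix.of_apply, smul_eq_mul, inv_inv]
  congr 2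
  · rcases eq_or_ne ((a:ℕ)+1) (i+1) with h | h
    · simp [h, Nat.succ_injective h]
    · have : (a:ℕ) ≠ i := by omega
      simp [h, this]

lemma Xb_ne (n i : ℕ) (cc : ℂ) (a b : Fin (n+1)) (h1 : b ≠ a) (h2 : (b:ℕ) ≠ (a:ℕ)+1) :
    Xb n i cc a b = 0 := by
  rw [Xb_apply]
  have : ¬ (a = b) := fun h => h1 h.symm
  have h3 : ¬ ((a:ℕ)+1 = i ∧ (b:ℕ)+1 = i+1) := by rintro ⟨u, v⟩; omega
  rw [if_neg this, if_neg h3]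
  ring

lemma Xb_succ (n i : ℕ) (cc : ℂ) (hcc : cc ≠ 0) (a b : Fin (n+1)) (h : (b:ℕ) = (a:ℕ)+1) :
    Xb n i cc a b = if (a:ℕ)+1 = i then 1 else 0 := by
  rw [Xb_apply]
  have hab : ¬ (a = b) := by intro e; rw [e] at h; omega
  rcases eq_or_ne ((a:ℕ)+1) i with hi | hi
  · simp [hab, hi, h, inv_mul_cancel₀ hcc]
  · simp [hab, hi]

lemma Xb_diag (n i : ℕ) (cc : ℂ) (a : Fin (n+1)) (h1 : (a:ℕ)+1 ≠ i) (h2 : (a:ℕ) ≠ i) :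
    Xb n i cc a a = 1 := by
  rw [Xb_apply]; simp [h1, h2]

noncomputable def Pk (n k : ℕ) (f : ℕ → ℂ) : Matrix (Fin (n+1)) (Fin (n+1)) ℂ :=
  ((List.range k).map fun l => Xb n (k - l) (f (k - l))).prod

lemma Pk_succ (n k : ℕ) (f : ℕ → ℂ) :
    Pk n (k+1) f = Xb n (k+1) (f (k+1)) * Pk n k f := by
  unfold Pk
  rw [List.range_succ_eq_map, List.map_cons, List.prod_cons, List.map_map]
  congr 1
  congr 1
  apply List.map_congr_left
  intro l _
  simp only [Function.comp_apply, Nat.succ_sub_succ]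

lemma sum_two (n : ℕ) (a : Fin (n+1)) (g : Fin (n+1) → ℂ)
    (h0 : ∀ x, x ≠ a → (x:ℕ) ≠ (a:ℕ)+1 → g x = 0) :
    ∑ x, g x = g a + (if h : (a:ℕ) < n then g ⟨(a:ℕ)+1, by omega⟩ else 0) := by
  split_ifs with h
  · set a' : Fin (n+1) := ⟨(a:ℕ)+1, by omega⟩ with ha'
    have hne : a ≠ a' := Fin.ne_of_val_ne (by simp [ha'])
    have key : ∀ x : Fin (n+1), g x =
        (if x = a then g a else 0) + (if x = a' then g a' else 0) := by
      intro x
      by_cases hx : x = a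
      · subst hx; rw [if_pos rfl, if_neg hne, add_zero]
      · by_cases hx' : x = a'
        · subst hx'; simp [hx]
        · have : (x:ℕ) ≠ (a:ℕ)+1 := by
            intro e; exact hx' (Fin.ext (by simp [ha', e]))
          simp [hx, hx', h0 x hx this]
    rw [Finset.sum_congr rfl (fun x _ => key x), Finset.sum_add_distrib]
    simp [Finset.sum_ite_eq']
  · have ha : (a:ℕ) = n := by omega
    have key : ∀ x : Fin (n+1), g x = if x = a then g a else 0 := by
      intro x
      by_cases hx : x = a
      · simp [hx]
      · have : (x:ℕ) ≠ (a:ℕ)+1 := by have := x.isLt; omega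
        simp [hx, h0 x hx this]
    rw [Finset.sum_congr rfl (fun x _ => key x)]
    simp

lemma Pk_entry (n : ℕ) : ∀ (k : ℕ), k ≤ n → ∀ (f : ℕ → ℂ), (∀ i, 1 ≤ i → i ≤ k → f i ≠ 0) →
    (∀ a b : Fin (n+1), (b:ℕ) ≠ (a:ℕ) →
      Pk n k f a b = if (b:ℕ) = (a:ℕ)+1 ∧ (a:ℕ) < k then 1 else 0)
    ∧ (∀ b : Fin (n+1), k < (b:ℕ) → Pk n k f b b = 1) := by
  intro k
  induction k with
  | zero =>
    intro _ f _
    have hP : Pk n 0 f = 1 := by simp [Pk]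
    constructor
    · intro a b hba
      have hab : a ≠ b := fun e => hba (by rw [e])
      rw [hP, Matrix.one_apply_ne hab, if_neg (by omega)]
    · intro b _
      rw [hP, Matrix.one_apply_eq]
  | succ k ih =>
    intro hk f hf
    have hk' : k ≤ n := by omega
    have hf' : ∀ i, 1 ≤ i → i ≤ k → f i ≠ 0 := fun i h1 h2 => hf i h1 (by omega)
    obtain ⟨ih1, ih2⟩ := ih hk' f hf'
    have hfk : f (k+1) ≠ 0 := hf (k+1) (by omega) le_rfl
    constructor
    · intro a b hba
      rw [Pk_succ, Matrix.mul_apply]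
      rw [sum_two n a (fun x => Xb n (k+1) (f (k+1)) a x * Pk n k f x b)
        (fun x hx1 hx2 => by
          show Xb n (k+1) (f (k+1)) a x * Pk n k f x b = 0
          rw [Xb_ne n (k+1) (f (k+1)) a x hx1 hx2, zero_mul])]
      beta_reduce
      by_cases hb : (b:ℕ) = (a:ℕ)+1
      · -- b is the superdiagonal position; a < n
        have han : (a:ℕ) < n := by have := b.isLt; omega
        rw [dif_pos han]
        set a1 : Fin (n+1) := ⟨(a:ℕ)+1, by omega⟩ with ha1def
        have ha1 : (a1:ℕ) = (a:ℕ)+1 := rfl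
        have hb' : b = a1 := Fin.ext hb
        rcases lt_trichotomy ((a:ℕ)) k with h | h | h
        · -- a < k : diag 1, super 0, Pk a b = 1
          rw [Xb_diag n (k+1) _ a (by omega) (by omega)]
          rw [ih1 a b hba, if_pos ⟨hb, h⟩]
          rw [Xb_succ n (k+1) _ hfk a a1 ha1, if_neg (by omega)]
          rw [if_pos ⟨hb, by omega⟩]
          ring
        · -- a = k
          rw [ih1 a b hba, if_neg (by omega)]
          rw [Xb_succ n (k+1) _ hfk a a1 ha1, if_pos (by omega)]
          rw [← hb', ih2 b (by omega), if_pos ⟨hb, by omega⟩]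
          ring
        · -- a > k
          rw [ih1 a b hba, if_neg (by omega)]
          rw [Xb_succ n (k+1) _ hfk a a1 ha1, if_neg (by omega)]
          rw [if_neg (by omega)]
          ring
      · -- b not on superdiagonal
        rw [if_neg (by omega)]
        rw [ih1 a b hba, if_neg (by omega), mul_zero, zero_add]
        split_ifs with han
        · set a1 : Fin (n+1) := ⟨(a:ℕ)+1, by omega⟩ with ha1def
          have ha1 : (a1:ℕ) = (a:ℕ)+1 := rfl
          rw [Xb_succ n (k+1) _ hfk a a1 ha1]
          rw [ih1 a1 b (by rw [ha1]; omega)]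
          simp only [ha1]
          split_ifs with h1 h2 <;> first | ring1 | omega | (exfalso; omega)
        · rfl
    · intro b hb
      rw [Pk_succ, Matrix.mul_apply]
      rw [sum_two n b (fun x => Xb n (k+1) (f (k+1)) b x * Pk n k f x b)
        (fun x hx1 hx2 => by
          show Xb n (k+1) (f (k+1)) b x * Pk n k f x b = 0
          rw [Xb_ne n (k+1) (f (k+1)) b x hx1 hx2, zero_mul])]
      beta_reduce
      rw [Xb_diag n (k+1) _ b (by omega) (by omega), ih2 b (by omega), mul_one]
      split_ifs with hn
      · set b1 : Fin (n+1) := ⟨(b:ℕ)+1, by omega⟩ with hb1def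
        have hb1 : (b1:ℕ) = (b:ℕ)+1 := rfl
        rw [Xb_succ n (k+1) _ hfk b b1 hb1, if_neg (by omega), zero_mul, add_zero]
      · rw [add_zero]

lemma Xfac_eq_Pk (n k : ℕ) (c : ℕ → ℕ → ℂ) :
    Xfac n k c = Pk n k (fun i => c (n + 1 - k) i) := rfl

noncomputable def Qm (n j m : ℕ) (c : ℕ → ℕ → ℂ) : Matrix (Fin (n+1)) (Fin (n+1)) ℂ :=
  ((List.range (n - j - m)).map fun l => Xfac n (j + 1 + m + l) c).prod

lemma Mjmat_eq_Qm (n j : ℕ) (c : ℕ → ℕ → ℂ) : Mjmat n j c = Qm n j 0 c := rfl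

lemma Qm_succ (n j m : ℕ) (c : ℕ → ℕ → ℂ) (hm : m < n - j) :
    Qm n j m c = Xfac n (j + 1 + m) c * Qm n j (m+1) c := by
  unfold Qm
  have h1 : n - j - m = (n - j - (m+1)) + 1 := by omega
  rw [h1, List.range_succ_eq_map, List.map_cons, List.prod_cons, List.map_map]
  have h2 : ∀ l, j + 1 + m + (l + 1) = j + 1 + (m + 1) + l := fun l => by omega
  refine congrArg₂ (· * ·) rfl ?_
  refine congrArg List.prod (List.map_congr_left fun l _ => ?_)
  simp only [Function.comp_apply, h2 l]

lemma Qm_col (n j : ℕ) (hj : 1 ≤ j) (hjn : j ≤ n) (c : ℕ → ℕ → ℂ)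
    (hc : ∀ a b, 1 ≤ a → 1 ≤ b → a + b ≤ n + 1 → c a b ≠ 0) :
    ∀ d (_ : d ≤ n - j) t (ht : t < j) (a : Fin (n+1)) (_ : (a:ℕ) ≤ (n - j - d) + t + 1),
      Qm n j (n - j - d) c a ⟨n + 1 - j + t, by omega⟩
        = if (a:ℕ) = (n - j - d) + t + 1 then 1 else 0 := by
  intro d
  induction d with
  | zero =>
    intro _ t ht a ha
    have hQ : Qm n j (n - j - 0) c = 1 := by
      unfold Qm
      have : n - j - (n - j - 0) = 0 := by omega
      rw [this]
      simp
    rw [hQ, Matrix.one_apply]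
    have hbv : ((⟨n + 1 - j + t, by omega⟩ : Fin (n+1)) : ℕ) = n + 1 - j + t := rfl
    have : (a = (⟨n + 1 - j + t, by omega⟩ : Fin (n+1))) ↔ ((a:ℕ) = (n - j - 0) + t + 1) := by
      rw [Fin.ext_iff, hbv]
      omega
    split_ifs with h1 h2 h2 <;> first | rfl | (exfalso; rw [this] at h1; omega) |
      (exfalso; rw [← this] at h2; exact h1 h2)
  | succ d ihd =>
    intro hd t ht a ha
    set m := n - j - (d + 1) with hm
    have hm1 : m + 1 = n - j - d := by omega
    have hmlt : m < n - j := by omega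
    set k := j + 1 + m with hkdef
    have hkn : k ≤ n := by omega
    -- the nonvanishing hypothesis for the Pk lemma
    have hf : ∀ i, 1 ≤ i → i ≤ k → c (n + 1 - k) i ≠ 0 := by
      intro i h1 h2
      exact hc (n + 1 - k) i (by omega) h1 (by omega)
    obtain ⟨pk1, _⟩ := Pk_entry n k hkn (fun i => c (n + 1 - k) i) hf
    have hXfac : ∀ a b : Fin (n+1), (b:ℕ) ≠ (a:ℕ) →
        Xfac n k c a b = if (b:ℕ) = (a:ℕ)+1 ∧ (a:ℕ) < k then 1 else 0 := by
      intro a b h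
      rw [Xfac_eq_Pk]
      exact pk1 a b h
    have han : (a:ℕ) < n := by omega
    set b : Fin (n+1) := ⟨n + 1 - j + t, by omega⟩ with hbdef
    have hbval : (b:ℕ) = n + 1 - j + t := rfl
    rw [Qm_succ n j m c hmlt, Matrix.mul_apply]
    rw [sum_two n a (fun x => Xfac n (j + 1 + m) c a x * Qm n j (m+1) c x b)
      (fun x hx1 hx2 => by
        show Xfac n (j + 1 + m) c a x * Qm n j (m+1) c x b = 0
        rw [hXfac a x (by omega), if_neg (by omega), zero_mul])]
    rw [dif_pos han]
    set a1 : Fin (n+1) := ⟨(a:ℕ)+1, by omega⟩ with ha1def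
    have ha1 : (a1:ℕ) = (a:ℕ)+1 := rfl
    -- first term: Qm (m+1) a b = 0 since a ≤ m+t+1 < (m+1)+t+1
    have e1 : Qm n j (m+1) c a b = 0 := by
      rw [hm1, ihd (by omega) t ht a (by omega), if_neg (by omega)]
    -- superdiagonal entry of Xfac is 1
    have e2 : Xfac n (j + 1 + m) c a a1 = 1 := by
      rw [hXfac a a1 (by omega), if_pos ⟨ha1, by omega⟩]
    -- second term via IH
    have e3 : Qm n j (m+1) c a1 b = if (a1:ℕ) = (m+1) + t + 1 then 1 else 0 := by
      rw [hm1, ihd (by omega) t ht a1 (by omega)]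
    show Xfac n (j + 1 + m) c a a * Qm n j (m+1) c a b +
        Xfac n (j + 1 + m) c a a1 * Qm n j (m+1) c a1 b = _
    rw [e1, e2, e3, mul_zero, zero_add, one_mul, ha1]
    split_ifs with h1 h2 h2 <;> first | rfl | omega | (exfalso; omega)

lemma Mjmat_col (n j : ℕ) (hj : 1 ≤ j) (hjn : j ≤ n) (c : ℕ → ℕ → ℂ)
    (hc : ∀ a b, 1 ≤ a → 1 ≤ b → a + b ≤ n + 1 → c a b ≠ 0)
    (t : ℕ) (ht : t < j) (a : Fin (n+1)) (ha : (a:ℕ) ≤ t + 1) :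
    Mjmat n j c a ⟨n + 1 - j + t, by omega⟩ = if (a:ℕ) = t + 1 then 1 else 0 := by
  have h0 : n - j - (n - j) = 0 := by omega
  have := Qm_col n j hj hjn c hc (n - j) le_rfl t ht a (by omega)
  rw [h0] at this
  rw [Mjmat_eq_Qm]
  rw [this]
  norm_num

/-- For every `j`-element subset `S ⊆ {1, 2, …, j+1}` (encoded 0-based: `S ⊆ Fin (n+1)` with
all elements of value `≤ j`), the minor of `M_j` on rows `S` and columns `{n+2−j, …, n+1}`
equals `1` if `S = {2, 3, …, j+1}` and `0` otherwise. -/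
theorem stmt5 (n j : ℕ) (hn : 1 ≤ n) (hj : 1 ≤ j) (hjn : j ≤ n)
    (c : ℕ → ℕ → ℂ) (hc : ∀ a b, 1 ≤ a → 1 ≤ b → a + b ≤ n + 1 → c a b ≠ 0)
    (S : Finset (Fin (n+1))) (hS : ∀ a ∈ S, (a : ℕ) ≤ j) (hcard : S.card = j) :
    ((Mjmat n j c).submatrix
        (fun a : Fin j => ((S.orderIsoOfFin hcard a : Fin (n+1))))
        (fun a : Fin j => (⟨n + 1 - j + (a : ℕ), by have := a.isLt; omega⟩ : Fin (n+1)))).det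
      = if S = Finset.univ.filter (fun a : Fin (n+1) => 1 ≤ (a : ℕ) ∧ (a : ℕ) ≤ j)
        then 1 else 0 := by
  set T := Finset.univ.filter (fun a : Fin (n+1) => 1 ≤ (a : ℕ) ∧ (a : ℕ) ≤ j) with hT
  have hmemT : ∀ a : Fin (n+1), a ∈ T ↔ (1 ≤ (a:ℕ) ∧ (a:ℕ) ≤ j) := by
    intro a; simp [hT]
  by_cases hST : S = T
  · rw [if_pos hST]
    -- identify the order embedding
    have hstrict : StrictMono (fun r : Fin j => (⟨(r:ℕ)+1, by have := r.isLt; omega⟩ : Fin (n+1))) := by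
      intro r s hrs
      simp only [Fin.mk_lt_mk]
      exact Nat.add_lt_add_right hrs 1
    have hmem : ∀ r : Fin j, (⟨(r:ℕ)+1, by have := r.isLt; omega⟩ : Fin (n+1)) ∈ S := by
      intro r
      have : (⟨(r:ℕ)+1, by have := r.isLt; omega⟩ : Fin (n+1)) ∈ T :=
        (hmemT _).mpr ⟨by show 1 ≤ (r:ℕ)+1; omega, by show (r:ℕ)+1 ≤ j; have := r.isLt; omega⟩
      exact hST ▸ this
    have hemb : (fun r : Fin j => (⟨(r:ℕ)+1, by have := r.isLt; omega⟩ : Fin (n+1)))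
        = S.orderEmbOfFin hcard := Finset.orderEmbOfFin_unique hcard hmem hstrict
    have hrow : ∀ r : Fin j, ((S.orderIsoOfFin hcard r : Fin (n+1)))
        = (⟨(r:ℕ)+1, by have := r.isLt; omega⟩ : Fin (n+1)) := by
      intro r
      rw [Finset.coe_orderIsoOfFin_apply, ← hemb]
    have hentry : ∀ r t : Fin j, (r:ℕ) ≤ (t:ℕ) →
        (Mjmat n j c).submatrix
          (fun a : Fin j => ((S.orderIsoOfFin hcard a : Fin (n+1))))
          (fun a : Fin j => (⟨n + 1 - j + (a : ℕ), by have := a.isLt; omega⟩ : Fin (n+1))) r t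
        = if (r:ℕ) = (t:ℕ) then 1 else 0 := by
      intro r t hrt
      rw [Matrix.submatrix_apply, hrow r]
      have := Mjmat_col n j hj hjn c hc (t:ℕ) t.isLt ⟨(r:ℕ)+1, by have := r.isLt; omega⟩
        (by show (r:ℕ)+1 ≤ (t:ℕ)+1; omega)
      rw [this]
      show (if (r:ℕ)+1 = (t:ℕ)+1 then (1:ℂ) else 0) = _
      split_ifs with h1 h2 h2 <;> first | rfl | omega | (exfalso; omega)
    have htri : ((Mjmat n j c).submatrix
          (fun a : Fin j => ((S.orderIsoOfFin hcard a : Fin (n+1))))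
          (fun a : Fin j => (⟨n + 1 - j + (a : ℕ), by have := a.isLt; omega⟩ : Fin (n+1)))).BlockTriangular OrderDual.toDual := by
      intro r t hlt
      have hlt' : (r:ℕ) < (t:ℕ) := hlt
      rw [hentry r t (le_of_lt hlt'), if_neg (by omega)]
    rw [Matrix.det_of_lowerTriangular _ htri]
    rw [Finset.prod_congr rfl (fun r _ => by rw [hentry r r le_rfl, if_pos rfl])]
    simp
  · rw [if_neg hST]
    -- 0 must belong to S
    have h0S : (0 : Fin (n+1)) ∈ S := by
      by_contra h0
      apply hST
      have hsub : S ⊆ T := by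
        intro a haS
        refine (hmemT a).mpr ⟨?_, hS a haS⟩
        rcases Nat.eq_zero_or_pos (a:ℕ) with h | h
        · exact absurd (show a ∈ S from haS) (by
            have : a = 0 := Fin.ext (by simpa using h)
            rw [this]; exact h0)
        · exact h
      have hTcard : T.card = j := by
        have hinj : Function.Injective (fun r : Fin j => (⟨(r:ℕ)+1, by have := r.isLt; omega⟩ : Fin (n+1))) := by
          intro r s hrs
          have : (r:ℕ)+1 = (s:ℕ)+1 := congrArg Fin.val hrs
          exact Fin.ext (by omega)
        have hTeq : T = Finset.map ⟨fun r : Fin j => (⟨(r:ℕ)+1, by have := r.isLt; omega⟩ : Fin (n+1)), hinj⟩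
            Finset.univ := by
          ext a
          rw [hmemT, Finset.mem_map]
          constructor
          · rintro ⟨h1, h2⟩
            refine ⟨⟨(a:ℕ)-1, by omega⟩, Finset.mem_univ _, ?_⟩
            exact Fin.ext (by show ((a:ℕ)-1)+1 = (a:ℕ); omega)
          · rintro ⟨r, _, hr⟩
            have : ((r:ℕ)+1) = (a:ℕ) := congrArg Fin.val hr
            have := r.isLt
            omega
        rw [hTeq, Finset.card_map, Finset.card_univ, Fintype.card_fin]
      exact Finset.eq_of_subset_of_card_le hsub (by rw [hTcard, hcard])
    -- first row of the submatrix is zero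
    apply Matrix.det_eq_zero_of_row_eq_zero ⟨0, hj⟩
    intro t
    rw [Matrix.submatrix_apply]
    have hzero : ((S.orderIsoOfFin hcard ⟨0, hj⟩ : Fin (n+1))) = 0 := by
      rw [Finset.coe_orderIsoOfFin_apply, Finset.orderEmbOfFin_zero hcard hj]
      exact le_antisymm (Finset.min'_le S 0 h0S) (Fin.zero_le _)
    rw [hzero]
    have := Mjmat_col n j hj hjn c hc (t:ℕ) t.isLt 0 (by simp)
    rw [this]
    rw [if_neg (by simp)]
end

section
/- Let λ_1, …, λ_n be nonnegative integers and let (x_{k,l})_{k+l ≤ n+1} be integers, with conventions x_{m,0} = 0 and x_{k,l} = 0 whenever k+l > n+1. Then the following two systems of inequalities are equivalent: (a) for every 1 ≤ j ≤ n, min_{1≤k≤j} ( x_{n−j+1,k} − x_{n−j+2,k−1} ) ≥ 0 and λ_j + min_{1≤k≤j} ( x_{j−k+1,k−1} − x_{j−k+1,k} ) ≥ 0; (b) for every 1 ≤ i ≤ n, x_{1,i} ≥ x_{2,i−1} ≥ ⋯ ≥ x_{i,1} ≥ 0, and for all 1 ≤ j ≤ i ≤ n, λ_i ≥ x_{j,i−j+1}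 − x_{j,i−j}. -/
/-- Equivalence of the ultra-discretized decoration inequalities `UD(f_B)(λ,x) ≥ 0` (system
(a)) with the defining inequalities of the polyhedral realization of `B(λ)` (system (b)), for
type `A_n`. Conventions `x_{m,0} = 0` and `x_{k,l} = 0` for `k+l > n+1` are hypotheses. -/
theorem stmt7 (n : ℕ) (hn : 1 ≤ n) (lam : ℕ → ℕ) (x : ℕ → ℕ → ℤ)
    (hx0 : ∀ m, x m 0 = 0) (hxout : ∀ k l, n + 1 < k + l → x k l = 0) :
    (∀ j, (hj : 1 ≤ j) → j ≤ n →
        0 ≤ Finset.inf' (Finset.Icc 1 j) (Finset.nonempty_Icc.mpr hj)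
              (fun k => x (n - j + 1) k - x (n - j + 2) (k - 1)) ∧
        0 ≤ (lam j : ℤ) + Finset.inf' (Finset.Icc 1 j) (Finset.nonempty_Icc.mpr hj)
              (fun k => x (j - k + 1) (k - 1) - x (j - k + 1) k))
    ↔
    ((∀ i, 1 ≤ i → i ≤ n →
        (∀ j, 1 ≤ j → j < i → x (j + 1) (i - j) ≤ x j (i - j + 1)) ∧ 0 ≤ x i 1) ∧
      (∀ j i, 1 ≤ j → j ≤ i → i ≤ n → x j (i - j + 1) - x j (i - j) ≤ (lam i : ℤ))) := by
  constructor
  · intro ha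
    have ha1 : ∀ j k, 1 ≤ j → j ≤ n → 1 ≤ k → k ≤ j →
        x (n - j + 2) (k - 1) ≤ x (n - j + 1) k := by
      intro j k hj hjn hk hkj
      have h := (ha j hj hjn).1
      rw [Finset.le_inf'_iff] at h
      have := h k (Finset.mem_Icc.mpr ⟨hk, hkj⟩)
      linarith
    have ha2 : ∀ j k, 1 ≤ j → j ≤ n → 1 ≤ k → k ≤ j →
        x (j - k + 1) k - x (j - k + 1) (k - 1) ≤ (lam j : ℤ) := by
      intro j k hj hjn hk hkj
      have h := (ha j hj hjn).2
      have h' : (-(lam j : ℤ)) ≤ Finset.inf' (Finset.Icc 1 j) (Finset.nonempty_Icc.mpr hj)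
              (fun k => x (j - k + 1) (k - 1) - x (j - k + 1) k) := by linarith
      rw [Finset.le_inf'_iff] at h'
      have := h' k (Finset.mem_Icc.mpr ⟨hk, hkj⟩)
      linarith
    refine ⟨?_, ?_⟩
    · intro i hi hin
      constructor
      · intro j hj hji
        have h := ha1 (n - j + 1) (i - j + 1) (by omega) (by omega) (by omega) (by omega)
        have e1 : n - (n - j + 1) + 2 = j + 1 := by omega
        have e2 : i - j + 1 - 1 = i - j := by omega
        have e3 : n - (n - j + 1) + 1 = j := by omega
        rw [e1, e3, e2] at h
        exact h
      · have h := ha1 (n - i + 1) 1 (by omega) (by omega) le_rfl (by omega)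
        have e1 : n - (n - i + 1) + 2 = i + 1 := by omega
        have e3 : n - (n - i + 1) + 1 = i := by omega
        rw [e1, e3] at h
        simpa [hx0] using h
    · intro j i hj hji hin
      have h := ha2 i (i - j + 1) (by omega) hin (by omega) (by omega)
      have e1 : i - (i - j + 1) + 1 = j := by omega
      have e2 : i - j + 1 - 1 = i - j := by omega
      rw [e1, e2] at h
      exact h
  · intro hb
    intro j hj hjn
    constructor
    · rw [Finset.le_inf'_iff]
      intro k hk
      rw [Finset.mem_Icc] at hk
      rcases Nat.eq_or_lt_of_le hk.1 with h1 | h1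
      · have h := (hb.1 (n - j + 1) (by omega) (by omega)).2
        rw [← h1]
        simp [hx0]
        linarith
      · have h := (hb.1 (n - j + k) (by omega) (by omega)).1 (n - j + 1) (by omega) (by omega)
        have e1 : n - j + 1 + 1 = n - j + 2 := by omega
        have e2 : n - j + k - (n - j + 1) = k - 1 := by omega
        have e3 : n - j + k - (n - j + 1) + 1 = k := by omega
        rw [e1, e3, e2] at h
        linarith
    · have h' : (-(lam j : ℤ)) ≤ Finset.inf' (Finset.Icc 1 j) (Finset.nonempty_Icc.mpr hj)
              (fun k => x (j - k + 1) (k - 1) - x (j - k + 1) k) := by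
        rw [Finset.le_inf'_iff]
        intro k hk
        rw [Finset.mem_Icc] at hk
        have h := hb.2 (j - k + 1) j (by omega) (by omega) hjn
        have e1 : j - (j - k + 1) + 1 = k := by omega
        have e2 : j - (j - k + 1) = k - 1 := by omega
        rw [e1, e2] at h
        linarith
      linarith
end

section
/- Let (i_1, …, i_N) be any sequence in {1, …, n}, c_1, …, c_N nonzero complex numbers, t = diag(t_1, …, t_{n+1}) ∈ SL_{n+1}(ℂ), and set g = t·𝐲_{i_1}(c_1)⋯𝐲_{i_N}(c_N). Then g is lower triangular and for every 1 ≤ i ≤ n: (i) g_{i,i} = g_{i+1,i+1} · (t_i/t_{i+1}) · ∏_{k=1}^{N} c_k^{−a_{i_k,i}} (so the geometric crystal function γ_i(g) = g_{i,i}/g_{i+1,i+1} equals α_i(t)·∏_k c_k^{−a_{i_k,i}}); and (ii) g_{i+1,i} = g_{i+1,i+1} · Σ_{1 ≤ m ≤ N, i_m = i} ( c_m · ∏_{k=m+1}^{N} c_k^{a_{i_k,i}} )^{−1} (so, when this sum is nonzero, the geometric crystal function ε_i(g) = g_{i+1,i+1}/g_{i+1,i} equals ( Σ_{m: i_m=i}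 1/( c_m c_{m+1}^{a_{i_{m+1},i}} ⋯ c_N^{a_{i_N,i}} ) )^{−1} ). -/
open Matrix

/-- The type `A_n` Cartan matrix (1-based indices): `a_{ii} = 2`, `a_{ij} = −1` if
`|i−j| = 1`, and `a_{ij} = 0` otherwise. -/
def cartanA (i j : ℕ) : ℤ := if i = j then 2 else if i + 1 = j ∨ j + 1 = i then -1 else 0

namespace Stmt11Aux

variable {n : ℕ}

def IsLT (M : Matrix (Fin (n+1)) (Fin (n+1)) ℂ) : Prop := ∀ a b, a < b → M a b = 0

lemma mul_IsLT {A B : Matrix (Fin (n+1)) (Fin (n+1)) ℂ} (hA : IsLT A) (hB : IsLT B) :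
    IsLT (A * B) := by
  intro a b hab
  rw [Matrix.mul_apply]
  apply Finset.sum_eq_zero
  intro j _
  rcases lt_or_ge a j with h | h
  · rw [hA a j h, zero_mul]
  · rw [hB j b (lt_of_le_of_lt h hab), mul_zero]

lemma mul_diag {A B : Matrix (Fin (n+1)) (Fin (n+1)) ℂ} (hA : IsLT A) (hB : IsLT B)
    (a : Fin (n+1)) : (A * B) a a = A a a * B a a := by
  rw [Matrix.mul_apply]
  apply Finset.sum_eq_single_of_mem a (Finset.mem_univ a)
  intro j _ hj
  rcases hj.lt_or_gt with h | h
  · rw [hB j a h, mul_zero]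
  · rw [hA a j h, zero_mul]

lemma mul_sub {A B : Matrix (Fin (n+1)) (Fin (n+1)) ℂ} (hA : IsLT A) (hB : IsLT B)
    (i : Fin n) : (A * B) i.succ i.castSucc
      = A i.succ i.succ * B i.succ i.castSucc
        + A i.succ i.castSucc * B i.castSucc i.castSucc := by
  rw [Matrix.mul_apply]
  rw [Finset.sum_eq_add_of_mem i.succ i.castSucc (Finset.mem_univ _) (Finset.mem_univ _)
    (Fin.castSucc_lt_succ (i := i)).ne']
  intro j _ hj
  rcases lt_or_ge i.succ j with h | h
  · rw [hA _ _ h, zero_mul]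
  · have h2 : j < i.castSucc := by
      rcases lt_or_ge j i.castSucc with h' | h'
      · exact h'
      · exfalso
        have h1 : (i : ℕ) ≤ (j : ℕ) := h'
        have h2 : (j : ℕ) ≤ (i : ℕ) + 1 := h
        have hne1 : (j : ℕ) ≠ (i : ℕ) := fun he => hj.2 (Fin.ext (by simpa using he))
        have hne2 : (j : ℕ) ≠ (i : ℕ) + 1 := fun he => hj.1 (Fin.ext (by simpa using he))
        omega
    rw [hB _ _ h2, mul_zero]

lemma Iio_succ_eq {N : ℕ} (m : Fin N) :
    Finset.Iio m.succ = insert (0 : Fin (N+1)) ((Finset.Iio m).map (Fin.succEmb N)) := by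
  ext a
  simp only [Finset.mem_Iio, Finset.mem_insert, Finset.mem_map, Fin.coe_succEmb]
  constructor
  · intro h
    rcases Fin.eq_zero_or_eq_succ a with rfl | ⟨b, rfl⟩
    · exact Or.inl rfl
    · exact Or.inr ⟨b, Fin.succ_lt_succ_iff.mp h, rfl⟩
  · rintro (rfl | ⟨b, hb, rfl⟩)
    · exact Fin.succ_pos m
    · exact Fin.succ_lt_succ_iff.mpr hb

lemma prod_Iio_succ {N : ℕ} (m : Fin N) (v : Fin (N+1) → ℂ) :
    ∏ j ∈ Finset.Iio m.succ, v j = v 0 * ∏ j ∈ Finset.Iio m, v j.succ := by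
  rw [Iio_succ_eq, Finset.prod_insert, Finset.prod_map]
  · rfl
  · simp [Fin.succ_ne_zero, eq_comm]

lemma prod_Iio_zero {N : ℕ} (v : Fin (N+1) → ℂ) :
    ∏ j ∈ Finset.Iio (0 : Fin (N+1)), v j = 1 :=
  Finset.prod_eq_one fun x hx => absurd (Finset.mem_Iio.mp hx) (Fin.not_lt_zero x)

lemma master {N : ℕ} (M : Fin N → Matrix (Fin (n+1)) (Fin (n+1)) ℂ)
    (hM : ∀ k, IsLT (M k)) :
    IsLT (List.ofFn M).prod ∧
    (∀ a, (List.ofFn M).prod a a = ∏ k, M k a a) ∧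
    (∀ i : Fin n, (List.ofFn M).prod i.succ i.castSucc
      = ∑ m : Fin N, (∏ k ∈ Finset.Iio m, M k i.succ i.succ) * M m i.succ i.castSucc *
          ∏ k ∈ Finset.Ioi m, M k i.castSucc i.castSucc) := by
  induction N with
  | zero =>
    refine ⟨?_, ?_, ?_⟩
    · intro a b hab
      simp [Matrix.one_apply, hab.ne]
    · intro a; simp
    · intro i
      simp [Matrix.one_apply, (Fin.castSucc_lt_succ (i := i)).ne']
  | succ N IH =>
    obtain ⟨h1, h2, h3⟩ := IH (fun k => M k.succ) (fun k => hM k.succ)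
    rw [List.ofFn_succ, List.prod_cons]
    refine ⟨mul_IsLT (hM 0) h1, ?_, ?_⟩
    · intro a
      rw [mul_diag (hM 0) h1, h2, Fin.prod_univ_succ]
    · intro i
      rw [mul_sub (hM 0) h1, h3 i, h2, Fin.sum_univ_succ]
      rw [Finset.mul_sum]
      rw [prod_Iio_zero, Fin.prod_Ioi_zero, add_comm]
      congr 1
      · ring
      · apply Finset.sum_congr rfl
        intro m _
        rw [prod_Iio_succ, Fin.prod_Ioi_succ]
        ring

lemma Yb_apply (j : ℕ) (c : ℂ) (a b : Fin (n+1)) :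
    Yb n j c a b = ((if a = b then 1 else 0) + (if (a : ℕ) = j ∧ (b : ℕ) + 1 = j then c else 0))
      * (if (b : ℕ) + 1 = j then c⁻¹ else if (b : ℕ) = j then c else 1) := by
  simp only [Yb, ym, alco, Em, Matrix.mul_diagonal, Matrix.add_apply, Matrix.smul_apply,
    Matrix.one_apply, Matrix.of_apply, smul_eq_mul, mul_ite, mul_one, mul_zero, inv_inv,
    Nat.add_right_cancel_iff]

lemma Yb_isLT (j : ℕ) (c : ℂ) : IsLT (Yb n j c) := by
  intro a b hab
  rw [Yb_apply]
  have h1 : ¬(a = b) := hab.ne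
  have h2 : ¬((a : ℕ) = j ∧ (b : ℕ) + 1 = j) := by
    rintro ⟨rfl, h⟩
    have : (a : ℕ) < (b : ℕ) := hab
    omega
  simp [h1, h2]

lemma Yb_diag (j : ℕ) (c : ℂ) (a : Fin (n+1)) :
    Yb n j c a a = if (a : ℕ) + 1 = j then c⁻¹ else if (a : ℕ) = j then c else 1 := by
  rw [Yb_apply]
  have h2 : ¬((a : ℕ) = j ∧ (a : ℕ) + 1 = j) := by omega
  simp [h2]

lemma Yb_sub (j : ℕ) (c : ℂ) (hc : c ≠ 0) (i : Fin n) :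
    Yb n j c i.succ i.castSucc = if j = (i : ℕ) + 1 then 1 else 0 := by
  rw [Yb_apply]
  have hne : ¬(i.succ = i.castSucc) := (Fin.castSucc_lt_succ (i := i)).ne'
  have hs : (i.succ : ℕ) = (i : ℕ) + 1 := rfl
  have hcs : (i.castSucc : ℕ) = (i : ℕ) := rfl
  by_cases h : j = (i : ℕ) + 1
  · simp [hne, hs, hcs, h, hc]
  · have h2 : ¬((i : ℕ) + 1 = j ∧ (i : ℕ) + 1 = j) := by omega
    have h3 : ¬((i : ℕ) + 1 = j) := by omega
    simp [hne, hs, hcs, h, h2, h3]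

lemma Yb_diag_ratio (j : ℕ) (c : ℂ) (hc : c ≠ 0) (i : Fin n) :
    Yb n j c i.castSucc i.castSucc
      = Yb n j c i.succ i.succ * c ^ (-(cartanA j ((i : ℕ) + 1))) := by
  rw [Yb_diag, Yb_diag]
  have hs : (i.succ : ℕ) = (i : ℕ) + 1 := rfl
  have hcs : (i.castSucc : ℕ) = (i : ℕ) := rfl
  rw [hs, hcs]
  unfold cartanA
  have h2 : c ^ (-(2:ℤ)) = (c * c)⁻¹ := by
    rw [show (-(2:ℤ)) = -1 + -1 by norm_num, zpow_add₀ hc]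
    simp [_root_.zpow_neg, mul_inv]
  split_ifs with a1 a2 a3 a4 a5 a6 a7 a8 a9 a10 a11 a12 <;>
    first
      | omega
      | (simp only [h2, neg_neg, zpow_one, neg_zero, zpow_zero]; field_simp)

lemma prod_split {N : ℕ} (m : Fin N) (f : Fin N → ℂ) :
    (∏ k ∈ Finset.Iio m, f k) * (∏ k ∈ Finset.Ioi m, f k) * f m = ∏ k, f k := by
  have hd : Disjoint (Finset.Iio m) (Finset.Ioi m) := by
    rw [Finset.disjoint_left]
    intro a ha hb
    exact absurd (Finset.mem_Iio.mp ha) (not_lt.mpr (le_of_lt (Finset.mem_Ioi.mp hb)))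
  have hu : Finset.Iio m ∪ Finset.Ioi m = ({m} : Finset (Fin N))ᶜ := by
    ext a
    simp only [Finset.mem_union, Finset.mem_Iio, Finset.mem_Ioi, Finset.mem_compl,
      Finset.mem_singleton]
    exact ne_iff_lt_or_gt.symm
  rw [← Finset.prod_union hd, hu, ← Finset.prod_singleton (f := f) (a := m),
    Finset.prod_compl_mul_prod]

end Stmt11Aux

open Stmt11Aux

/-- For `g = t·𝐲_{i_1}(c_1)⋯𝐲_{i_N}(c_N)` with `t = diag(t_1,…,t_{n+1}) ∈ SL_{n+1}(ℂ)`: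
`g` is lower triangular, `g_{i,i} = g_{i+1,i+1}·(t_i/t_{i+1})·∏_k c_k^{−a_{i_k,i}}`
(so `γ_i(g) = α_i(t)·∏_k c_k^{−a_{i_k,i}}`), and
`g_{i+1,i} = g_{i+1,i+1}·Σ_{m : i_m = i} (c_m·∏_{k>m} c_k^{a_{i_k,i}})⁻¹`
(so `ε_i(g)` is the reciprocal of that sum when it is nonzero). -/
theorem stmt11 (n N : ℕ) (hn : 1 ≤ n) (ik : Fin N → ℕ)
    (hik : ∀ k, 1 ≤ ik k ∧ ik k ≤ n) (c : Fin N → ℂ) (hc : ∀ k, c k ≠ 0)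
    (td : Fin (n+1) → ℂ) (hdet : (Matrix.diagonal td).det = 1)
    (g : Matrix (Fin (n+1)) (Fin (n+1)) ℂ)
    (hg : g = Matrix.diagonal td * (List.ofFn fun k => Yb n (ik k) (c k)).prod) :
    (∀ a b : Fin (n+1), a < b → g a b = 0) ∧
    (∀ i : Fin n,
      g i.castSucc i.castSucc
        = g i.succ i.succ * (td i.castSucc / td i.succ) *
            ∏ k : Fin N, c k ^ (-(cartanA (ik k) ((i : ℕ) + 1)))) ∧
    (∀ i : Fin n,
      g i.succ i.castSucc
        = g i.succ i.succ *
            ∑ m ∈ Finset.univ.filter (fun m : Fin N => ik m = (i : ℕ) + 1),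
              (c m * ∏ l ∈ Finset.Ioi m, c l ^ cartanA (ik l) ((i : ℕ) + 1))⁻¹) := by
  subst hg
  have hdLT : IsLT (Matrix.diagonal td) := fun a b hab => Matrix.diagonal_apply_ne _ hab.ne
  obtain ⟨hP1, hP2, hP3⟩ := master (fun k => Yb n (ik k) (c k)) (fun k => Yb_isLT _ _)
  have hts : ∀ a, td a ≠ 0 := by
    intro a ha
    rw [Matrix.det_diagonal] at hdet
    have h0 := Finset.prod_eq_zero (Finset.mem_univ a) ha
    rw [hdet] at h0
    exact one_ne_zero h0
  have hgaa : ∀ a, (Matrix.diagonal td * (List.ofFn fun k => Yb n (ik k) (c k)).prod) a a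
      = td a * ∏ k, Yb n (ik k) (c k) a a := by
    intro a
    rw [mul_diag hdLT hP1, hP2, Matrix.diagonal_apply_eq]
  refine ⟨mul_IsLT hdLT hP1, ?_, ?_⟩
  · intro i
    rw [hgaa, hgaa]
    have hprod : (∏ k, Yb n (ik k) (c k) i.castSucc i.castSucc)
        = (∏ k, Yb n (ik k) (c k) i.succ i.succ)
          * ∏ k, c k ^ (-(cartanA (ik k) ((i : ℕ) + 1))) := by
      rw [← Finset.prod_mul_distrib]
      exact Finset.prod_congr rfl fun k _ => Yb_diag_ratio (ik k) (c k) (hc k) i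
    rw [hprod]
    have key : td i.succ * (∏ k, Yb n (ik k) (c k) i.succ i.succ) * (td i.castSucc / td i.succ)
          * ∏ k, c k ^ (-(cartanA (ik k) ((i : ℕ) + 1)))
        = (td i.succ * (td i.succ)⁻¹) * (td i.castSucc *
            ((∏ k, Yb n (ik k) (c k) i.succ i.succ)
              * ∏ k, c k ^ (-(cartanA (ik k) ((i : ℕ) + 1))))) := by
      rw [div_eq_mul_inv]; ring
    rw [key, mul_inv_cancel₀ (hts i.succ), one_mul]
  · intro i
    rw [Matrix.diagonal_mul, hP3, hgaa]
    have hsum : (∑ m : Fin N,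
        (∏ k ∈ Finset.Iio m, Yb n (ik k) (c k) i.succ i.succ)
          * Yb n (ik m) (c m) i.succ i.castSucc
          * ∏ k ∈ Finset.Ioi m, Yb n (ik k) (c k) i.castSucc i.castSucc)
        = ∑ m ∈ Finset.univ.filter (fun m : Fin N => ik m = (i : ℕ) + 1),
            (∏ k, Yb n (ik k) (c k) i.succ i.succ)
              * (c m * ∏ l ∈ Finset.Ioi m, c l ^ cartanA (ik l) ((i : ℕ) + 1))⁻¹ := by
      rw [Finset.sum_filter]
      apply Finset.sum_congr rfl
      intro m _
      rw [Yb_sub (ik m) (c m) (hc m) i]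
      by_cases hm : ik m = (i : ℕ) + 1
      · rw [if_pos hm, if_pos hm, mul_one]
        have hIoi : (∏ k ∈ Finset.Ioi m, Yb n (ik k) (c k) i.castSucc i.castSucc)
            = (∏ k ∈ Finset.Ioi m, Yb n (ik k) (c k) i.succ i.succ)
              * ∏ k ∈ Finset.Ioi m, c k ^ (-(cartanA (ik k) ((i : ℕ) + 1))) := by
          rw [← Finset.prod_mul_distrib]
          exact Finset.prod_congr rfl fun k _ => Yb_diag_ratio (ik k) (c k) (hc k) i
        have hDm : Yb n (ik m) (c m) i.succ i.succ = c m := by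
          rw [Yb_diag]
          have hs : (i.succ : ℕ) = (i : ℕ) + 1 := rfl
          rw [hs, if_neg (by omega), if_pos (by omega)]
        have hsplit := prod_split m (fun k => Yb n (ik k) (c k) i.succ i.succ)
        rw [hDm] at hsplit
        have hinv : (∏ k ∈ Finset.Ioi m, c k ^ (-(cartanA (ik k) ((i : ℕ) + 1))))
            = (∏ l ∈ Finset.Ioi m, c l ^ cartanA (ik l) ((i : ℕ) + 1))⁻¹ := by
          rw [← Finset.prod_inv_distrib]
          exact Finset.prod_congr rfl fun k _ => _root_.zpow_neg (c k) _
        rw [hIoi, hinv, ← hsplit, mul_inv]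
        have hX : (∏ l ∈ Finset.Ioi m, c l ^ cartanA (ik l) ((i : ℕ) + 1)) ≠ 0 :=
          Finset.prod_ne_zero_iff.mpr fun k _ => zpow_ne_zero _ (hc k)
        field_simp [hc m]
      · rw [if_neg hm, if_neg hm, mul_zero, zero_mul]
    rw [hsum, ← Finset.mul_sum, ← mul_assoc]
end

section
/- Let (i_1, …, i_N) be any sequence in {1, …, n}, c_1, …, c_N nonzero complex numbers, t ∈ SL_{n+1}(ℂ) diagonal, and g = t·𝐲_{i_1}(c_1)⋯𝐲_{i_N}(c_N). Fix 1 ≤ i ≤ n with g_{i+1,i} ≠ 0, and set ε_i(g) = g_{i+1,i+1}/g_{i+1,i} and φ_i(g) = g_{i,i}/g_{i+1,i}. For m = 1, …, N let C_m := c_1^{a_{i_1,i}} c_2^{a_{i_2,i}} ⋯ c_{m−1}^{a_{i_{m−1},i}} · c_m. Then for every nonzero complex c such that for each 1 ≤ j ≤ N the quantity D_j := Σ_{1≤m≤j, i_m=i} c·C_m + Σ_{j<m≤N, i_m=i} C_m is nonzero, one has the identity x_i( (c−1)·φ_i(g) ) · g · x_i( (c^{−1}−1)·ε_i(g) ) =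 t·𝐲_{i_1}(c'_1)⋯𝐲_{i_N}(c'_N), where c'_j = c_j · ( Σ_{1≤m<j, i_m=i} c·C_m + Σ_{j≤m≤N, i_m=i} C_m ) / D_j. -/
open Matrix

namespace BKaux
variable {n : ℕ}

lemma std_apply (u v a b : Fin (n+1)) (x : ℂ) :
    Matrix.single u v x a b = if a = u ∧ b = v then x else 0 := by
  simp only [Matrix.single, Matrix.of_apply]
  by_cases h1 : a = u
  · by_cases h2 : b = v
    · subst h1; subst h2; simp
    · rw [if_neg (fun h => h2 h.2.symm), if_neg (fun h => h2 h.2)]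
  · rw [if_neg (fun h => h1 h.1.symm), if_neg (fun h => h1 h.1)]

lemma Em_eq (u v : Fin (n+1)) : Em n ((u:ℕ)+1) ((v:ℕ)+1) = Matrix.single u v (1:ℂ) := by
  ext a b
  rw [std_apply]
  simp only [Em, Matrix.of_apply]
  by_cases h1 : a = u <;> by_cases h2 : b = v <;>
    simp_all [Fin.ext_iff]

lemma std_mul_diag (u v : Fin (n+1)) (x : ℂ) (d : Fin (n+1) → ℂ) :
    Matrix.single u v x * diagonal d = Matrix.single u v (x * d v) := by
  ext a b
  rw [Matrix.mul_diagonal, std_apply, std_apply]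
  by_cases h1 : a = u <;> by_cases h2 : b = v <;> simp [h1, h2]

lemma diag_mul_std (u v : Fin (n+1)) (x : ℂ) (d : Fin (n+1) → ℂ) :
    diagonal d * Matrix.single u v x = Matrix.single u v (d u * x) := by
  ext a b
  rw [Matrix.diagonal_mul, std_apply, std_apply]
  by_cases h1 : a = u <;> by_cases h2 : b = v <;> simp [h1, h2]

lemma mul_std_apply (A : Matrix (Fin (n+1)) (Fin (n+1)) ℂ) (u v : Fin (n+1)) (x : ℂ)
    (a b : Fin (n+1)) :
    (A * Matrix.single u v x) a b = if b = v then A a u * x else 0 := by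
  rw [Matrix.mul_apply]
  by_cases h : b = v
  · subst h
    rw [if_pos rfl, Finset.sum_eq_single u]
    · rw [std_apply]; simp
    · intro r _ hr; rw [std_apply]; simp [hr]
    · simp
  · rw [if_neg h, Finset.sum_eq_zero]
    intro r _
    rw [std_apply, if_neg (by tauto), mul_zero]

/-- structured form of `xm`. -/
lemma xm_eq (i : Fin n) (A : ℂ) :
    xm n ((i:ℕ)+1) A = 1 + A • Matrix.single i.castSucc i.succ (1:ℂ) := by
  rw [xm, show (i:ℕ)+1 = ((i.castSucc : Fin (n+1)):ℕ)+1 by simp,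
    show ((i.castSucc : Fin (n+1)):ℕ)+1+1 = ((i.succ : Fin (n+1)):ℕ)+1 by simp, Em_eq]

noncomputable def dgf (j : Fin n) (e : ℂ) : Fin (n+1) → ℂ :=
  fun r => if r = j.castSucc then e⁻¹ else if r = j.succ then e else 1

/-- structured form of `Yb`. -/
lemma Yb_eq (j : Fin n) (e : ℂ) (he : e ≠ 0) :
    Yb n ((j:ℕ)+1) e = diagonal (dgf j e) + Matrix.single j.succ j.castSucc (1:ℂ) := by
  have hEm : Em n ((j:ℕ)+1+1) ((j:ℕ)+1) = Matrix.single j.succ j.castSucc (1:ℂ) := by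
    rw [show (j:ℕ)+1 = ((j.castSucc : Fin (n+1)):ℕ)+1 by simp,
      show ((j.castSucc : Fin (n+1)):ℕ)+1+1 = ((j.succ : Fin (n+1)):ℕ)+1 by simp, Em_eq]
  have halco : alco n ((j:ℕ)+1) e⁻¹ = diagonal (dgf j e) := by
    unfold alco
    apply congrArg diagonal
    funext r
    by_cases hr1 : (r:ℕ) = (j:ℕ) <;> by_cases hr2 : (r:ℕ) = (j:ℕ)+1 <;>
      simp_all [dgf, Fin.ext_iff] <;> omega
  rw [Yb, ym, hEm, halco, add_mul, one_mul, smul_mul_assoc, std_mul_diag]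
  congr 1
  have hv : dgf j e j.castSucc = e⁻¹ := by simp [dgf]
  rw [hv, one_mul, smul_single, smul_eq_mul, mul_inv_cancel₀ he]

end BKaux

namespace BKaux2
open BKaux
variable {n : ℕ}

lemma succ_ne_castSucc (i : Fin n) : (i.succ : Fin (n+1)) ≠ i.castSucc := by
  simp [Fin.ext_iff]

lemma xm_zero (i : Fin n) : xm n ((i:ℕ)+1) 0 = 1 := by
  simp [xm]

lemma xm_mul_xm (i : Fin n) (A B : ℂ) :
    xm n ((i:ℕ)+1) A * xm n ((i:ℕ)+1) B = xm n ((i:ℕ)+1) (A + B) := by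
  rw [xm_eq, xm_eq, xm_eq]
  have hE : Matrix.single i.castSucc i.succ (1:ℂ) * Matrix.single i.castSucc i.succ (1:ℂ)
      = 0 := Matrix.single_mul_single_of_ne (h := succ_ne_castSucc i) ..
  simp only [add_mul, mul_add, one_mul, mul_one, smul_mul_assoc, mul_smul_comm, smul_smul,
    hE, smul_zero, add_zero, add_smul]
  abel

lemma xm_mul_struct (i : Fin n) (A : ℂ) (D : Fin (n+1) → ℂ) (u v : Fin (n+1)) :
    xm n ((i:ℕ)+1) A * (diagonal D + Matrix.single u v 1) =
      diagonal D + Matrix.single u v 1 + Matrix.single i.castSucc i.succ (A * D i.succ)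
      + (if i.succ = u then Matrix.single i.castSucc v A else 0) := by
  rw [xm_eq, add_mul, one_mul, smul_mul_assoc, mul_add, std_mul_diag]
  have h2 : Matrix.single i.castSucc i.succ (1:ℂ) * Matrix.single u v 1
      = if i.succ = u then Matrix.single i.castSucc v 1 else 0 := by
    by_cases h : i.succ = u
    · subst h; rw [if_pos rfl, Matrix.single_mul_single_same, one_mul]
    · rw [if_neg h, Matrix.single_mul_single_of_ne (h := h)]
  rw [h2, smul_add, smul_single, smul_ite, smul_single, smul_zero]
  simp only [smul_eq_mul, mul_one, one_mul]
  abel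

lemma struct_mul_xm (i : Fin n) (A : ℂ) (D : Fin (n+1) → ℂ) (u v : Fin (n+1)) :
    (diagonal D + Matrix.single u v 1) * xm n ((i:ℕ)+1) A =
      diagonal D + Matrix.single u v 1 + Matrix.single i.castSucc i.succ (D i.castSucc * A)
      + (if v = i.castSucc then Matrix.single u i.succ A else 0) := by
  rw [xm_eq, mul_add, mul_one, mul_smul_comm, add_mul, diag_mul_std]
  have h2 : Matrix.single u v (1:ℂ) * Matrix.single i.castSucc i.succ 1
      = if v = i.castSucc then Matrix.single u i.succ 1 else 0 := by
    by_cases h : v = i.castSucc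
    · subst h; rw [if_pos rfl, Matrix.single_mul_single_same, one_mul]
    · rw [if_neg h, Matrix.single_mul_single_of_ne (h := h)]
  rw [h2, smul_add, smul_single, smul_ite, smul_single, smul_zero]
  simp only [smul_eq_mul, mul_one]
  rw [mul_comm A (D i.castSucc)]
  abel

lemma dgf_ratio (i j : Fin n) (e : ℂ) (he : e ≠ 0) :
    dgf j e i.succ = dgf j e i.castSucc * e ^ cartanA ((j:ℕ)+1) ((i:ℕ)+1) := by
  unfold dgf cartanA
  have h1 : (i.succ : Fin (n+1)) = j.castSucc ↔ (i:ℕ)+1 = (j:ℕ) := by simp [Fin.ext_iff]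
  have h2 : (i.succ : Fin (n+1)) = j.succ ↔ (i:ℕ) = (j:ℕ) := by simp [Fin.ext_iff]
  have h3 : (i.castSucc : Fin (n+1)) = j.castSucc ↔ (i:ℕ) = (j:ℕ) := by simp [Fin.ext_iff]
  have h4 : (i.castSucc : Fin (n+1)) = j.succ ↔ (i:ℕ) = (j:ℕ)+1 := by simp [Fin.ext_iff]
  simp only [h1, h2, h3, h4]
  have hm1 : e ^ (-1 : ℤ) = e⁻¹ := zpow_neg_one e
  have hm2 : e ^ (2 : ℤ) = e * e := by
    rw [show (2:ℤ) = 1+1 by norm_num, zpow_add₀ he, zpow_one]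
  split_ifs <;> solve
    | omega
    | (rw [hm2]; field_simp)
    | (rw [hm1, one_mul])
    | (rw [hm1, mul_inv_cancel₀ he])
    | (simp only [zpow_zero, mul_one, one_mul])

lemma step_ne (i j : Fin n) (hij : j ≠ i) (A e : ℂ) (he : e ≠ 0) :
    xm n ((i:ℕ)+1) A * Yb n ((j:ℕ)+1) e
      = Yb n ((j:ℕ)+1) e * xm n ((i:ℕ)+1) (A * e ^ cartanA ((j:ℕ)+1) ((i:ℕ)+1)) := by
  rw [Yb_eq j e he, xm_mul_struct, struct_mul_xm]
  have hij' : (j:ℕ) ≠ (i:ℕ) := fun h => hij (Fin.ext h)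
  have hne1 : (i.succ : Fin (n+1)) ≠ j.succ := by
    simp only [Ne, Fin.ext_iff, Fin.val_succ]; omega
  have hne2 : (j.castSucc : Fin (n+1)) ≠ i.castSucc := by
    simp only [Ne, Fin.ext_iff, Fin.coe_castSucc]; omega
  rw [if_neg hne1, if_neg hne2, add_zero, add_zero]
  congr 1
  rw [← mul_assoc, mul_comm (dgf j e i.castSucc) A, mul_assoc]
  rw [← dgf_ratio i j e he]

lemma std_diag (x : Fin (n+1)) (c : ℂ) :
    Matrix.single x x c = diagonal (Pi.single x c) := by
  ext a b
  rw [std_apply, Matrix.diagonal_apply]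
  by_cases h1 : a = x <;> by_cases h2 : b = x
  · subst h1; subst h2; simp
  · subst h1; rw [if_neg (by tauto), if_neg (fun h : a = b => h2 h.symm)]
  · subst h2; rw [if_neg (by tauto), if_neg (fun h : a = b => h1 h)]
  · rw [if_neg (by tauto)]
    by_cases h : a = b
    · subst h; simp [Pi.single_apply, h1]
    · rw [if_neg h]

lemma step_eq (i : Fin n) (A e : ℂ) (he : e ≠ 0) (h1 : 1 + A * e ≠ 0) :
    xm n ((i:ℕ)+1) A * Yb n ((i:ℕ)+1) e
      = Yb n ((i:ℕ)+1) (e / (1 + A*e)) * xm n ((i:ℕ)+1) (A * e^2 / (1 + A*e)) := by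
  have he' : e / (1 + A*e) ≠ 0 := div_ne_zero he h1
  rw [Yb_eq i e he, Yb_eq i _ he', xm_mul_struct, struct_mul_xm, if_pos rfl, if_pos rfl]
  have d1 : dgf i e i.succ = e := by
    simp [dgf, (succ_ne_castSucc i)]
  have d2 : dgf i (e / (1 + A*e)) i.castSucc = (1 + A*e) / e := by
    simp [dgf, inv_div]
  rw [d1, d2]
  have key1 : Matrix.single i.castSucc i.succ (A * e)
      = Matrix.single i.castSucc i.succ ((1 + A * e) / e * (A * e ^ 2 / (1 + A * e))) := by
    apply congrArg
    field_simp
  have key2 : diagonal (dgf i e) + Matrix.single i.castSucc i.castSucc A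
      = diagonal (dgf i (e / (1 + A*e)))
        + Matrix.single i.succ i.succ (A * e ^ 2 / (1 + A * e)) := by
    rw [std_diag, std_diag, Matrix.diagonal_add, Matrix.diagonal_add]
    apply congrArg diagonal
    funext r
    by_cases hr1 : r = i.castSucc
    · subst hr1
      rw [Pi.single_eq_same, Pi.single_eq_of_ne (Ne.symm (succ_ne_castSucc i))]
      simp only [dgf, if_pos rfl, if_true]
      rw [inv_div]
      field_simp
      ring
    · by_cases hr2 : r = i.succ
      · subst hr2
        rw [Pi.single_eq_same, Pi.single_eq_of_ne (succ_ne_castSucc i)]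
        simp only [dgf, if_neg (succ_ne_castSucc i), if_pos rfl, if_true]
        rw [← add_div, eq_div_iff h1]
        ring
      · rw [Pi.single_eq_of_ne hr1, Pi.single_eq_of_ne hr2]
        simp only [dgf, if_neg hr1, if_neg hr2]
  calc diagonal (dgf i e) + Matrix.single i.succ i.castSucc 1
        + Matrix.single i.castSucc i.succ (A * e) + Matrix.single i.castSucc i.castSucc A
      = (diagonal (dgf i e) + Matrix.single i.castSucc i.castSucc A)
        + Matrix.single i.succ i.castSucc 1
        + Matrix.single i.castSucc i.succ ((1 + A * e) / e * (A * e ^ 2 / (1 + A * e))) := by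
        rw [← key1]; abel
    _ = diagonal (dgf i (e / (1 + A * e))) + Matrix.single i.succ i.castSucc 1
        + Matrix.single i.castSucc i.succ ((1 + A * e) / e * (A * e ^ 2 / (1 + A * e)))
        + Matrix.single i.succ i.succ (A * e ^ 2 / (1 + A * e)) := by
        rw [key2]; abel

lemma step_diag (i : Fin n) (A : ℂ) (td : Fin (n+1) → ℂ) (ha : td i.castSucc ≠ 0) :
    xm n ((i:ℕ)+1) A * diagonal td
      = diagonal td * xm n ((i:ℕ)+1) (A * td i.succ / td i.castSucc) := by
  rw [xm_eq, xm_eq, add_mul, one_mul, mul_add, mul_one, smul_mul_assoc, mul_smul_comm,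
    std_mul_diag, diag_mul_std, smul_single, smul_single]
  congr 2
  simp only [smul_eq_mul, mul_one, one_mul]
  field_simp

end BKaux2

namespace BKfin
variable {N : ℕ}

lemma sum_lt_succ {k : ℕ} (hk : k < N) (P : Fin N → Prop) [DecidablePred P] (f : Fin N → ℂ) :
    ∑ m ∈ Finset.univ.filter (fun m : Fin N => (m:ℕ) < k + 1 ∧ P m), f m
      = (∑ m ∈ Finset.univ.filter (fun m : Fin N => (m:ℕ) < k ∧ P m), f m)
        + if P ⟨k, hk⟩ then f ⟨k, hk⟩ else 0 := by
  by_cases hP : P ⟨k, hk⟩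
  · rw [if_pos hP]
    have hset : Finset.univ.filter (fun m : Fin N => (m:ℕ) < k + 1 ∧ P m)
        = insert ⟨k, hk⟩ (Finset.univ.filter (fun m : Fin N => (m:ℕ) < k ∧ P m)) := by
      ext m
      simp only [Finset.mem_filter, Finset.mem_univ, true_and, Finset.mem_insert, Fin.ext_iff]
      constructor
      · rintro ⟨h1, h2⟩
        by_cases hm : (m:ℕ) = k
        · exact Or.inl hm
        · exact Or.inr ⟨by omega, h2⟩
      · rintro (h | ⟨h1, h2⟩)
        · have : m = ⟨k, hk⟩ := Fin.ext h
          subst this; exact ⟨by omega, hP⟩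
        · exact ⟨by omega, h2⟩
    rw [hset, Finset.sum_insert (by simp)]
    ring
  · rw [if_neg hP, add_zero]
    apply Finset.sum_congr _ (fun _ _ => rfl)
    ext m
    simp only [Finset.mem_filter, Finset.mem_univ, true_and]
    constructor
    · rintro ⟨h1, h2⟩
      refine ⟨?_, h2⟩
      by_cases hm : (m:ℕ) = k
      · exact absurd h2 (by have : m = ⟨k, hk⟩ := Fin.ext hm; rw [this]; exact hP)
      · omega
    · rintro ⟨h1, h2⟩; exact ⟨by omega, h2⟩

lemma sum_ge_succ {k : ℕ} (hk : k < N) (P : Fin N → Prop) [DecidablePred P] (f : Fin N → ℂ) :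
    ∑ m ∈ Finset.univ.filter (fun m : Fin N => k ≤ (m:ℕ) ∧ P m), f m
      = (∑ m ∈ Finset.univ.filter (fun m : Fin N => k + 1 ≤ (m:ℕ) ∧ P m), f m)
        + if P ⟨k, hk⟩ then f ⟨k, hk⟩ else 0 := by
  by_cases hP : P ⟨k, hk⟩
  · rw [if_pos hP]
    have hset : Finset.univ.filter (fun m : Fin N => k ≤ (m:ℕ) ∧ P m)
        = insert ⟨k, hk⟩ (Finset.univ.filter (fun m : Fin N => k + 1 ≤ (m:ℕ) ∧ P m)) := by
      ext m
      simp only [Finset.mem_filter, Finset.mem_univ, true_and, Finset.mem_insert, Fin.ext_iff]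
      constructor
      · rintro ⟨h1, h2⟩
        by_cases hm : (m:ℕ) = k
        · exact Or.inl hm
        · exact Or.inr ⟨by omega, h2⟩
      · rintro (h | ⟨h1, h2⟩)
        · have : m = ⟨k, hk⟩ := Fin.ext h
          subst this; exact ⟨by omega, hP⟩
        · exact ⟨by omega, h2⟩
    rw [hset, Finset.sum_insert (by simp)]
    ring
  · rw [if_neg hP, add_zero]
    apply Finset.sum_congr _ (fun _ _ => rfl)
    ext m
    simp only [Finset.mem_filter, Finset.mem_univ, true_and]
    constructor
    · rintro ⟨h1, h2⟩
      refine ⟨?_, h2⟩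
      by_cases hm : (m:ℕ) = k
      · exact absurd h2 (by have : m = ⟨k, hk⟩ := Fin.ext hm; rw [this]; exact hP)
      · omega
    · rintro ⟨h1, h2⟩; exact ⟨by omega, h2⟩

lemma prod_lt_succ {k : ℕ} (hk : k < N) (f : Fin N → ℂ) :
    ∏ m ∈ Finset.univ.filter (fun m : Fin N => (m:ℕ) < k + 1), f m
      = (∏ m ∈ Finset.univ.filter (fun m : Fin N => (m:ℕ) < k), f m) * f ⟨k, hk⟩ := by
  have hset : Finset.univ.filter (fun m : Fin N => (m:ℕ) < k + 1)
      = insert ⟨k, hk⟩ (Finset.univ.filter (fun m : Fin N => (m:ℕ) < k)) := by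
    ext m
    simp only [Finset.mem_filter, Finset.mem_univ, true_and, Finset.mem_insert, Fin.ext_iff]
    omega
  rw [hset, Finset.prod_insert (by simp)]
  ring

lemma filter_lt_zero (P : Fin N → Prop) [DecidablePred P] :
    Finset.univ.filter (fun m : Fin N => (m:ℕ) < 0 ∧ P m) = ∅ := by
  ext m; simp

lemma filter_ge_zero (P : Fin N → Prop) [DecidablePred P] :
    Finset.univ.filter (fun m : Fin N => 0 ≤ (m:ℕ) ∧ P m)
      = Finset.univ.filter (fun m : Fin N => P m) := by
  ext m; simp

lemma filter_lt_N (P : Fin N → Prop) [DecidablePred P] :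
    Finset.univ.filter (fun m : Fin N => (m:ℕ) < N ∧ P m)
      = Finset.univ.filter (fun m : Fin N => P m) := by
  ext m; simp [m.isLt]

lemma filter_ge_N (P : Fin N → Prop) [DecidablePred P] :
    Finset.univ.filter (fun m : Fin N => N ≤ (m:ℕ) ∧ P m) = ∅ := by
  ext m; simp

end BKfin

namespace BKmach
open BKaux BKaux2 BKfin

noncomputable def DkF (N : ℕ) (ik : Fin N → ℕ) (C : Fin N → ℂ) (cpar : ℂ) (I k : ℕ) : ℂ :=
  (∑ m ∈ Finset.univ.filter (fun m : Fin N => (m:ℕ) < k ∧ ik m = I), cpar * C m)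
  + ∑ m ∈ Finset.univ.filter (fun m : Fin N => k ≤ (m:ℕ) ∧ ik m = I), C m

noncomputable def WkF (N : ℕ) (ik : Fin N → ℕ) (c : Fin N → ℂ) (I k : ℕ) : ℂ :=
  ∏ m ∈ Finset.univ.filter (fun m : Fin N => (m:ℕ) < k), c m ^ cartanA (ik m) I

noncomputable def SkC (N : ℕ) (ik : Fin N → ℕ) (C : Fin N → ℂ) (I : ℕ) : ℂ :=
  ∑ m ∈ Finset.univ.filter (fun m : Fin N => ik m = I), C m

noncomputable def ddcf (r j : ℕ) (e : ℂ) : ℂ :=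
  if j = r then e⁻¹ else if j + 1 = r then e else 1

noncomputable def PdF (N : ℕ) (ik : Fin N → ℕ) (c : Fin N → ℂ) (I k : ℕ) : ℂ :=
  ∏ m ∈ Finset.univ.filter (fun m : Fin N => (m:ℕ) < k), ddcf I (ik m) (c m)

variable {N : ℕ} {ik : Fin N → ℕ} {C : Fin N → ℂ} {c : Fin N → ℂ} {cpar : ℂ} {I : ℕ}

lemma Dk_zero : DkF N ik C cpar I 0 = SkC N ik C I := by
  rw [DkF, SkC, filter_lt_zero, Finset.sum_empty, filter_ge_zero, zero_add]

lemma Dk_N : DkF N ik C cpar I N = cpar * SkC N ik C I := by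
  rw [DkF, SkC, filter_lt_N, filter_ge_N, Finset.sum_empty, add_zero, Finset.mul_sum]

lemma Dk_succ {k : ℕ} (hk : k < N) :
    DkF N ik C cpar I (k+1) = DkF N ik C cpar I k
      + if ik ⟨k, hk⟩ = I then (cpar - 1) * C ⟨k, hk⟩ else 0 := by
  rw [DkF, DkF, sum_lt_succ hk (fun m => ik m = I) (fun m => cpar * C m),
    sum_ge_succ hk (fun m => ik m = I) C]
  split_ifs with h <;> ring

lemma Wk_zero : WkF N ik c I 0 = 1 := by
  rw [WkF]
  have h : Finset.univ.filter (fun m : Fin N => (m:ℕ) < 0) = ∅ := by ext m; simp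
  rw [h, Finset.prod_empty]

lemma Wk_succ {k : ℕ} (hk : k < N) :
    WkF N ik c I (k+1) = WkF N ik c I k * c ⟨k, hk⟩ ^ cartanA (ik ⟨k, hk⟩) I :=
  prod_lt_succ hk _

lemma Pd_zero : PdF N ik c I 0 = 1 := by
  rw [PdF]
  have h : Finset.univ.filter (fun m : Fin N => (m:ℕ) < 0) = ∅ := by ext m; simp
  rw [h, Finset.prod_empty]

lemma Pd_succ {k : ℕ} (hk : k < N) :
    PdF N ik c I (k+1) = PdF N ik c I k * ddcf I (ik ⟨k, hk⟩) (c ⟨k, hk⟩) :=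
  prod_lt_succ hk _

lemma ddcf_ne_zero {r j : ℕ} {e : ℂ} (he : e ≠ 0) : ddcf r j e ≠ 0 := by
  unfold ddcf; split_ifs <;> simp [he]

lemma ddcf_ratio (r j : ℕ) (e : ℂ) (he : e ≠ 0) :
    ddcf (r+1) j e = ddcf r j e * e ^ cartanA j r := by
  unfold ddcf cartanA
  have hm1 : e ^ (-1 : ℤ) = e⁻¹ := zpow_neg_one e
  have hm2 : e ^ (2 : ℤ) = e * e := by
    rw [show (2:ℤ) = 1+1 by norm_num, zpow_add₀ he, zpow_one]
  split_ifs <;> solve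
    | omega
    | (rw [hm2]; field_simp)
    | (rw [hm1, one_mul])
    | (rw [hm1, mul_inv_cancel₀ he])
    | (rw [hm1]; field_simp)
    | (simp only [zpow_zero, mul_one, one_mul])

lemma Pd_ne_zero (hc : ∀ k, c k ≠ 0) {k : ℕ} : PdF N ik c I k ≠ 0 := by
  rw [PdF]
  exact Finset.prod_ne_zero_iff.2 fun m _ => ddcf_ne_zero (hc m)

lemma Pd_ratio (hc : ∀ k, c k ≠ 0) {k : ℕ} :
    PdF N ik c (I+1) k = PdF N ik c I k * WkF N ik c I k := by
  rw [PdF, PdF, WkF, ← Finset.prod_mul_distrib]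
  exact Finset.prod_congr rfl fun m _ => ddcf_ratio I (ik m) (c m) (hc m)

end BKmach

namespace BKent
open BKaux BKaux2 BKfin BKmach

variable {n N : ℕ}

lemma dgf_castSucc (i jF : Fin n) (e : ℂ) :
    dgf jF e i.castSucc = ddcf ((i:ℕ)+1) ((jF:ℕ)+1) e := by
  unfold dgf ddcf
  have h1 : ((i.castSucc : Fin (n+1)) = jF.castSucc) ↔ ((jF:ℕ)+1 = (i:ℕ)+1) := by
    simp [Fin.ext_iff]; omega
  have h2 : ((i.castSucc : Fin (n+1)) = jF.succ) ↔ ((jF:ℕ)+1+1 = (i:ℕ)+1) := by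
    simp [Fin.ext_iff]; omega
  simp only [h1, h2]

lemma dgf_succ (i jF : Fin n) (e : ℂ) :
    dgf jF e i.succ = ddcf ((i:ℕ)+1+1) ((jF:ℕ)+1) e := by
  unfold dgf ddcf
  have h1 : ((i.succ : Fin (n+1)) = jF.castSucc) ↔ ((jF:ℕ)+1 = (i:ℕ)+1+1) := by
    simp [Fin.ext_iff]; omega
  have h2 : ((i.succ : Fin (n+1)) = jF.succ) ↔ ((jF:ℕ)+1+1 = (i:ℕ)+1+1) := by
    simp [Fin.ext_iff]; omega
  simp only [h1, h2]

lemma ENT (ik : Fin N → ℕ) (hik : ∀ k, 1 ≤ ik k ∧ ik k ≤ n) (c : Fin N → ℂ)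
    (hc : ∀ k, c k ≠ 0) (i : Fin n) (C : Fin N → ℂ)
    (hCW : ∀ (k : ℕ) (hk : k < N),
      C ⟨k, hk⟩ = WkF N ik c ((i:ℕ)+1) k * c ⟨k, hk⟩) :
    ∀ k, k ≤ N →
      (∀ a b : Fin (n+1), a < b →
        (((List.ofFn fun m => Yb n (ik m) (c m)).take k).prod) a b = 0)
      ∧ ((((List.ofFn fun m => Yb n (ik m) (c m)).take k).prod) i.castSucc i.castSucc
          = PdF N ik c ((i:ℕ)+1) k)
      ∧ ((((List.ofFn fun m => Yb n (ik m) (c m)).take k).prod) i.succ i.succ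
          = PdF N ik c ((i:ℕ)+1+1) k)
      ∧ ((((List.ofFn fun m => Yb n (ik m) (c m)).take k).prod) i.succ i.castSucc
          = PdF N ik c ((i:ℕ)+1) k
            * ∑ m ∈ Finset.univ.filter (fun m : Fin N => (m:ℕ) < k ∧ ik m = (i:ℕ)+1), C m)
      := by
  set L := (List.ofFn fun m => Yb n (ik m) (c m)) with hL
  have hlen : L.length = N := by simp [hL]
  intro k
  induction k with
  | zero =>
    intro _
    have hPd : ∀ I' : ℕ, PdF N ik c I' 0 = 1 := fun _ => Pd_zero
    have hS : Finset.univ.filter (fun m : Fin N => (m:ℕ) < 0 ∧ ik m = (i:ℕ)+1) = ∅ :=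
      filter_lt_zero _
    simp only [List.take_zero, List.prod_nil, hPd, hS, Finset.sum_empty, mul_zero]
    refine ⟨fun a b hab => Matrix.one_apply_ne (ne_of_lt hab), ?_, ?_, ?_⟩ <;>
      simp [Matrix.one_apply]
    · exact Ne.symm (ne_of_lt (Fin.castSucc_lt_succ (i := i)))
  | succ k IH =>
    intro hk1
    have hk : k < N := hk1
    obtain ⟨IH1, IH2, IH3, IH4⟩ := IH (le_of_lt hk)
    set e := c ⟨k, hk⟩ with he_def
    have he : e ≠ 0 := hc _
    set jF : Fin n := ⟨ik ⟨k, hk⟩ - 1, by have := hik ⟨k, hk⟩; omega⟩ with hjF_def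
    have hjF : (jF:ℕ)+1 = ik ⟨k, hk⟩ := by
      have := hik ⟨k, hk⟩; simp only [hjF_def]; omega
    have hkL : k < L.length := by omega
    have hYbk : Yb n (ik ⟨k, hk⟩) e = diagonal (dgf jF e)
        + Matrix.single jF.succ jF.castSucc 1 := by
      have hYe := Yb_eq jF e he
      rw [hjF] at hYe
      exact hYe
    have hprod : (L.take (k+1)).prod
        = (L.take k).prod * (diagonal (dgf jF e) + Matrix.single jF.succ jF.castSucc 1) := by
      rw [List.prod_take_succ L k hkL]
      congr 1
      simp only [hL, List.getElem_ofFn]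
      exact hYbk
    have hmul : ∀ x y : Fin (n+1), ((L.take (k+1)).prod) x y
        = (L.take k).prod x y * dgf jF e y
          + (if y = jF.castSucc then (L.take k).prod x jF.succ else 0) := by
      intro x y
      rw [hprod, mul_add, Matrix.add_apply, Matrix.mul_diagonal, mul_std_apply]
      simp [mul_one]
    have hcsja : ((i.castSucc : Fin (n+1)) = jF.castSucc) ↔ ik ⟨k, hk⟩ = (i:ℕ)+1 := by
      rw [← hjF]; simp [Fin.ext_iff]; omega
    refine ⟨?_, ?_, ?_, ?_⟩
    · -- lower triangularity
      intro a b hab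
      rw [hmul, IH1 a b hab, zero_mul, zero_add]
      by_cases hb : b = jF.castSucc
      · rw [if_pos hb, IH1 a jF.succ (lt_trans hab (hb ▸ Fin.castSucc_lt_succ (i := jF)))]
      · rw [if_neg hb]
    · -- (ia, ia)
      rw [hmul, IH2, dgf_castSucc, hjF, Pd_succ hk]
      by_cases hb : (i.castSucc : Fin (n+1)) = jF.castSucc
      · rw [if_pos hb, IH1 _ _ (hb ▸ Fin.castSucc_lt_succ (i := jF)), add_zero]
      · rw [if_neg hb, add_zero]
    · -- (ib, ib)
      rw [hmul, IH3, dgf_succ, hjF, Pd_succ hk]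
      by_cases hb : (i.succ : Fin (n+1)) = jF.castSucc
      · rw [if_pos hb, IH1 _ _ (hb ▸ Fin.castSucc_lt_succ (i := jF)), add_zero]
      · rw [if_neg hb, add_zero]
    · -- (ib, ia)
      rw [hmul, IH4, dgf_castSucc, hjF, Pd_succ hk,
        sum_lt_succ hk (fun m => ik m = (i:ℕ)+1) C]
      by_cases hP : ik ⟨k, hk⟩ = (i:ℕ)+1
      · rw [if_pos (hcsja.2 hP), if_pos hP]
        have hjb : (jF.succ : Fin (n+1)) = i.succ := by
          have : jF = i := by
            apply Fin.ext
            have := hjF; omega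
          rw [this]
        have hPdr : PdF N ik c ((i:ℕ)+1+1) k
            = PdF N ik c ((i:ℕ)+1) k * WkF N ik c ((i:ℕ)+1) k := Pd_ratio hc
        have hdd : ddcf ((i:ℕ)+1) (ik ⟨k, hk⟩) e = e⁻¹ := by
          rw [ddcf, if_pos hP]
        rw [hjb, IH3, hPdr, hCW k hk, ← he_def, hdd]
        field_simp
      · rw [if_neg (fun h => hP (hcsja.1 h)), if_neg hP, add_zero, add_zero]
        ring
end BKent

namespace BKauxmain
open BKaux BKaux2 BKfin BKmach

variable {n N : ℕ}

lemma AUX (ik : Fin N → ℕ) (hik : ∀ k, 1 ≤ ik k ∧ ik k ≤ n) (c : Fin N → ℂ)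
    (hc : ∀ k, c k ≠ 0) (i : Fin n) (C : Fin N → ℂ)
    (hCW : ∀ (k : ℕ) (hk : k < N), C ⟨k, hk⟩ = WkF N ik c ((i:ℕ)+1) k * c ⟨k, hk⟩)
    (cpar : ℂ)
    (hDk : ∀ k, k ≤ N → DkF N ik C cpar ((i:ℕ)+1) k ≠ 0) :
    ∀ k, k ≤ N →
      xm n ((i:ℕ)+1)
          ((cpar - 1) * WkF N ik c ((i:ℕ)+1) 0 / DkF N ik C cpar ((i:ℕ)+1) 0)
        * (List.ofFn fun m => Yb n (ik m) (c m)).prod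
      = ((List.ofFn fun m => Yb n (ik m)
            (c m * (DkF N ik C cpar ((i:ℕ)+1) (m:ℕ)
              / DkF N ik C cpar ((i:ℕ)+1) ((m:ℕ)+1)))).take k).prod
        * (xm n ((i:ℕ)+1)
            ((cpar - 1) * WkF N ik c ((i:ℕ)+1) k / DkF N ik C cpar ((i:ℕ)+1) k)
           * ((List.ofFn fun m => Yb n (ik m) (c m)).drop k).prod) := by
  set D := DkF N ik C cpar ((i:ℕ)+1) with hD_def
  set W := WkF N ik c ((i:ℕ)+1) with hW_def
  set L := (List.ofFn fun m => Yb n (ik m) (c m)) with hL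
  set L' := (List.ofFn fun m => Yb n (ik m) (c m * (D (m:ℕ) / D ((m:ℕ)+1)))) with hL'
  have hlen : L.length = N := by simp [hL]
  have hlen' : L'.length = N := by simp [hL']
  intro k
  induction k with
  | zero =>
    intro _
    rw [List.take_zero, List.prod_nil, one_mul, List.drop_zero]
  | succ k IH =>
    intro hk1
    have hk : k < N := hk1
    rw [IH (le_of_lt hk)]
    set e := c ⟨k, hk⟩ with he_def
    have he : e ≠ 0 := hc _
    set A := (cpar - 1) * W k / D k with hA_def
    have hkL : k < L.length := by omega
    have hkL' : k < L'.length := by omega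
    have hgk : L[k]'hkL = Yb n (ik ⟨k, hk⟩) e := by
      simp only [hL, List.getElem_ofFn]; rfl
    have hgk' : L'[k]'hkL' = Yb n (ik ⟨k, hk⟩) (e * (D k / D (k+1))) := by
      simp only [hL', List.getElem_ofFn]; rfl
    have hdropk : (L.drop k).prod = Yb n (ik ⟨k, hk⟩) e * (L.drop (k+1)).prod := by
      rw [List.drop_eq_getElem_cons hkL, List.prod_cons, hgk]
    have htake' : (L'.take (k+1)).prod
        = (L'.take k).prod * Yb n (ik ⟨k, hk⟩) (e * (D k / D (k+1))) := by
      rw [List.prod_take_succ L' k hkL', hgk']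
    have hstep : xm n ((i:ℕ)+1) A * Yb n (ik ⟨k, hk⟩) e
        = Yb n (ik ⟨k, hk⟩) (e * (D k / D (k+1)))
          * xm n ((i:ℕ)+1) ((cpar - 1) * W (k+1) / D (k+1)) := by
      by_cases hP : ik ⟨k, hk⟩ = (i:ℕ)+1
      · have hDsucc : D (k+1) = D k + (cpar - 1) * C ⟨k, hk⟩ := by
          rw [hD_def, Dk_succ hk, if_pos hP]
        have hCk : C ⟨k, hk⟩ = W k * e := hCW k hk
        have h1AE : 1 + A * e = D (k+1) / D k := by
          rw [hDsucc, hCk, hA_def]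
          field_simp [hDk k (le_of_lt hk)]
        have hne : 1 + A * e ≠ 0 := by
          rw [h1AE]
          exact div_ne_zero (hDk (k+1) hk1) (hDk k (le_of_lt hk))
        have hWsucc : W (k+1) = W k * e * e := by
          rw [hW_def, Wk_succ hk, hP, ← he_def, cartanA, if_pos rfl,
            show (2:ℤ) = 1+1 by norm_num, zpow_add₀ he, zpow_one]
          ring
        have harg1 : e / (1 + A * e) = e * (D k / D (k+1)) := by
          rw [h1AE, div_div_eq_mul_div, mul_div_assoc]
        have harg2 : A * e^2 / (1 + A * e) = (cpar - 1) * W (k+1) / D (k+1) := by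
          rw [h1AE, hWsucc, hA_def]
          field_simp [hDk k (le_of_lt hk), hDk (k+1) hk1]
        rw [hP, step_eq i A e he hne, harg1, harg2]
      · set jF : Fin n := ⟨ik ⟨k, hk⟩ - 1, by have := hik ⟨k, hk⟩; omega⟩ with hjF_def
        have hjF : (jF:ℕ)+1 = ik ⟨k, hk⟩ := by
          have := hik ⟨k, hk⟩; simp only [hjF_def]; omega
        have hjFi : jF ≠ i := by
          intro h
          apply hP
          rw [← hjF, h]
        have hDsucc : D (k+1) = D k := by
          rw [hD_def, Dk_succ hk, if_neg hP, add_zero]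
        have hWsucc : W (k+1) = W k * e ^ cartanA (ik ⟨k, hk⟩) ((i:ℕ)+1) := by
          rw [hW_def, Wk_succ hk, ← he_def]
        have hstepne := step_ne i jF hjFi A e he
        rw [hjF] at hstepne
        rw [hstepne]
        congr 1
        · rw [hDsucc, div_self (hDk k (le_of_lt hk)), mul_one]
        · rw [hDsucc, hWsucc, hA_def]
          ring
    calc (L'.take k).prod * (xm n ((i:ℕ)+1) A * (L.drop k).prod)
        = (L'.take k).prod * ((xm n ((i:ℕ)+1) A * Yb n (ik ⟨k, hk⟩) e)
            * (L.drop (k+1)).prod) := by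
          rw [hdropk, mul_assoc]
      _ = ((L'.take k).prod * Yb n (ik ⟨k, hk⟩) (e * (D k / D (k+1))))
          * (xm n ((i:ℕ)+1) ((cpar - 1) * W (k+1) / D (k+1)) * (L.drop (k+1)).prod) := by
          rw [hstep]
          simp only [mul_assoc]
      _ = (L'.take (k+1)).prod
          * (xm n ((i:ℕ)+1) ((cpar - 1) * W (k+1) / D (k+1)) * (L.drop (k+1)).prod) := by
          rw [htake']

end BKauxmain



/-- The explicit form of the geometric crystal action `e_i^c` on `t·Θ⁻_𝐢(c)`:
`x_i((c−1)φ_i(g)) · g · x_i((c⁻¹−1)ε_i(g)) = t·𝐲_{i_1}(c'_1)⋯𝐲_{i_N}(c'_N)`, where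
`c'_j = c_j·(Σ_{m<j, i_m=i} c·C_m + Σ_{m≥j, i_m=i} C_m)/(Σ_{m≤j, i_m=i} c·C_m + Σ_{m>j, i_m=i} C_m)`
and `C_m = c_1^{a_{i_1,i}}⋯c_{m−1}^{a_{i_{m−1},i}}·c_m`. -/
theorem stmt12 (n N : ℕ) (hn : 1 ≤ n) (ik : Fin N → ℕ)
    (hik : ∀ k, 1 ≤ ik k ∧ ik k ≤ n) (c : Fin N → ℂ) (hc : ∀ k, c k ≠ 0)
    (td : Fin (n+1) → ℂ) (hdet : (Matrix.diagonal td).det = 1)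
    (g : Matrix (Fin (n+1)) (Fin (n+1)) ℂ)
    (hg : g = Matrix.diagonal td * (List.ofFn fun k => Yb n (ik k) (c k)).prod)
    (i : Fin n) (h21 : g i.succ i.castSucc ≠ 0)
    (C : Fin N → ℂ)
    (hC : ∀ m, C m = (∏ k ∈ Finset.Iio m, c k ^ cartanA (ik k) ((i : ℕ) + 1)) * c m)
    (cpar : ℂ) (hcpar : cpar ≠ 0)
    (hD : ∀ j : Fin N,
      (∑ m ∈ Finset.univ.filter (fun m : Fin N => m ≤ j ∧ ik m = (i : ℕ) + 1), cpar * C m)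
        + (∑ m ∈ Finset.univ.filter (fun m : Fin N => j < m ∧ ik m = (i : ℕ) + 1), C m)
        ≠ 0) :
    xm n ((i : ℕ) + 1) ((cpar - 1) * (g i.castSucc i.castSucc / g i.succ i.castSucc)) * g *
        xm n ((i : ℕ) + 1) ((cpar⁻¹ - 1) * (g i.succ i.succ / g i.succ i.castSucc))
      = Matrix.diagonal td *
        (List.ofFn fun j => Yb n (ik j)
          (c j *
            (((∑ m ∈ Finset.univ.filter (fun m : Fin N => m < j ∧ ik m = (i : ℕ) + 1),
                  cpar * C m)
              + ∑ m ∈ Finset.univ.filter (fun m : Fin N => j ≤ m ∧ ik m = (i : ℕ) + 1), C m)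
            / ((∑ m ∈ Finset.univ.filter (fun m : Fin N => m ≤ j ∧ ik m = (i : ℕ) + 1),
                  cpar * C m)
              + ∑ m ∈ Finset.univ.filter (fun m : Fin N => j < m ∧ ik m = (i : ℕ) + 1),
                  C m)))).prod := by
  have htd : ∀ x, td x ≠ 0 := by
    intro x hx
    rw [Matrix.det_diagonal] at hdet
    rw [Finset.prod_eq_zero (Finset.mem_univ x) hx] at hdet
    exact zero_ne_one hdet
  -- C in terms of WkF
  have hCW : ∀ (k : ℕ) (hk : k < N),
      C ⟨k, hk⟩ = BKmach.WkF N ik c ((i:ℕ)+1) k * c ⟨k, hk⟩ := by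
    intro k hk
    rw [hC ⟨k, hk⟩, BKmach.WkF]
    congr 1
    apply Finset.prod_congr _ (fun _ _ => rfl)
    ext x
    simp [Fin.lt_def]
  -- lists
  set L := (List.ofFn fun k => Yb n (ik k) (c k)) with hL
  have hlen : L.length = N := by simp [hL]
  have htakeN : L.take N = L := by rw [← hlen]; exact List.take_length ..
  have hdropN : L.drop N = [] := by rw [← hlen]; exact List.drop_length ..
  obtain ⟨hE1, hE2, hE3, hE4⟩ := BKent.ENT ik hik c hc i C hCW N (le_refl N)
  rw [← hL, htakeN] at hE2 hE3 hE4
  -- entries of g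
  have hgaa : g i.castSucc i.castSucc = td i.castSucc * BKmach.PdF N ik c ((i:ℕ)+1) N := by
    rw [hg, Matrix.diagonal_mul, hE2]
  have hgbb : g i.succ i.succ
      = td i.succ * (BKmach.PdF N ik c ((i:ℕ)+1) N * BKmach.WkF N ik c ((i:ℕ)+1) N) := by
    rw [hg, Matrix.diagonal_mul, hE3, BKmach.Pd_ratio hc]
  have hgba : g i.succ i.castSucc
      = td i.succ * (BKmach.PdF N ik c ((i:ℕ)+1) N * BKmach.SkC N ik C ((i:ℕ)+1)) := by
    rw [hg, Matrix.diagonal_mul, hE4, BKfin.filter_lt_N, BKmach.SkC]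
  have hPd : BKmach.PdF N ik c ((i:ℕ)+1) N ≠ 0 := BKmach.Pd_ne_zero hc
  have hS : BKmach.SkC N ik C ((i:ℕ)+1) ≠ 0 := by
    intro h0
    exact h21 (by rw [hgba, h0, mul_zero, mul_zero])
  -- conversion of hD to DkF
  have hDconv : ∀ j : Fin N,
      ((∑ m ∈ Finset.univ.filter (fun m : Fin N => m ≤ j ∧ ik m = (i:ℕ)+1), cpar * C m)
        + ∑ m ∈ Finset.univ.filter (fun m : Fin N => j < m ∧ ik m = (i:ℕ)+1), C m)
      = BKmach.DkF N ik C cpar ((i:ℕ)+1) ((j:ℕ)+1) := by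
    intro j
    have e1 : (Finset.univ.filter (fun m : Fin N => m ≤ j ∧ ik m = (i:ℕ)+1))
        = Finset.univ.filter (fun m : Fin N => (m:ℕ) < (j:ℕ)+1 ∧ ik m = (i:ℕ)+1) := by
      ext m
      simp only [Finset.mem_filter, Finset.mem_univ, true_and, Fin.le_def]
      omega
    have e2 : (Finset.univ.filter (fun m : Fin N => j < m ∧ ik m = (i:ℕ)+1))
        = Finset.univ.filter (fun m : Fin N => (j:ℕ)+1 ≤ (m:ℕ) ∧ ik m = (i:ℕ)+1) := by
      ext m
      simp only [Finset.mem_filter, Finset.mem_univ, true_and, Fin.lt_def]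
      omega
    rw [BKmach.DkF, e1, e2]
  have hnumconv : ∀ j : Fin N,
      ((∑ m ∈ Finset.univ.filter (fun m : Fin N => m < j ∧ ik m = (i:ℕ)+1), cpar * C m)
        + ∑ m ∈ Finset.univ.filter (fun m : Fin N => j ≤ m ∧ ik m = (i:ℕ)+1), C m)
      = BKmach.DkF N ik C cpar ((i:ℕ)+1) (j:ℕ) := by
    intro j
    have e1 : (Finset.univ.filter (fun m : Fin N => m < j ∧ ik m = (i:ℕ)+1))
        = Finset.univ.filter (fun m : Fin N => (m:ℕ) < (j:ℕ) ∧ ik m = (i:ℕ)+1) := by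
      ext m
      simp only [Finset.mem_filter, Finset.mem_univ, true_and, Fin.lt_def]
    have e2 : (Finset.univ.filter (fun m : Fin N => j ≤ m ∧ ik m = (i:ℕ)+1))
        = Finset.univ.filter (fun m : Fin N => (j:ℕ) ≤ (m:ℕ) ∧ ik m = (i:ℕ)+1) := by
      ext m
      simp only [Finset.mem_filter, Finset.mem_univ, true_and, Fin.le_def]
    rw [BKmach.DkF, e1, e2]
  have hDk : ∀ k, k ≤ N → BKmach.DkF N ik C cpar ((i:ℕ)+1) k ≠ 0 := by
    intro k hk
    match k with
    | 0 => rw [BKmach.Dk_zero]; exact hS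
    | (k+1) =>
      have hklt : k < N := hk
      rw [← hDconv ⟨k, hklt⟩]
      exact hD ⟨k, hklt⟩
  -- the transformed list
  set L' := (List.ofFn fun m => Yb n (ik m)
      (c m * (BKmach.DkF N ik C cpar ((i:ℕ)+1) (m:ℕ)
        / BKmach.DkF N ik C cpar ((i:ℕ)+1) ((m:ℕ)+1)))) with hL'
  have hlen' : L'.length = N := by simp [hL']
  have htakeN' : L'.take N = L' := by rw [← hlen']; exact List.take_length ..
  have hAUX := BKauxmain.AUX ik hik c hc i C hCW cpar hDk N (le_refl N)
  rw [← hL, ← hL', htakeN', hdropN, List.prod_nil, mul_one] at hAUX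
  -- the target list is L'
  have hlist : (List.ofFn fun j => Yb n (ik j)
      (c j *
        (((∑ m ∈ Finset.univ.filter (fun m : Fin N => m < j ∧ ik m = (i : ℕ) + 1),
              cpar * C m)
          + ∑ m ∈ Finset.univ.filter (fun m : Fin N => j ≤ m ∧ ik m = (i : ℕ) + 1), C m)
        / ((∑ m ∈ Finset.univ.filter (fun m : Fin N => m ≤ j ∧ ik m = (i : ℕ) + 1),
              cpar * C m)
          + ∑ m ∈ Finset.univ.filter (fun m : Fin N => j < m ∧ ik m = (i : ℕ) + 1),
              C m)))) = L' := by
    rw [hL']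
    apply congrArg List.ofFn
    funext j
    apply congrArg (Yb n (ik j))
    rw [hnumconv j, hDconv j]
  -- scalar facts
  set Aphi := (cpar - 1) * (g i.castSucc i.castSucc / g i.succ i.castSucc) with hAphi
  set Aeps := (cpar⁻¹ - 1) * (g i.succ i.succ / g i.succ i.castSucc) with hAeps
  have hphi : Aphi * td i.succ / td i.castSucc
      = (cpar - 1) * BKmach.WkF N ik c ((i:ℕ)+1) 0 / BKmach.DkF N ik C cpar ((i:ℕ)+1) 0 := by
    rw [hAphi, hgaa, hgba, BKmach.Wk_zero, BKmach.Dk_zero]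
    field_simp [htd i.castSucc, htd i.succ, hPd, hS]
  have heps : (cpar - 1) * BKmach.WkF N ik c ((i:ℕ)+1) N
        / BKmach.DkF N ik C cpar ((i:ℕ)+1) N + Aeps = 0 := by
    rw [hAeps, hgbb, hgba, BKmach.Dk_N]
    field_simp [htd i.succ, hPd, hS, hcpar]
    ring
  -- final computation
  calc xm n ((i:ℕ)+1) Aphi * g * xm n ((i:ℕ)+1) Aeps
      = xm n ((i:ℕ)+1) Aphi * Matrix.diagonal td * L.prod * xm n ((i:ℕ)+1) Aeps := by
        rw [hg, ← mul_assoc]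
    _ = Matrix.diagonal td
        * (xm n ((i:ℕ)+1) (Aphi * td i.succ / td i.castSucc) * L.prod)
        * xm n ((i:ℕ)+1) Aeps := by
        rw [BKaux2.step_diag i Aphi td (htd i.castSucc), mul_assoc (Matrix.diagonal td)]
    _ = Matrix.diagonal td * (L'.prod
          * xm n ((i:ℕ)+1) ((cpar - 1) * BKmach.WkF N ik c ((i:ℕ)+1) N
              / BKmach.DkF N ik C cpar ((i:ℕ)+1) N))
        * xm n ((i:ℕ)+1) Aeps := by
        rw [hphi, hAUX]
    _ = Matrix.diagonal td * L'.prod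
        * (xm n ((i:ℕ)+1) ((cpar - 1) * BKmach.WkF N ik c ((i:ℕ)+1) N
              / BKmach.DkF N ik C cpar ((i:ℕ)+1) N)
           * xm n ((i:ℕ)+1) Aeps) := by
        simp only [mul_assoc]
    _ = Matrix.diagonal td * L'.prod := by
        rw [BKaux2.xm_mul_xm, heps, BKaux2.xm_zero, mul_one]
    _ = Matrix.diagonal td * (List.ofFn fun j => Yb n (ik j)
          (c j *
            (((∑ m ∈ Finset.univ.filter (fun m : Fin N => m < j ∧ ik m = (i : ℕ) + 1),
                  cpar * C m)
              + ∑ m ∈ Finset.univ.filter (fun m : Fin N => j ≤ m ∧ ik m = (i : ℕ) + 1), C m)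
            / ((∑ m ∈ Finset.univ.filter (fun m : Fin N => m ≤ j ∧ ik m = (i : ℕ) + 1),
                  cpar * C m)
              + ∑ m ∈ Finset.univ.filter (fun m : Fin N => j < m ∧ ik m = (i : ℕ) + 1),
                  C m)))).prod := by
        rw [hlist]
end

section
/- Let A = (a_{ij})_{i,j ∈ I} be the Cartan matrix of a semisimple Lie algebra, (i_1, …, i_N) a sequence in I, i ∈ I an index occurring in the sequence, and x = (x_1, …, x_N) ∈ ℤ^N. Set X_m := Σ_{k=1}^{m} a_{i_k,i} x_k, let 𝒳 := min{ X_m : 1 ≤ m ≤ N, i_m = i }, and put m_e := max{ l : i_l = i, X_l = 𝒳 } and m_f := min{ l : i_l = i, X_l = 𝒳 }. For an integer ν define ẽ^ν(x) coordinatewise by (ẽ^ν x)_j = x_j + min( min_{1≤m<j, i_m=i}(ν + X_m), min_{j≤m≤N, i_m=i}(X_m) ) − min( min_{1≤m≤j, i_m=i}(ν + X_m), min_{j<m≤N, i_m=i}(X_m) ), where an empty minimum is +∞. Then ẽ^1(x) = x − δ_{m_e} and ẽ^{−1}(x) = x + δ_{m_f}, where δ_l ∈ ℤ^N is the l-th standard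 basis vector; i.e. the ultra-discretized crystal operator ẽ_i decreases exactly the coordinate x_{m_e} by 1, and f̃_i = ẽ_i^{−1} increases exactly the coordinate x_{m_f} by 1. -/
private lemma aux1 {α : Type*} (S : Finset α) (h : S.Nonempty) (X : α → ℤ)
    (P : α → Prop) [DecidablePred P] (chi : ℤ) (hchi : chi = S.inf' h X) :
    S.inf' h (fun m => if P m then 1 + X m else X m)
      = if ∃ m ∈ S, ¬ P m ∧ X m = chi then chi else chi + 1 := by
  have hle : ∀ m ∈ S, chi ≤ X m := fun m hm => hchi ▸ Finset.inf'_le X hm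
  obtain ⟨m₀, hm₀S, hm₀⟩ : ∃ m ∈ S, X m = chi := by
    obtain ⟨m, hm, hXm⟩ := Finset.exists_mem_eq_inf' h X
    exact ⟨m, hm, by rw [hchi, hXm]⟩
  split_ifs with hex
  · obtain ⟨m, hmS, hP, hXm⟩ := hex
    apply le_antisymm
    · have := Finset.inf'_le (fun m => if P m then 1 + X m else X m) hmS
      simp only [hP, ↓reduceIte, hXm] at this
      exact this
    · apply Finset.le_inf'
      intro b hb
      split_ifs with hPb
      · linarith [hle b hb]
      · exact hle b hb
  · push_neg at hex
    apply le_antisymm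
    · have h2 := Finset.inf'_le (fun m => if P m then 1 + X m else X m) hm₀S
      have hP : P m₀ := by
        by_contra hP
        exact hex m₀ hm₀S hP hm₀
      simp only [hP, if_pos, hm₀] at h2
      linarith
    · apply Finset.le_inf'
      intro b hb
      split_ifs with hPb
      · linarith [hle b hb]
      · have h1 : X b ≠ chi := hex b hb hPb
        have := hle b hb
        omega

private lemma aux2 {α : Type*} (S : Finset α) (h : S.Nonempty) (X : α → ℤ)
    (P : α → Prop) [DecidablePred P] (chi : ℤ) (hchi : chi = S.inf' h X) :
    S.inf' h (fun m => if P m then (-1) + X m else X m)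
      = if ∃ m ∈ S, P m ∧ X m = chi then chi - 1 else chi := by
  have hle : ∀ m ∈ S, chi ≤ X m := fun m hm => hchi ▸ Finset.inf'_le X hm
  obtain ⟨m₀, hm₀S, hm₀⟩ : ∃ m ∈ S, X m = chi := by
    obtain ⟨m, hm, hXm⟩ := Finset.exists_mem_eq_inf' h X
    exact ⟨m, hm, by rw [hchi, hXm]⟩
  split_ifs with hex
  · obtain ⟨m, hmS, hP, hXm⟩ := hex
    apply le_antisymm
    · have := Finset.inf'_le (fun m => if P m then (-1) + X m else X m) hmS
      simp only [hP, if_pos, hXm] at this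
      omega
    · apply Finset.le_inf'
      intro b hb
      split_ifs with hPb
      · linarith [hle b hb]
      · linarith [hle b hb]
  · push_neg at hex
    apply le_antisymm
    · have h2 := Finset.inf'_le (fun m => if P m then (-1) + X m else X m) hm₀S
      have hP : ¬ P m₀ := fun hP => hex m₀ hm₀S hP hm₀
      simp only [hP, ↓reduceIte, hm₀] at h2
      exact h2
    · apply Finset.le_inf'
      intro b hb
      split_ifs with hPb
      · have h1 : X b ≠ chi := hex b hb hPb
        have := hle b hb
        omega
      · exact hle b hb

/-- Lemma 3.10 -/
theorem stmt13 {I : Type*} [DecidableEq I] (a : I → I → ℤ)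
    (ha2 : ∀ i, a i i = 2) (haneg : ∀ i j, i ≠ j → a i j ≤ 0)
    (hasym : ∀ i j, a i j = 0 → a j i = 0)
    (N : ℕ) (ik : Fin N → I) (i : I)
    (hSne : (Finset.univ.filter fun m : Fin N => ik m = i).Nonempty)
    (x : Fin N → ℤ)
    (X : Fin N → ℤ) (hX : ∀ m, X m = ∑ k ∈ Finset.Iic m, a (ik k) i * x k)
    (chi : ℤ)
    (hchi : chi = Finset.inf' (Finset.univ.filter fun m : Fin N => ik m = i) hSne X)
    (me mf : Fin N)
    (hme : ik me = i ∧ X me = chi ∧ ∀ l, ik l = i → X l = chi → l ≤ me)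
    (hmf : ik mf = i ∧ X mf = chi ∧ ∀ l, ik l = i → X l = chi → mf ≤ l) :
    ∀ j : Fin N,
      (x j
          + Finset.inf' (Finset.univ.filter fun m : Fin N => ik m = i) hSne
              (fun m => if m < j then 1 + X m else X m)
          - Finset.inf' (Finset.univ.filter fun m : Fin N => ik m = i) hSne
              (fun m => if m ≤ j then 1 + X m else X m)
        = x j - (if j = me then 1 else 0)) ∧
      (x j
          + Finset.inf' (Finset.univ.filter fun m : Fin N => ik m = i) hSne
              (fun m => if m < j then (-1) + X m else X m)
          - Finset.inf' (Finset.univ.filter fun m : Fin N => ik m = i) hSne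
              (fun m => if m ≤ j then (-1) + X m else X m)
        = x j + (if j = mf then 1 else 0)) := by
  obtain ⟨hme1, hme2, hme3⟩ := hme
  obtain ⟨hmf1, hmf2, hmf3⟩ := hmf
  set S := Finset.univ.filter fun m : Fin N => ik m = i with hS
  have hmem : ∀ m : Fin N, m ∈ S ↔ ik m = i := by intro m; simp [hS]
  have hmeS : me ∈ S := (hmem me).2 hme1
  have hmfS : mf ∈ S := (hmem mf).2 hmf1
  intro j
  constructor
  · rw [aux1 S hSne X (fun m => m < j) chi hchi,
        aux1 S hSne X (fun m => m ≤ j) chi hchi]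
    have e1 : (∃ m ∈ S, ¬ (m < j) ∧ X m = chi) ↔ j ≤ me := by
      constructor
      · rintro ⟨m, hmS, hnlt, hXm⟩
        exact le_trans (not_lt.1 hnlt) (hme3 m ((hmem m).1 hmS) hXm)
      · intro hj
        exact ⟨me, hmeS, not_lt.2 hj, hme2⟩
    have e2 : (∃ m ∈ S, ¬ (m ≤ j) ∧ X m = chi) ↔ j < me := by
      constructor
      · rintro ⟨m, hmS, hnle, hXm⟩
        exact lt_of_lt_of_le (not_le.1 hnle) (hme3 m ((hmem m).1 hmS) hXm)
      · intro hj
        exact ⟨me, hmeS, not_le.2 hj, hme2⟩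
    simp only [e1, e2]
    by_cases hj : j = me
    · subst hj
      rw [if_pos le_rfl, if_neg (lt_irrefl j), if_pos rfl]; ring
    · rcases lt_or_gt_of_ne hj with h | h
      · rw [if_pos h.le, if_pos h, if_neg hj]; ring
      · rw [if_neg (not_le.2 h), if_neg (not_lt.2 h.le), if_neg hj]; ring
  · rw [aux2 S hSne X (fun m => m < j) chi hchi,
        aux2 S hSne X (fun m => m ≤ j) chi hchi]
    have e1 : (∃ m ∈ S, (m < j) ∧ X m = chi) ↔ mf < j := by
      constructor
      · rintro ⟨m, hmS, hlt, hXm⟩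
        exact lt_of_le_of_lt (hmf3 m ((hmem m).1 hmS) hXm) hlt
      · intro hj
        exact ⟨mf, hmfS, hj, hmf2⟩
    have e2 : (∃ m ∈ S, (m ≤ j) ∧ X m = chi) ↔ mf ≤ j := by
      constructor
      · rintro ⟨m, hmS, hle', hXm⟩
        exact le_trans (hmf3 m ((hmem m).1 hmS) hXm) hle'
      · intro hj
        exact ⟨mf, hmfS, hj, hmf2⟩
    simp only [e1, e2]
    by_cases hj : j = mf
    · subst hj
      rw [if_neg (lt_irrefl j), if_pos le_rfl, if_pos rfl]; ring
    · rcases lt_or_gt_of_ne hj with h | h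
      · rw [if_neg (not_lt.2 h.le), if_neg (not_le.2 h), if_neg hj]; ring
      · rw [if_pos h, if_pos h.le, if_neg hj]; ring
end

section
/- Let n ≥ 1, let a_{ij} be the type A_n Cartan matrix, ι = (i_k)_{k≥1} with i_k = ((k−1) mod n) + 1, and λ = Σ_{i=1}^n λ_iΛ_i with all λ_i ∈ ℤ_{≥0}. Then the polyhedral realization Σ_ι[λ] equals the set of all x ∈ ℤ^∞ such that, writing x_{j;i} := x_{(j−1)n+i} and with the convention x_{j;0} = 0: (i) x_{1;i} ≥ x_{2;i−1} ≥ ⋯ ≥ x_{i;1} ≥ 0 for all 1 ≤ i ≤ n; (ii) x_{j;i} = 0 whenever i + j > n + 1; and (iii) λ_i ≥ x_{j;i−j+1} − x_{j;i−j} for all 1 ≤ j ≤ i ≤ n. -/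
/-- The periodic sequence `ι = (i_k)_{k≥1}`, `i_k = ((k−1) mod n) + 1`. -/
def iota (n k : ℕ) : ℕ := (k - 1) % n + 1

/-- Evaluation of an affine-linear form `(c, (φ_k)_k)` at `x ∈ ℤ^∞`:
`φ(x) = c + Σ_k φ_k x_k`. -/
noncomputable def evalForm (φ : ℚ × (ℕ → ℚ)) (x : ℕ → ℤ) : ℚ :=
  φ.1 + ∑ᶠ k, φ.2 k * (x k : ℚ)

/-- Coefficients of `β_k^{(+)}(x) = x_k + Σ_{k<j<k⁺} a_{i_k,i_j} x_j + x_{k⁺}`; for the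
periodic sequence `ι` one has `k⁺ = k + n`. -/
def bplus (n k : ℕ) : ℕ → ℚ := fun j =>
  (if j = k then 1 else 0)
  + (if k < j ∧ j < k + n then (cartanA (iota n k) (iota n j) : ℚ) else 0)
  + (if j = k + n then 1 else 0)

/-- The affine-linear form `β_k^{(−)}`; for the periodic sequence `ι` one has `k⁻ = k − n`
(`= 0` when `k ≤ n`, in which case the constant term `−λ_{i_k}` appears). -/
def bminus (n : ℕ) (lam : ℕ → ℕ) (k : ℕ) : ℚ × (ℕ → ℚ) :=
  if n < k then
    (0, fun j =>
      (if j = k - n then 1 else 0)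
      + (if k - n < j ∧ j < k then (cartanA (iota n k) (iota n j) : ℚ) else 0)
      + (if j = k then 1 else 0))
  else
    (-(lam (iota n k) : ℚ), fun j =>
      (if 1 ≤ j ∧ j < k then (cartanA (iota n k) (iota n j) : ℚ) else 0)
      + (if j = k then 1 else 0))

/-- The operator `Ŝ_k`: `Ŝ_kφ = φ − φ_k β_k^{(+)}` if `φ_k > 0`, and
`Ŝ_kφ = φ − φ_k β_k^{(−)}` if `φ_k ≤ 0`. -/
def Shat (n : ℕ) (lam : ℕ → ℕ) (k : ℕ) (φ : ℚ × (ℕ → ℚ)) : ℚ × (ℕ → ℚ) :=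
  if 0 < φ.2 k then φ - φ.2 k • ((0 : ℚ), bplus n k) else φ - φ.2 k • bminus n lam k

/-- The form `λ^{(i)}(x) = λ_i − Σ_{1≤j<ι^{(i)}} a_{i,i_j} x_j − x_{ι^{(i)}}`; for the
periodic sequence `ι` one has `ι^{(i)} = i`. -/
def lamform (n : ℕ) (lam : ℕ → ℕ) (i : ℕ) : ℚ × (ℕ → ℚ) :=
  ((lam i : ℚ), fun j =>
    -(if 1 ≤ j ∧ j < i then (cartanA i (iota n j) : ℚ) else 0) - (if j = i then 1 else 0))

/-- `Ξ_ι[λ]`: the smallest set of affine-linear forms containing the coordinate forms `x_j`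
(`j ≥ 1`) and the forms `λ^{(i)}` (`1 ≤ i ≤ n`) and closed under all `Ŝ_k` (`k ≥ 1`). -/
inductive XiLam (n : ℕ) (lam : ℕ → ℕ) : (ℚ × (ℕ → ℚ)) → Prop
  | coord (j : ℕ) (hj : 1 ≤ j) : XiLam n lam (0, fun k => if k = j then 1 else 0)
  | lamf (i : ℕ) (hi : 1 ≤ i) (hi' : i ≤ n) : XiLam n lam (lamform n lam i)
  | shat (k : ℕ) (hk : 1 ≤ k) (φ : ℚ × (ℕ → ℚ)) (h : XiLam n lam φ) :
      XiLam n lam (Shat n lam k φ)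

namespace S14

lemma mul_lt_repr {n a b c d : ℕ} (hb : b ≤ n) (hd : 1 ≤ d) (h : a < c) :
    a * n + b < c * n + d := by
  have h1 : a * n + b ≤ a * n + n := Nat.add_le_add_left hb _
  have h2 : (a + 1) * n ≤ c * n := Nat.mul_le_mul_right n h
  have h3 : (a + 1) * n = a * n + n := Nat.succ_mul a n
  calc a * n + b ≤ a * n + n := h1
    _ ≤ c * n := by rw [← h3]; exact h2
    _ < c * n + d := Nat.lt_add_of_pos_right hd

lemma repr_lt_iff {n a b c d : ℕ} (hb1 : 1 ≤ b) (hb : b ≤ n) (hd1 : 1 ≤ d) (hd : d ≤ n) :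
    a * n + b < c * n + d ↔ (a < c ∨ (a = c ∧ b < d)) := by
  constructor
  · intro h
    rcases lt_trichotomy a c with h' | h' | h'
    · exact Or.inl h'
    · right; refine ⟨h', ?_⟩; subst h'; exact Nat.lt_of_add_lt_add_left h
    · exact absurd (mul_lt_repr hd hb1 h') (by omega)
  · rintro (h | ⟨rfl, h⟩)
    · exact mul_lt_repr hb hd1 h
    · exact Nat.add_lt_add_left h _

lemma repr_eq_iff {n a b c d : ℕ} (hb1 : 1 ≤ b) (hb : b ≤ n) (hd1 : 1 ≤ d) (hd : d ≤ n) :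
    a * n + b = c * n + d ↔ (a = c ∧ b = d) := by
  constructor
  · intro h
    rcases lt_trichotomy a c with h' | h' | h'
    · exact absurd (mul_lt_repr hb hd1 h') (by omega)
    · subst h'; omega
    · exact absurd (mul_lt_repr hd hb1 h') (by omega)
  · rintro ⟨rfl, rfl⟩; rfl

lemma repr_exists {n : ℕ} (hn : 1 ≤ n) (k : ℕ) (hk : 1 ≤ k) :
    ∃ a b, 1 ≤ b ∧ b ≤ n ∧ k = a * n + b := by
  refine ⟨(k - 1) / n, (k - 1) % n + 1, by omega, ?_, ?_⟩
  · have := Nat.mod_lt (k - 1) (show 0 < n by omega); omega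
  · have h := Nat.div_add_mod (k - 1) n
    have h2 : (k - 1) / n * n = n * ((k - 1) / n) := Nat.mul_comm _ _
    omega

lemma iota_repr {n a b : ℕ} (hb1 : 1 ≤ b) (hb : b ≤ n) : iota n (a * n + b) = b := by
  unfold iota
  have h1 : a * n + b - 1 = (b - 1) + a * n := by omega
  rw [h1, Nat.add_mul_mod_self_right, Nat.mod_eq_of_lt (by omega)]
  omega

end S14
namespace S14

/-- delta function -/
def dl (a : ℕ) : ℕ → ℚ := fun k => if k = a then 1 else 0

lemma bplus_eq {n : ℕ} (a b : ℕ) (hb1 : 1 ≤ b) (hb : b ≤ n) :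
    bplus n (a * n + b) = fun k =>
      dl (a * n + b) k - (if b < n then dl (a * n + (b + 1)) k else 0)
        - (if 2 ≤ b then dl ((a + 1) * n + (b - 1)) k else 0) + dl ((a + 1) * n + b) k := by
  have hs1 : (a + 1) * n = a * n + n := Nat.succ_mul a n
  funext k
  simp only [bplus, dl]
  rw [iota_repr hb1 hb]
  by_cases hk : 1 ≤ k
  · obtain ⟨c, d, hd1, hd, rfl⟩ := repr_exists (le_trans hb1 hb) k hk
    rw [iota_repr hd1 hd]
    have hKn : a * n + b + n = (a + 1) * n + b := by omega
    rw [hKn]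
    simp only [repr_lt_iff hb1 hb hd1 hd, repr_lt_iff hd1 hd hb1 hb,
      repr_eq_iff hd1 hd hb1 hb, cartanA]
    by_cases hbn : b < n
    · have hb1n : b + 1 ≤ n := hbn
      simp only [if_pos hbn, repr_eq_iff hd1 hd (by omega : 1 ≤ b + 1) hb1n]
      by_cases hb2 : 2 ≤ b
      · simp only [if_pos hb2, repr_eq_iff hd1 hd (by omega : 1 ≤ b - 1) (by omega : b - 1 ≤ n)]
        split_ifs <;> first | (exfalso; omega) | norm_num
      · simp only [if_neg hb2]
        split_ifs <;> first | (exfalso; omega) | norm_num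
    · simp only [if_neg hbn]
      by_cases hb2 : 2 ≤ b
      · simp only [if_pos hb2, repr_eq_iff hd1 hd (by omega : 1 ≤ b - 1) (by omega : b - 1 ≤ n)]
        split_ifs <;> first | (exfalso; omega) | norm_num
      · simp only [if_neg hb2]
        split_ifs <;> first | (exfalso; omega) | norm_num
  · have h0 : k = 0 := by omega
    subst h0
    split_ifs <;> first | (exfalso; omega) | norm_num

end S14
namespace S14

lemma iota_sub_n {n k : ℕ} (h : n < k) : iota n (k - n) = iota n k := by
  unfold iota
  have h1 : k - 1 = (k - n - 1) + n := by omega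
  rw [h1, Nat.add_mod_right]

lemma bminus_high {n : ℕ} (lam : ℕ → ℕ) {k : ℕ} (h : n < k) :
    bminus n lam k = (0, bplus n (k - n)) := by
  unfold bminus bplus
  rw [if_pos h]
  refine Prod.ext rfl ?_
  funext j
  simp only [iota_sub_n h, show k - n + n = k by omega]

lemma iota_base {n b : ℕ} (hb1 : 1 ≤ b) (hb : b ≤ n) : iota n b = b := by
  have := iota_repr (a := 0) hb1 hb
  simpa using this

lemma bminus_low {n : ℕ} (lam : ℕ → ℕ) (b : ℕ) (hb1 : 1 ≤ b) (hb : b ≤ n) :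
    bminus n lam b = (-(lam b : ℚ),
      fun k => -(if 2 ≤ b then dl (b - 1) k else 0) + dl b k) := by
  unfold bminus
  rw [if_neg (by omega)]
  rw [iota_base hb1 hb]
  refine Prod.ext rfl ?_
  funext k
  simp only [dl]
  by_cases hw : 1 ≤ k ∧ k < b
  · rw [if_pos hw, iota_base hw.1 (by omega)]
    simp only [cartanA]
    split_ifs <;> first | (exfalso; omega) | norm_num
  · rw [if_neg hw]
    split_ifs <;> first | (exfalso; omega) | norm_num

lemma lamform_eq {n : ℕ} (lam : ℕ → ℕ) (i : ℕ) (hi1 : 1 ≤ i) (hi : i ≤ n) :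
    lamform n lam i = ((lam i : ℚ),
      fun k => (if 2 ≤ i then dl (i - 1) k else 0) - dl i k) := by
  unfold lamform
  refine Prod.ext rfl ?_
  funext k
  simp only [dl]
  by_cases hw : 1 ≤ k ∧ k < i
  · rw [if_pos hw, iota_base hw.1 (by omega)]
    simp only [cartanA]
    split_ifs <;> first | (exfalso; omega) | norm_num
  · rw [if_neg hw]
    split_ifs <;> first | (exfalso; omega) | norm_num

/-! ### evaluation machinery -/

noncomputable def ev (x : ℕ → ℤ) (f : ℕ → ℚ) : ℚ := ∑ᶠ k, f k * (x k : ℚ)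

lemma evalForm_eq (φ : ℚ × (ℕ → ℚ)) (x : ℕ → ℤ) : evalForm φ x = φ.1 + ev x φ.2 := rfl

lemma supfin {x : ℕ → ℤ} (hfin : (Function.support x).Finite) (f : ℕ → ℚ) :
    (Function.support fun k => f k * (x k : ℚ)).Finite := by
  refine hfin.subset ?_
  intro k hk
  simp only [Function.mem_support] at hk ⊢
  intro h0
  rw [h0] at hk
  simp at hk

lemma ev_dl (x : ℕ → ℤ) (a : ℕ) : ev x (dl a) = (x a : ℚ) := by
  unfold ev dl
  rw [finsum_eq_single _ a]
  · simp
  · intro m hm; simp [hm]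

lemma ev_add {x : ℕ → ℤ} (hfin : (Function.support x).Finite) (f g : ℕ → ℚ) :
    ev x (fun k => f k + g k) = ev x f + ev x g := by
  unfold ev
  rw [← finsum_add_distrib (supfin hfin f) (supfin hfin g)]
  congr 1; funext k; ring

lemma ev_sub {x : ℕ → ℤ} (hfin : (Function.support x).Finite) (f g : ℕ → ℚ) :
    ev x (fun k => f k - g k) = ev x f - ev x g := by
  unfold ev
  rw [← finsum_sub_distrib (supfin hfin f) (supfin hfin g)]
  congr 1; funext k; ring

lemma ev_neg (x : ℕ → ℤ) (f : ℕ → ℚ) :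
    ev x (fun k => -(f k)) = -(ev x f) := by
  unfold ev
  rw [← finsum_neg_distrib]
  congr 1; funext k; ring

lemma ev_ite (x : ℕ → ℤ) (P : Prop) [Decidable P] (f : ℕ → ℚ) :
    ev x (fun k => if P then f k else 0) = if P then ev x f else 0 := by
  by_cases h : P
  · simp only [if_pos h]
  · simp only [if_neg h]
    unfold ev
    simp

lemma ev_update {x : ℕ → ℤ} (hfin : (Function.support x).Finite) (f : ℕ → ℚ) (a : ℕ) (v : ℤ) :
    ev (Function.update x a v) f = ev x f + f a * ((v : ℚ) - (x a : ℚ)) := by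
  unfold ev
  have h : (fun k => f k * ((Function.update x a v k : ℤ) : ℚ))
      = fun k => f k * (x k : ℚ) + (if k = a then f a * ((v : ℚ) - (x a : ℚ)) else 0) := by
    funext k
    by_cases hk : k = a
    · subst hk; simp [Function.update_self]; ring
    · simp [Function.update_of_ne hk, hk]
  rw [h, finsum_add_distrib (supfin hfin f)]
  · congr 1
    rw [finsum_eq_single _ a]
    · simp
    · intro m hm; simp [hm]
  · refine (Set.finite_singleton a).subset ?_
    intro k hk
    simp only [Function.mem_support] at hk
    by_contra hka
    simp only [Set.mem_singleton_iff] at hka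
    rw [if_neg hka] at hk
    exact hk rfl

end S14
namespace S14

/-- The explicit description of the polyhedral cone, in representation form. -/
structure GoodX (n : ℕ) (lam : ℕ → ℕ) (x : ℕ → ℤ) : Prop where
  zero : x 0 = 0
  fin : (Function.support x).Finite
  g1a : ∀ a, 0 ≤ x (a * n + 1)
  g1b : ∀ a b, 2 ≤ b → b ≤ n → x ((a + 1) * n + (b - 1)) ≤ x (a * n + b)
  g2 : ∀ a b, 1 ≤ b → b ≤ n → n < b + a → x (a * n + b) = 0
  g3b : ∀ a b, 2 ≤ b → b ≤ n → b + a ≤ n →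
    x (a * n + b) - x (a * n + (b - 1)) ≤ (lam (b + a) : ℤ)
  g3a : ∀ a, a + 1 ≤ n → x (a * n + 1) ≤ (lam (a + 1) : ℤ)

lemma GoodX.nonneg {n : ℕ} {lam : ℕ → ℕ} {x : ℕ → ℤ} (hg : GoodX n lam x) :
    ∀ b a, 1 ≤ b → b ≤ n → 0 ≤ x (a * n + b) := by
  intro b
  induction b with
  | zero => intro a h1 _; omega
  | succ m ih =>
    intro a h1 h2
    by_cases hm : m = 0
    · subst hm; exact hg.g1a a
    · have h3 := hg.g1b a (m + 1) (by omega) h2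
      have h4 := ih (a + 1) (by omega) (by omega)
      simp only [Nat.add_sub_cancel] at h3
      omega

lemma GoodX.nonneg' {n : ℕ} {lam : ℕ → ℕ} {x : ℕ → ℤ} (hg : GoodX n lam x)
    (hn : 1 ≤ n) (k : ℕ) : 0 ≤ x k := by
  by_cases hk : 1 ≤ k
  · obtain ⟨a, b, hb1, hb, rfl⟩ := repr_exists hn k hk
    exact hg.nonneg b a hb1 hb
  · have : k = 0 := by omega
    rw [this, hg.zero]

/-- Integer value of `β⁺` at position `a*n+b`. -/
def Bpz (n : ℕ) (x : ℕ → ℤ) (a b : ℕ) : ℤ :=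
  x (a * n + b) - (if b < n then x (a * n + (b + 1)) else 0)
    - (if 2 ≤ b then x ((a + 1) * n + (b - 1)) else 0) + x ((a + 1) * n + b)

/-- Integer value of low `β⁻` at position `b ≤ n`. -/
def Bmlz (n : ℕ) (lam : ℕ → ℕ) (x : ℕ → ℤ) (b : ℕ) : ℤ :=
  -(lam b : ℤ) + x b - (if 2 ≤ b then x (b - 1) else 0)

lemma ev_bplus {n : ℕ} {x : ℕ → ℤ} (hfin : (Function.support x).Finite)
    (a b : ℕ) (hb1 : 1 ≤ b) (hb : b ≤ n) :
    ev x (bplus n (a * n + b)) = (Bpz n x a b : ℚ) := by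
  rw [bplus_eq a b hb1 hb]
  rw [ev_add hfin, ev_sub hfin, ev_sub hfin, ev_ite, ev_ite, ev_dl, ev_dl]
  by_cases h1 : b < n <;> by_cases h2 : 2 ≤ b <;>
    simp only [Bpz, if_pos, if_neg, h1, h2, if_true, if_false, ev_dl] <;> push_cast <;> ring

lemma ev_bminus_high {n : ℕ} (lam : ℕ → ℕ) {x : ℕ → ℤ} (hfin : (Function.support x).Finite)
    (a b : ℕ) (hb1 : 1 ≤ b) (hb : b ≤ n) :
    evalForm (bminus n lam ((a + 1) * n + b)) x = (Bpz n x a b : ℚ) := by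
  have hs1 : (a + 1) * n = a * n + n := Nat.succ_mul a n
  have hlt : n < (a + 1) * n + b := by omega
  rw [bminus_high lam hlt, evalForm_eq]
  have he : (a + 1) * n + b - n = a * n + b := by omega
  rw [he]
  simpa using ev_bplus hfin a b hb1 hb

lemma ev_bminus_low {n : ℕ} (lam : ℕ → ℕ) {x : ℕ → ℤ} (hfin : (Function.support x).Finite)
    (b : ℕ) (hb1 : 1 ≤ b) (hb : b ≤ n) :
    evalForm (bminus n lam b) x = (Bmlz n lam x b : ℚ) := by
  rw [bminus_low lam b hb1 hb, evalForm_eq]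
  simp only
  rw [ev_add hfin, ev_neg, ev_ite, ev_dl]
  by_cases h2 : 2 ≤ b <;>
    simp only [Bmlz, h2, if_true, if_false, if_pos, if_neg, ev_dl] <;> push_cast <;> ring

lemma ev_lamform {n : ℕ} (lam : ℕ → ℕ) {x : ℕ → ℤ} (hfin : (Function.support x).Finite)
    (i : ℕ) (hi1 : 1 ≤ i) (hi : i ≤ n) :
    evalForm (lamform n lam i) x
      = (lam i : ℚ) + (if 2 ≤ i then (x (i - 1) : ℚ) else 0) - (x i : ℚ) := by
  rw [lamform_eq lam i hi1 hi, evalForm_eq]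
  simp only
  rw [ev_sub hfin, ev_ite, ev_dl]
  by_cases h2 : 2 ≤ i <;> simp only [h2, if_true, if_false, if_pos, if_neg, ev_dl] <;> ring

lemma ev_coord {x : ℕ → ℤ} (j : ℕ) :
    evalForm (0, fun k => if k = j then (1 : ℚ) else 0) x = (x j : ℚ) := by
  rw [evalForm_eq]
  have : (fun k => if k = j then (1 : ℚ) else 0) = dl j := rfl
  rw [this, ev_dl]
  simp

end S14
namespace S14

lemma repr_ne {n a b c d : ℕ} (hb1 : 1 ≤ b) (hb : b ≤ n) (hd1 : 1 ≤ d) (hd : d ≤ n)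
    (h : ¬(a = c ∧ b = d)) : c * n + d ≠ a * n + b :=
  fun hEq => by
    have h2 := (repr_eq_iff hd1 hd hb1 hb).mp hEq
    exact h ⟨h2.1.symm, h2.2.symm⟩

lemma upd_fin {x : ℕ → ℤ} (hfin : (Function.support x).Finite) (K : ℕ) (v : ℤ) :
    (Function.support (Function.update x K v)).Finite := by
  refine (hfin.insert K).subset ?_
  intro p hp
  simp only [Function.mem_support] at hp
  by_cases hpK : p = K
  · exact Set.mem_insert_iff.mpr (Or.inl hpK)
  · rw [Function.update_of_ne hpK] at hp
    exact Set.mem_insert_iff.mpr (Or.inr hp)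

lemma pres_plus {n : ℕ} {lam : ℕ → ℕ} {x : ℕ → ℤ} (hg : GoodX n lam x) (a b : ℕ)
    (hb1 : 1 ≤ b) (hb : b ≤ n) (hpos : 0 < Bpz n x a b) :
    GoodX n lam (Function.update x (a * n + b) (x (a * n + b) - Bpz n x a b)) := by
  have hn : 1 ≤ n := le_trans hb1 hb
  refine ⟨?_, ?_, ?_, ?_, ?_, ?_, ?_⟩
  · rw [Function.update_of_ne (show (0 : ℕ) ≠ a * n + b by omega)]
    exact hg.zero
  · exact upd_fin hg.fin _ _
  · -- g1a
    intro c
    by_cases h : a = c ∧ b = 1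
    · obtain ⟨rfl, rfl⟩ := h
      rw [Function.update_self]
      simp only [Bpz]
      by_cases hn2 : 1 < n
      · have h5 := hg.g1b a 2 (le_refl 2) hn2
        norm_num at h5
        simp only [if_pos hn2]
        norm_num
        omega
      · have hz := hg.g2 (a + 1) 1 (le_refl 1) hn (by omega)
        simp only [if_neg hn2]
        norm_num
        omega
    · rw [Function.update_of_ne (repr_ne hb1 hb (le_refl 1) hn h)]
      exact hg.g1a c
  · -- g1b
    intro c d hd2 hdn
    by_cases h2 : a = c ∧ b = d
    · obtain ⟨rfl, rfl⟩ := h2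
      rw [Function.update_self,
        Function.update_of_ne (repr_ne hb1 hb (by omega : 1 ≤ b - 1) (by omega) (by omega))]
      simp only [Bpz, if_pos hd2]
      by_cases hbn : b < n
      · have h5 := hg.g1b a (b + 1) (by omega) (by omega)
        simp only [Nat.add_sub_cancel] at h5
        simp only [if_pos hbn]
        omega
      · have hz := hg.g2 (a + 1) b hb1 hb (by omega)
        simp only [if_neg hbn]
        omega
    · by_cases h1 : a = c + 1 ∧ b = d - 1
      · obtain ⟨rfl, rfl⟩ := h1
        rw [Function.update_self,
          Function.update_of_ne (repr_ne (by omega : 1 ≤ d - 1) (by omega) (by omega : 1 ≤ d)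
            hdn (by omega))]
        have h5 := hg.g1b c d hd2 hdn
        omega
      · rw [Function.update_of_ne (repr_ne hb1 hb (by omega : 1 ≤ d) hdn h2),
          Function.update_of_ne (repr_ne hb1 hb (by omega : 1 ≤ d - 1) (by omega)
            (by omega))]
        exact hg.g1b c d hd2 hdn
  · -- g2
    intro c d hd1 hdn hw
    by_cases h : a = c ∧ b = d
    · obtain ⟨rfl, rfl⟩ := h
      exfalso
      have hzK := hg.g2 a b hb1 hb hw
      have hz3 := hg.g2 (a + 1) b hb1 hb (by omega)
      simp only [Bpz] at hpos
      by_cases hA : b < n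
      · have hz1 := hg.g2 a (b + 1) (by omega) (by omega) (by omega)
        by_cases hB : 2 ≤ b
        · have hz2 := hg.g2 (a + 1) (b - 1) (by omega) (by omega) (by omega)
          rw [if_pos hA, if_pos hB] at hpos; omega
        · rw [if_pos hA, if_neg hB] at hpos; omega
      · by_cases hB : 2 ≤ b
        · have hz2 := hg.g2 (a + 1) (b - 1) (by omega) (by omega) (by omega)
          rw [if_neg hA, if_pos hB] at hpos; omega
        · rw [if_neg hA, if_neg hB] at hpos; omega
    · rw [Function.update_of_ne (repr_ne hb1 hb hd1 hdn h)]
      exact hg.g2 c d hd1 hdn hw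
  · -- g3b
    intro c d hd2 hdn hwt
    by_cases h2 : a = c ∧ b = d
    · obtain ⟨rfl, rfl⟩ := h2
      rw [Function.update_self,
        Function.update_of_ne (repr_ne hb1 hb (by omega : 1 ≤ b - 1) (by omega) (by omega))]
      have h5 := hg.g3b a b hd2 hb hwt
      omega
    · by_cases h1 : a = c ∧ b = d - 1
      · obtain ⟨rfl, rfl⟩ := h1
        rw [Function.update_self,
          Function.update_of_ne (repr_ne (by omega : 1 ≤ d - 1) (by omega) (by omega : 1 ≤ d)
            hdn (by omega))]
        simp only [Bpz]
        rw [show d - 1 + 1 = d from by omega, show d - 1 - 1 = d - 2 from by omega,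
          if_pos (show d - 1 < n by omega)]
        by_cases hd3 : 2 ≤ d - 1
        · have h5 := hg.g3b (a + 1) (d - 1) hd3 (by omega) (by omega)
          rw [show d - 1 - 1 = d - 2 from by omega,
            show d - 1 + (a + 1) = d + a from by omega] at h5
          rw [if_pos hd3]
          omega
        · have hd2' : d = 2 := by omega
          subst hd2'
          have h5 := hg.g3a (a + 1) (by omega)
          rw [show a + 1 + 1 = 2 + a from by omega] at h5
          rw [if_neg hd3]
          norm_num
          omega
      · rw [Function.update_of_ne (repr_ne hb1 hb (by omega : 1 ≤ d) hdn h2),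
          Function.update_of_ne (repr_ne hb1 hb (by omega : 1 ≤ d - 1) (by omega) (by omega))]
        exact hg.g3b c d hd2 hdn hwt
  · -- g3a
    intro c hcn
    by_cases h : a = c ∧ b = 1
    · obtain ⟨rfl, rfl⟩ := h
      rw [Function.update_self]
      have h5 := hg.g3a a hcn
      omega
    · rw [Function.update_of_ne (repr_ne hb1 hb (le_refl 1) hn h)]
      exact hg.g3a c hcn

end S14
namespace S14

lemma pres_minus_high {n : ℕ} {lam : ℕ → ℕ} {x : ℕ → ℤ} (hg : GoodX n lam x) (a b : ℕ)
    (hb1 : 1 ≤ b) (hb : b ≤ n) (hneg : Bpz n x a b < 0) :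
    GoodX n lam (Function.update x ((a + 1) * n + b) (x ((a + 1) * n + b) - Bpz n x a b)) := by
  have hn : 1 ≤ n := le_trans hb1 hb
  refine ⟨?_, ?_, ?_, ?_, ?_, ?_, ?_⟩
  · rw [Function.update_of_ne (show (0 : ℕ) ≠ (a + 1) * n + b by omega)]
    exact hg.zero
  · exact upd_fin hg.fin _ _
  · -- g1a
    intro c
    by_cases h : a + 1 = c ∧ b = 1
    · obtain ⟨rfl, rfl⟩ := h
      rw [Function.update_self]
      have h5 := hg.nonneg 1 (a + 1) (le_refl 1) hn
      omega
    · rw [Function.update_of_ne (repr_ne hb1 hb (le_refl 1) hn h)]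
      exact hg.g1a c
  · -- g1b
    intro c d hd2 hdn
    by_cases h2 : a + 1 = c ∧ b = d
    · obtain ⟨rfl, rfl⟩ := h2
      rw [Function.update_self,
        Function.update_of_ne (repr_ne hb1 hb (by omega : 1 ≤ b - 1) (by omega) (by omega))]
      have h5 := hg.g1b (a + 1) b hd2 hb
      have e2 : x ((a + 1 + 1) * n + (b - 1)) = x ((a + 2) * n + (b - 1)) := rfl
      omega
    · by_cases h1 : a + 1 = c + 1 ∧ b = d - 1
      · have hca : a = c := by omega
        subst hca
        obtain ⟨-, rfl⟩ := h1
        rw [Function.update_self,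
          Function.update_of_ne (repr_ne (by omega : 1 ≤ d - 1) (by omega) (by omega : 1 ≤ d)
            hdn (by omega))]
        simp only [Bpz]
        rw [show d - 1 + 1 = d from by omega, show d - 1 - 1 = d - 2 from by omega,
          if_pos (show d - 1 < n by omega)]
        by_cases hd3 : 2 ≤ d - 1
        · have h5 := hg.g1b a (d - 1) hd3 (by omega)
          rw [show d - 1 - 1 = d - 2 from by omega] at h5
          rw [if_pos hd3]
          omega
        · have h5 := hg.nonneg (d - 1) a (by omega) (by omega)
          rw [if_neg hd3]
          omega
      · rw [Function.update_of_ne (repr_ne hb1 hb (by omega : 1 ≤ d) hdn h2),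
          Function.update_of_ne (repr_ne hb1 hb (by omega : 1 ≤ d - 1) (by omega)
            (by omega))]
        exact hg.g1b c d hd2 hdn
  · -- g2
    intro c d hd1 hdn hw
    by_cases h : a + 1 = c ∧ b = d
    · obtain ⟨rfl, rfl⟩ := h
      exfalso
      have hzM := hg.g2 (a + 1) b hb1 hb hw
      simp only [Bpz] at hneg
      by_cases hA : n < b + a
      · have hzK := hg.g2 a b hb1 hb hA
        by_cases h1 : b < n
        · have hz1 := hg.g2 a (b + 1) (by omega) (by omega) (by omega)
          by_cases h2 : 2 ≤ b
          · have hz2 := hg.g2 (a + 1) (b - 1) (by omega) (by omega) (by omega)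
            rw [if_pos h1, if_pos h2] at hneg; omega
          · rw [if_pos h1, if_neg h2] at hneg; omega
        · by_cases h2 : 2 ≤ b
          · have hz2 := hg.g2 (a + 1) (b - 1) (by omega) (by omega) (by omega)
            rw [if_neg h1, if_pos h2] at hneg; omega
          · rw [if_neg h1, if_neg h2] at hneg; omega
      · -- b + a = n
        have hK0 := hg.nonneg b a hb1 hb
        by_cases h1 : b < n
        · have hz1 := hg.g2 a (b + 1) (by omega) (by omega) (by omega)
          by_cases h2 : 2 ≤ b
          · have h5 := hg.g1b a b h2 hb
            rw [if_pos h1, if_pos h2] at hneg; omega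
          · rw [if_pos h1, if_neg h2] at hneg; omega
        · by_cases h2 : 2 ≤ b
          · have h5 := hg.g1b a b h2 hb
            rw [if_neg h1, if_pos h2] at hneg; omega
          · rw [if_neg h1, if_neg h2] at hneg; omega
    · rw [Function.update_of_ne (repr_ne hb1 hb hd1 hdn h)]
      exact hg.g2 c d hd1 hdn hw
  · -- g3b
    intro c d hd2 hdn hwt
    by_cases h2 : a + 1 = c ∧ b = d
    · obtain ⟨rfl, rfl⟩ := h2
      rw [Function.update_self,
        Function.update_of_ne (repr_ne hb1 hb (by omega : 1 ≤ b - 1) (by omega) (by omega))]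
      have h5 := hg.g3b a (b + 1) (by omega) (by omega) (by omega)
      rw [Nat.add_sub_cancel, show b + 1 + a = b + (a + 1) from by omega] at h5
      simp only [Bpz]
      rw [if_pos (show b < n by omega), if_pos hd2]
      omega
    · by_cases h1 : a + 1 = c ∧ b = d - 1
      · obtain ⟨rfl, rfl⟩ := h1
        rw [Function.update_self,
          Function.update_of_ne (repr_ne (by omega : 1 ≤ d - 1) (by omega) (by omega : 1 ≤ d)
            hdn (by omega))]
        have h5 := hg.g3b (a + 1) d hd2 hdn hwt
        omega
      · rw [Function.update_of_ne (repr_ne hb1 hb (by omega : 1 ≤ d) hdn h2),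
          Function.update_of_ne (repr_ne hb1 hb (by omega : 1 ≤ d - 1) (by omega) (by omega))]
        exact hg.g3b c d hd2 hdn hwt
  · -- g3a
    intro c hcn
    by_cases h : a + 1 = c ∧ b = 1
    · obtain ⟨rfl, rfl⟩ := h
      rw [Function.update_self]
      have h5 := hg.g3b a 2 (le_refl 2) (by omega) (by omega)
      rw [show 2 + a = a + 1 + 1 from by omega] at h5
      norm_num at h5
      simp only [Bpz]
      rw [if_pos (show 1 < n by omega)]
      norm_num
      omega
    · rw [Function.update_of_ne (repr_ne hb1 hb (le_refl 1) hn h)]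
      exact hg.g3a c hcn

end S14
namespace S14

lemma repr_ne_low {n b c d : ℕ} (hb1 : 1 ≤ b) (hb : b ≤ n) (hd1 : 1 ≤ d) (hd : d ≤ n)
    (h : ¬(c = 0 ∧ b = d)) : c * n + d ≠ b := by
  intro hEq
  have h0 : (0 : ℕ) * n + b = b := by simp
  rw [← h0] at hEq
  have h2 := (repr_eq_iff hd1 hd hb1 hb).mp hEq
  exact h ⟨h2.1, h2.2.symm⟩

lemma pres_minus_low {n : ℕ} {lam : ℕ → ℕ} {x : ℕ → ℤ} (hg : GoodX n lam x) (b : ℕ)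
    (hb1 : 1 ≤ b) (hb : b ≤ n) :
    GoodX n lam (Function.update x b (x b - Bmlz n lam x b)) := by
  have hn : 1 ≤ n := le_trans hb1 hb
  have hBm : Bmlz n lam x b ≤ 0 := by
    simp only [Bmlz]
    by_cases h2 : 2 ≤ b
    · rw [if_pos h2]
      have h5 := hg.g3b 0 b h2 hb (by omega)
      have e2 : x (0 * n + b) = x b := by simp
      have e3 : x (0 * n + (b - 1)) = x (b - 1) := by simp
      have e4 : ((lam (b + 0) : ℤ)) = ((lam b : ℤ)) := rfl
      omega
    · rw [if_neg h2]
      have hb1' : b = 1 := by omega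
      subst hb1'
      have h5 := hg.g3a 0 (by omega)
      have e2 : x (0 * n + 1) = x 1 := by simp
      have e4 : ((lam (0 + 1) : ℤ)) = ((lam 1 : ℤ)) := rfl
      omega
  refine ⟨?_, ?_, ?_, ?_, ?_, ?_, ?_⟩
  · rw [Function.update_of_ne (show (0 : ℕ) ≠ b by omega)]
    exact hg.zero
  · exact upd_fin hg.fin _ _
  · -- g1a
    intro c
    by_cases h : c = 0 ∧ b = 1
    · obtain ⟨rfl, rfl⟩ := h
      have hp : (0 : ℕ) * n + 1 = 1 := by simp
      rw [hp, Function.update_self]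
      simp only [Bmlz]
      norm_num
    · rw [Function.update_of_ne (repr_ne_low hb1 hb (le_refl 1) hn h)]
      exact hg.g1a c
  · -- g1b
    intro c d hd2 hdn
    by_cases h2 : c = 0 ∧ b = d
    · obtain ⟨rfl, rfl⟩ := h2
      have hp : (0 : ℕ) * n + b = b := by simp
      rw [hp, Function.update_self,
        Function.update_of_ne (repr_ne_low hb1 hb (by omega : 1 ≤ b - 1) (by omega) (by omega))]
      simp only [Bmlz]
      rw [if_pos hd2]
      by_cases hd3 : 2 ≤ b - 1
      · have h5 := hg.g3b 1 (b - 1) hd3 (by omega) (by omega)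
        have h6 := hg.g1b 0 (b - 1) hd3 (by omega)
        have e1 : x ((0 + 1) * n + (b - 1 - 1)) = x (1 * n + (b - 1 - 1)) := rfl
        have e2 : x (0 * n + (b - 1)) = x (b - 1) := by simp
        have e3 : x ((0 + 1) * n + (b - 1)) = x (1 * n + (b - 1)) := rfl
        have e4 : ((lam (b - 1 + 1) : ℤ)) = ((lam b : ℤ)) := by rw [show b - 1 + 1 = b from by omega]
        omega
      · have hb2 : b = 2 := by omega
        subst hb2
        have h5 := hg.g3a 1 (by omega)
        have h6 := hg.nonneg 1 0 (le_refl 1) hn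
        have e1 : x ((0 + 1) * n + (2 - 1)) = x (1 * n + 1) := by norm_num
        have e2 : x (0 * n + 1) = x 1 := by simp
        have e3 : ((lam (1 + 1) : ℤ)) = ((lam 2 : ℤ)) := rfl
        have e4 : x (2 - 1) = x 1 := by norm_num
        omega
    · have hne1 : (c + 1) * n + (d - 1) ≠ b :=
        repr_ne_low hb1 hb (by omega : 1 ≤ d - 1) (by omega) (by omega)
      rw [Function.update_of_ne (repr_ne_low hb1 hb (by omega : 1 ≤ d) hdn h2),
        Function.update_of_ne hne1]
      exact hg.g1b c d hd2 hdn
  · -- g2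
    intro c d hd1 hdn hw
    by_cases h : c = 0 ∧ b = d
    · obtain ⟨rfl, rfl⟩ := h
      exfalso; omega
    · rw [Function.update_of_ne (repr_ne_low hb1 hb hd1 hdn h)]
      exact hg.g2 c d hd1 hdn hw
  · -- g3b
    intro c d hd2 hdn hwt
    by_cases h2 : c = 0 ∧ b = d
    · obtain ⟨rfl, rfl⟩ := h2
      have hp : (0 : ℕ) * n + b = b := by simp
      rw [hp, Function.update_self,
        Function.update_of_ne (repr_ne_low hb1 hb (by omega : 1 ≤ b - 1) (by omega) (by omega))]
      simp only [Bmlz]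
      rw [if_pos hd2]
      have e2 : x (0 * n + (b - 1)) = x (b - 1) := by simp
      have e3 : ((lam (b + 0) : ℤ)) = ((lam b : ℤ)) := rfl
      omega
    · by_cases h1 : c = 0 ∧ b = d - 1
      · obtain ⟨rfl, rfl⟩ := h1
        have hp : (0 : ℕ) * n + (d - 1) = d - 1 := by simp
        rw [hp, Function.update_self,
          Function.update_of_ne (repr_ne_low (by omega : 1 ≤ d - 1) (by omega)
            (by omega : 1 ≤ d) hdn (by omega))]
        have h5 := hg.g3b 0 d hd2 hdn hwt
        have e2 : x (0 * n + (d - 1)) = x (d - 1) := by simp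
        have e3 : x (0 * n + d) = x d := by simp
        omega
      · rw [Function.update_of_ne (repr_ne_low hb1 hb (by omega : 1 ≤ d) hdn h2),
          Function.update_of_ne (repr_ne_low hb1 hb (by omega : 1 ≤ d - 1) (by omega) (by omega))]
        exact hg.g3b c d hd2 hdn hwt
  · -- g3a
    intro c hcn
    by_cases h : c = 0 ∧ b = 1
    · obtain ⟨rfl, rfl⟩ := h
      have hp : (0 : ℕ) * n + 1 = 1 := by simp
      rw [hp, Function.update_self]
      simp only [Bmlz]
      norm_num
    · rw [Function.update_of_ne (repr_ne_low hb1 hb (le_refl 1) hn h)]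
      exact hg.g3a c hcn

end S14
namespace S14

lemma ev_smul {x : ℕ → ℤ} (hfin : (Function.support x).Finite) (c : ℚ) (f : ℕ → ℚ) :
    ev x (fun k => c * f k) = c * ev x f := by
  unfold ev
  rw [mul_finsum _ _]
  congr 1; funext k; ring

lemma evalForm_sub_smul {x : ℕ → ℤ} (hfin : (Function.support x).Finite)
    (φ ψ : ℚ × (ℕ → ℚ)) (c : ℚ) :
    evalForm (φ - c • ψ) x = evalForm φ x - c * evalForm ψ x := by
  rw [evalForm_eq, evalForm_eq, evalForm_eq]
  have h1 : (φ - c • ψ).1 = φ.1 - c * ψ.1 := rfl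
  have h2 : (φ - c • ψ).2 = fun k => φ.2 k - c * ψ.2 k := rfl
  rw [h1, h2, ev_sub hfin φ.2 (fun k => c * ψ.2 k), ev_smul hfin]
  ring

lemma evalForm_update_sub {x : ℕ → ℤ} (hfin : (Function.support x).Finite)
    (φ : ℚ × (ℕ → ℚ)) (K : ℕ) (B : ℤ) :
    evalForm φ (Function.update x K (x K - B)) = evalForm φ x - φ.2 K * (B : ℚ) := by
  rw [evalForm_eq, evalForm_eq, ev_update hfin]
  push_cast
  ring

lemma xilam_nonneg {n : ℕ} {lam : ℕ → ℕ} (hn : 1 ≤ n) :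
    ∀ φ, XiLam n lam φ → ∀ x, GoodX n lam x → 0 ≤ evalForm φ x := by
  intro φ hφ
  induction hφ with
  | coord j hj =>
    intro x hgx
    rw [ev_coord]
    exact_mod_cast hgx.nonneg' hn j
  | lamf i hi hi' =>
    intro x hgx
    rw [ev_lamform lam hgx.fin i hi hi']
    by_cases h2 : 2 ≤ i
    · rw [if_pos h2]
      have h5 := hgx.g3b 0 i h2 hi' (by omega)
      have e2 : x (0 * n + i) = x i := by simp
      have e3 : x (0 * n + (i - 1)) = x (i - 1) := by simp
      have e4 : ((lam (i + 0) : ℤ)) = ((lam i : ℤ)) := rfl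
      have hz : (0 : ℤ) ≤ (lam i : ℤ) + x (i - 1) - x i := by omega
      exact_mod_cast hz
    · rw [if_neg h2]
      have hi1 : i = 1 := by omega
      subst hi1
      have h5 := hgx.g3a 0 (by omega)
      have e2 : x (0 * n + 1) = x 1 := by simp
      have e4 : ((lam (0 + 1) : ℤ)) = ((lam 1 : ℤ)) := rfl
      have hz : (0 : ℤ) ≤ (lam 1 : ℤ) + 0 - x 1 := by omega
      exact_mod_cast hz
  | shat k hk φ hφ ih =>
    intro x hgx
    obtain ⟨a, b, hb1, hb, rfl⟩ := repr_exists hn k hk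
    unfold Shat
    by_cases hc : 0 < φ.2 (a * n + b)
    · rw [if_pos hc, evalForm_sub_smul hgx.fin]
      have hbp : evalForm ((0 : ℚ), bplus n (a * n + b)) x = (Bpz n x a b : ℚ) := by
        rw [evalForm_eq]
        simpa using ev_bplus hgx.fin a b hb1 hb
      rw [hbp]
      by_cases hB : 0 < Bpz n x a b
      · have h5 := ih _ (pres_plus hgx a b hb1 hb hB)
        rw [evalForm_update_sub hgx.fin] at h5
        exact h5
      · have h6 := ih x hgx
        have hb0 : (Bpz n x a b : ℚ) ≤ 0 := by
          exact_mod_cast (show Bpz n x a b ≤ 0 by omega)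
        have h7 : 0 ≤ φ.2 (a * n + b) * (-(Bpz n x a b : ℚ)) :=
          mul_nonneg hc.le (by linarith)
        linarith
    · rw [if_neg hc]
      push_neg at hc
      rcases Nat.eq_zero_or_pos a with ha | ha
      · subst ha
        rw [show (0 : ℕ) * n + b = b from by simp] at hc ⊢
        rw [evalForm_sub_smul hgx.fin, ev_bminus_low lam hgx.fin b hb1 hb]
        by_cases hB : 0 ≤ Bmlz n lam x b
        · have h6 := ih x hgx
          have hb0 : (0 : ℚ) ≤ (Bmlz n lam x b : ℚ) := by exact_mod_cast hB
          have h7 : 0 ≤ (-(φ.2 b)) * (Bmlz n lam x b : ℚ) :=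
            mul_nonneg (by linarith) hb0
          linarith
        · have h5 := ih _ (pres_minus_low hgx b hb1 hb)
          rw [evalForm_update_sub hgx.fin] at h5
          exact h5
      · obtain ⟨a', rfl⟩ : ∃ a', a = a' + 1 := ⟨a - 1, by omega⟩
        rw [evalForm_sub_smul hgx.fin, ev_bminus_high lam hgx.fin a' b hb1 hb]
        by_cases hB : Bpz n x a' b < 0
        · have h5 := ih _ (pres_minus_high hgx a' b hb1 hb hB)
          rw [evalForm_update_sub hgx.fin] at h5
          exact h5
        · have h6 := ih x hgx
          have hb0 : (0 : ℚ) ≤ (Bpz n x a' b : ℚ) := by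
            exact_mod_cast (show (0 : ℤ) ≤ Bpz n x a' b by omega)
          have h7 : 0 ≤ (-(φ.2 ((a' + 1) * n + b))) * (Bpz n x a' b : ℚ) :=
            mul_nonneg (by linarith) hb0
          linarith

end S14
namespace S14

lemma chain_base {n : ℕ} (lam : ℕ → ℕ) (q : ℕ) (hn : 1 ≤ n) :
    Shat n lam (q * n + 1) ((0 : ℚ), fun k => if k = q * n + 1 then (1 : ℚ) else 0)
      = (0, fun k => (if 1 < n then dl (q * n + (1 + 1)) k else 0) - dl ((q + 1) * n + 1) k) := by
  unfold Shat
  have hv : ((0 : ℚ), fun k => if k = q * n + 1 then (1 : ℚ) else 0).2 (q * n + 1) = 1 := by simp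
  rw [if_pos (by rw [hv]; norm_num), hv, one_smul]
  rw [bplus_eq q 1 (le_refl 1) hn]
  refine Prod.ext (by simp) ?_
  funext k
  show (if k = q * n + 1 then (1 : ℚ) else 0) - _ = _
  simp only [Pi.sub_apply]
  simp only [dl]
  rw [if_neg (show ¬ (2 : ℕ) ≤ 1 by norm_num)]
  ring

lemma chain_step {n : ℕ} (lam : ℕ → ℕ) (q t : ℕ) (h1 : 1 ≤ t) (h2 : t + 1 ≤ n) :
    Shat n lam (q * n + (t + 1))
      ((0 : ℚ), fun k => dl (q * n + (t + 1)) k - dl ((q + 1) * n + t) k)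
      = (0, fun k => (if t + 1 < n then dl (q * n + (t + 1 + 1)) k else 0)
          - dl ((q + 1) * n + (t + 1)) k) := by
  unfold Shat
  have hKne : q * n + (t + 1) ≠ (q + 1) * n + t :=
    repr_ne (by omega) (by omega) (by omega) (by omega) (by omega)
  have hv : (((0 : ℚ), fun k => dl (q * n + (t + 1)) k - dl ((q + 1) * n + t) k)).2
      (q * n + (t + 1)) = 1 := by
    simp [dl, hKne]
  rw [if_pos (by rw [hv]; norm_num), hv, one_smul]
  rw [bplus_eq q (t + 1) (by omega) h2]
  refine Prod.ext (by simp) ?_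
  funext k
  show (dl (q * n + (t + 1)) k - dl ((q + 1) * n + t) k) - _ = _
  simp only [Pi.sub_apply]
  rw [if_pos (show 2 ≤ t + 1 by omega)]
  rw [show t + 1 - 1 = t from rfl]
  ring

lemma chain_mem {n : ℕ} (lam : ℕ → ℕ) (hn : 1 ≤ n) (q : ℕ) :
    ∀ t, 1 ≤ t → t ≤ n →
      XiLam n lam (0, fun k => (if t < n then dl (q * n + (t + 1)) k else 0)
        - dl ((q + 1) * n + t) k) := by
  intro t
  induction t with
  | zero => intro h1 _; omega
  | succ m ih =>
    intro h1 h2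
    rcases Nat.eq_zero_or_pos m with hm | hm
    · subst hm
      have h := XiLam.shat (n := n) (lam := lam) (q * n + 1) (by omega) _
        (XiLam.coord (n := n) (lam := lam) (q * n + 1) (by omega))
      rw [chain_base lam q hn] at h
      simpa using h
    · have hmem := ih (by omega) (by omega)
      have hcond : m < n := by omega
      simp only [hcond, if_true] at hmem
      have h := XiLam.shat (q * n + (m + 1)) (by omega) _ hmem
      rw [chain_step lam q m (by omega) (by omega)] at h
      exact h

lemma lam_step {n : ℕ} (lam : ℕ → ℕ) (a I : ℕ) (hI : I ≤ n) (h : a + 2 ≤ I) :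
    Shat n lam (a * n + (I - a - 1))
      ((lam I : ℚ), fun k => dl (a * n + (I - a - 1)) k - dl (a * n + (I - a)) k)
      = ((lam I : ℚ), fun k => (if 2 ≤ I - (a + 1) then dl ((a + 1) * n + (I - (a + 1) - 1)) k
          else 0) - dl ((a + 1) * n + (I - (a + 1))) k) := by
  unfold Shat
  have hKne : a * n + (I - a - 1) ≠ a * n + (I - a) :=
    repr_ne (by omega) (by omega) (by omega) (by omega) (by omega)
  have hv : (((lam I : ℚ), fun k => dl (a * n + (I - a - 1)) k - dl (a * n + (I - a)) k)).2
      (a * n + (I - a - 1)) = 1 := by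
    simp [dl, hKne]; omega
  rw [if_pos (by rw [hv]; norm_num), hv, one_smul]
  rw [bplus_eq a (I - a - 1) (by omega) (by omega)]
  refine Prod.ext (by simp) ?_
  funext k
  show (dl (a * n + (I - a - 1)) k - dl (a * n + (I - a)) k) - _ = _
  simp only [Pi.sub_apply]
  rw [if_pos (show I - a - 1 < n by omega)]
  rw [show I - a - 1 + 1 = I - a from by omega]
  rw [show I - a - 1 - 1 = I - (a + 1) - 1 from by omega]
  rw [show I - a - 1 = I - (a + 1) from by omega]
  ring

lemma lamf_mem {n : ℕ} (lam : ℕ → ℕ) (I : ℕ) (hI1 : 1 ≤ I) (hI : I ≤ n) :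
    ∀ a, a + 1 ≤ I →
      XiLam n lam ((lam I : ℚ), fun k => (if 2 ≤ I - a then dl (a * n + (I - a - 1)) k else 0)
        - dl (a * n + (I - a)) k) := by
  intro a
  induction a with
  | zero =>
    intro _
    have h := XiLam.lamf (n := n) (lam := lam) I hI1 hI
    rw [lamform_eq lam I hI1 hI] at h
    have e : ((lam I : ℚ), fun k => (if 2 ≤ I then dl (I - 1) k else 0) - dl I k)
        = ((lam I : ℚ), fun k => (if 2 ≤ I - 0 then dl (0 * n + (I - 0 - 1)) k else 0)
            - dl (0 * n + (I - 0)) k) := by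
      refine Prod.ext rfl ?_
      funext k
      rw [show (0 : ℕ) * n + (I - 0 - 1) = I - 1 from by simp,
        show (0 : ℕ) * n + (I - 0) = I from by simp,
        show I - 0 = I from rfl]
    rw [e] at h
    exact h
  | succ m ih =>
    intro h1
    have hmem := ih (by omega)
    have hcond : 2 ≤ I - m := by omega
    simp only [hcond, if_true] at hmem
    have h := XiLam.shat (m * n + (I - m - 1)) (by omega) _ hmem
    rw [lam_step lam m I hI (by omega)] at h
    exact h

/-- Evaluation of the chain family. -/
lemma ev_chain {n : ℕ} {x : ℕ → ℤ} (hfin : (Function.support x).Finite) (q t : ℕ)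
    [Decidable (t < n)] :
    evalForm ((0 : ℚ), fun k => (if t < n then dl (q * n + (t + 1)) k else 0)
      - dl ((q + 1) * n + t) k) x
      = (if t < n then (x (q * n + (t + 1)) : ℚ) else 0) - (x ((q + 1) * n + t) : ℚ) := by
  rw [evalForm_eq]
  simp only
  rw [ev_sub hfin, ev_ite, ev_dl]
  by_cases h : t < n <;> simp only [h, if_true, if_false, if_pos, if_neg, ev_dl] <;> ring

lemma ev_lamfam {n : ℕ} {x : ℕ → ℤ} (hfin : (Function.support x).Finite) (a I : ℕ)
    [Decidable (2 ≤ I - a)] :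
    evalForm ((lam' : ℚ), fun k => (if 2 ≤ I - a then dl (a * n + (I - a - 1)) k else 0)
      - dl (a * n + (I - a)) k) x
      = lam' + (if 2 ≤ I - a then (x (a * n + (I - a - 1)) : ℚ) else 0)
        - (x (a * n + (I - a)) : ℚ) := by
  rw [evalForm_eq]
  simp only
  rw [ev_sub hfin, ev_ite, ev_dl]
  by_cases h : 2 ≤ I - a <;> simp only [h, if_true, if_false, if_pos, if_neg, ev_dl] <;> ring

end S14
namespace S14

variable {n : ℕ} {lam : ℕ → ℕ} {x : ℕ → ℤ}

lemma factA (H : ∀ φ, XiLam n lam φ → 0 ≤ evalForm φ x) (j : ℕ) (hj : 1 ≤ j) :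
    0 ≤ x j := by
  have h := H _ (XiLam.coord j hj)
  rw [ev_coord] at h
  exact_mod_cast h

lemma factB (hn : 1 ≤ n) (hfin : (Function.support x).Finite)
    (H : ∀ φ, XiLam n lam φ → 0 ≤ evalForm φ x) (q t : ℕ) (h1 : 1 ≤ t) (h2 : t < n) :
    x ((q + 1) * n + t) ≤ x (q * n + (t + 1)) := by
  have h := H _ (chain_mem lam hn q t h1 (le_of_lt h2))
  rw [ev_chain hfin, if_pos h2] at h
  have : (x ((q + 1) * n + t) : ℚ) ≤ (x (q * n + (t + 1)) : ℚ) := by linarith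
  exact_mod_cast this

lemma factC (hn : 1 ≤ n) (hfin : (Function.support x).Finite)
    (H : ∀ φ, XiLam n lam φ → 0 ≤ evalForm φ x) (q : ℕ) :
    x ((q + 1) * n + n) ≤ 0 := by
  have h := H _ (chain_mem lam hn q n hn (le_refl n))
  rw [ev_chain hfin, if_neg (lt_irrefl n)] at h
  have : (x ((q + 1) * n + n) : ℚ) ≤ 0 := by linarith
  exact_mod_cast this

lemma factE (hfin : (Function.support x).Finite)
    (H : ∀ φ, XiLam n lam φ → 0 ≤ evalForm φ x) (I a : ℕ) (hI1 : 1 ≤ I) (hI : I ≤ n)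
    (ha : a + 1 ≤ I) :
    x (a * n + (I - a)) - (if 2 ≤ I - a then x (a * n + (I - a - 1)) else 0) ≤ (lam I : ℤ) := by
  have h := H _ (lamf_mem lam I hI1 hI a ha)
  rw [ev_lamfam hfin] at h
  by_cases h2 : 2 ≤ I - a
  · rw [if_pos h2] at h ⊢
    have : (x (a * n + (I - a)) : ℚ) - (x (a * n + (I - a - 1)) : ℚ) ≤ (lam I : ℚ) := by linarith
    exact_mod_cast this
  · rw [if_neg h2] at h ⊢
    have : (x (a * n + (I - a)) : ℚ) - 0 ≤ (lam I : ℚ) := by linarith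
    exact_mod_cast this

lemma factD (hn : 1 ≤ n) (hfin : (Function.support x).Finite)
    (H : ∀ φ, XiLam n lam φ → 0 ≤ evalForm φ x) :
    ∀ a b, 1 ≤ b → b ≤ n → n < b + a → x (a * n + b) = 0 := by
  suffices hs : ∀ d a b, 1 ≤ b → b ≤ n → n - b = d → n < b + a → x (a * n + b) = 0 by
    intro a b h1 h2 h3
    exact hs (n - b) a b h1 h2 rfl h3
  intro d
  induction d with
  | zero =>
    intro a b h1 h2 hd hw
    have hbn : b = n := by omega
    obtain ⟨a', rfl⟩ : ∃ a', a = a' + 1 := ⟨a - 1, by omega⟩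
    have hC := factC hn hfin H a'
    have hA := factA H ((a' + 1) * n + b) (by omega)
    have e : x ((a' + 1) * n + b) = x ((a' + 1) * n + n) := by rw [hbn]
    omega
  | succ m ih =>
    intro a b h1 h2 hd hw
    obtain ⟨a', rfl⟩ : ∃ a', a = a' + 1 := ⟨a - 1, by omega⟩
    have hB := factB hn hfin H a' b h1 (by omega)
    have hz := ih a' (b + 1) (by omega) (by omega) (by omega) (by omega)
    have hA := factA H ((a' + 1) * n + b) (by omega)
    omega

end S14

theorem stmt14' (n : ℕ) (hn : 1 ≤ n) (lam : ℕ → ℕ)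
    (x : ℕ → ℤ) (hx_zero : x 0 = 0) (hfin : (Function.support x).Finite) :
    (∀ φ : ℚ × (ℕ → ℚ), XiLam n lam φ → 0 ≤ evalForm φ x)
    ↔
    ((∀ i, 1 ≤ i → i ≤ n →
        (∀ j, 1 ≤ j → j < i → x (j * n + (i - j)) ≤ x ((j - 1) * n + (i - j + 1))) ∧
        0 ≤ x ((i - 1) * n + 1)) ∧
      (∀ i j, 1 ≤ i → i ≤ n → 1 ≤ j → n + 1 < i + j → x ((j - 1) * n + i) = 0) ∧
      (∀ j i, 1 ≤ j → j ≤ i → i ≤ n →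
        x ((j - 1) * n + (i - j + 1))
            - (if i - j = 0 then 0 else x ((j - 1) * n + (i - j))) ≤ (lam i : ℤ))) := by
  constructor
  · intro H
    refine ⟨?_, ?_, ?_⟩
    · intro i hi1 hi2
      constructor
      · intro j hj1 hj2
        have h := S14.factB hn hfin H (j - 1) (i - j) (by omega) (by omega)
        rw [show j - 1 + 1 = j from by omega] at h
        exact h
      · exact S14.factA H ((i - 1) * n + 1) (by omega)
    · intro i j hi1 hi2 hj1 hw
      exact S14.factD hn hfin H (j - 1) i hi1 hi2 (by omega)
    · intro j i hj1 hji hin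
      have h := S14.factE hfin H i (j - 1) (by omega) hin (by omega)
      rw [show i - (j - 1) = i - j + 1 from by omega] at h
      rw [show i - j + 1 - 1 = i - j from by omega] at h
      by_cases h0 : i - j = 0
      · rw [if_pos h0]
        rw [if_neg (show ¬ 2 ≤ i - j + 1 by omega)] at h
        omega
      · rw [if_neg h0]
        rw [if_pos (show 2 ≤ i - j + 1 by omega)] at h
        omega
  · intro hR
    obtain ⟨hR1, hR2, hR3⟩ := hR
    have hgx : S14.GoodX n lam x := by
      refine ⟨hx_zero, hfin, ?_, ?_, ?_, ?_, ?_⟩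
      · intro a
        by_cases ha : a + 1 ≤ n
        · have h := (hR1 (a + 1) (by omega) ha).2
          rw [show a + 1 - 1 = a from by omega] at h
          exact h
        · have h := hR2 1 (a + 1) (le_refl 1) hn (by omega) (by omega)
          rw [show a + 1 - 1 = a from by omega] at h
          omega
      · intro a b hb2 hbn
        by_cases hz : b + a ≤ n
        · have h := (hR1 (a + b) (by omega) (by omega)).1 (a + 1) (by omega) (by omega)
          rw [show a + 1 - 1 = a from by omega, show a + b - (a + 1) = b - 1 from by omega,
            show b - 1 + 1 = b from by omega] at h
          exact h
        · have h1 := hR2 b (a + 1) (by omega) hbn (by omega) (by omega)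
          have h2 := hR2 (b - 1) (a + 2) (by omega) (by omega) (by omega) (by omega)
          rw [show a + 1 - 1 = a from by omega] at h1
          rw [show a + 2 - 1 = a + 1 from by omega] at h2
          omega
      · intro a b hb1 hbn hw
        have h := hR2 b (a + 1) hb1 hbn (by omega) (by omega)
        rw [show a + 1 - 1 = a from by omega] at h
        exact h
      · intro a b hb2 hbn hwt
        have h := hR3 (a + 1) (a + b) (by omega) (by omega) (by omega)
        rw [show a + 1 - 1 = a from by omega, show a + b - (a + 1) = b - 1 from by omega,
          show b - 1 + 1 = b from by omega] at h
        rw [if_neg (show ¬ (b - 1 = 0) by omega)] at h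
        rw [show a + b = b + a from by omega] at h
        exact h
      · intro a ha
        have h := hR3 (a + 1) (a + 1) (by omega) (le_refl _) ha
        rw [show a + 1 - (a + 1) = 0 from by omega] at h
        rw [show a + 1 - 1 = a from by omega] at h
        rw [if_pos rfl] at h
        norm_num at h
        omega
    intro φ hφ
    exact S14.xilam_nonneg hn φ hφ x hgx

/-- For type `A_n`, the periodic sequence `ι` and a dominant weight `λ = Σ λ_iΛ_i`, a sequence
`x ∈ ℤ^∞` lies in the polyhedral realization `Σ_ι[λ] = {x : φ(x) ≥ 0 ∀ φ ∈ Ξ_ι[λ]}` iff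
(writing `x_{j;i} = x_{(j−1)n+i}`, `x_{j;0} = 0`): (i) `x_{1;i} ≥ x_{2;i−1} ≥ ⋯ ≥ x_{i;1} ≥ 0`
for `1 ≤ i ≤ n`; (ii) `x_{j;i} = 0` when `i + j > n + 1`; (iii) `λ_i ≥ x_{j;i−j+1} − x_{j;i−j}`
for `1 ≤ j ≤ i ≤ n`. -/
theorem stmt14 (n : ℕ) (hn : 1 ≤ n) (lam : ℕ → ℕ)
    (x : ℕ → ℤ) (hx_zero : x 0 = 0) (hfin : (Function.support x).Finite) :
    (∀ φ : ℚ × (ℕ → ℚ), XiLam n lam φ → 0 ≤ evalForm φ x)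
    ↔
    ((∀ i, 1 ≤ i → i ≤ n →
        (∀ j, 1 ≤ j → j < i → x (j * n + (i - j)) ≤ x ((j - 1) * n + (i - j + 1))) ∧
        0 ≤ x ((i - 1) * n + 1)) ∧
      (∀ i j, 1 ≤ i → i ≤ n → 1 ≤ j → n + 1 < i + j → x ((j - 1) * n + i) = 0) ∧
      (∀ j i, 1 ≤ j → j ≤ i → i ≤ n →
        x ((j - 1) * n + (i - j + 1))
            - (if i - j = 0 then 0 else x ((j - 1) * n + (i - j))) ≤ (lam i : ℤ))) := by
  exact stmt14' n hn lam x hx_zero hfin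
end
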